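/- arXiv:1802.07646 — 11 statements merged into one kernel-verified Lean document; each statement's English description precedes it below -/
import Mathlib

section
/- Let G be a finite non-cyclic abelian group of order p1^{n1} p2^{n2}, where p1 < p2 are primes and n1, n2 ≥ 1, and let Pi be the Sylow pi-subgroup of G for i = 1, 2. Suppose both P1 and P2 are non-cyclic, p1 ≥ 3, and G has a maximal cyclic subgroup C of order p1 p2. Then κ(P(G)) = min{ |P1|, |P2|, |C̃| }, where |C̃| = p1 + p2 − 1. -/
/-- The power graph of a group `G`. -/
def powerGraph (G : Type*) [Group G] : SimpleGraph G where
  Adj x y := x ≠ y ∧ (x ∈ Subgroup.zpowers y ∨ y ∈ Subgroup.zpowers x)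
  symm := ⟨fun x y h => ⟨h.1.symm, h.2.symm⟩⟩
  loopless := ⟨fun x h => h.1 rfl⟩

/-- `X` is a (vertex) cut-set of the power graph of `G`:
removing `X` leaves a disconnected induced subgraph. -/
def IsCutSet {G : Type*} [Group G] (X : Set G) : Prop :=
  ¬ ((powerGraph G).induce Xᶜ).Preconnected

/-- `X` is a minimal cut-set of the power graph of `G`. -/
def IsMinimalCutSet {G : Type*} [Group G] (X : Set G) : Prop :=
  IsCutSet X ∧ ∀ x ∈ X, ¬ IsCutSet (X \ {x})

/-- `X` is a minimum cut-set of the power graph of `G`. -/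
def IsMinimumCutSet {G : Type*} [Group G] (X : Set G) : Prop :=
  IsCutSet X ∧ ∀ Y : Set G, IsCutSet Y → X.ncard ≤ Y.ncard

/-- The vertex connectivity of the power graph of `G`: the least number of vertices
whose removal disconnects the graph or leaves only one vertex. -/
noncomputable def kappa (G : Type*) [Group G] : ℕ :=
  sInf {m | ∃ X : Set G, X.ncard = m ∧ (IsCutSet X ∨ Xᶜ.ncard = 1)}

/-- `M` is a maximal cyclic subgroup of `G`: cyclic and not properly contained
in any cyclic subgroup. -/
def IsMaxCyclic {G : Type*} [Group G] (M : Subgroup G) : Prop :=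
  (∃ x : G, M = Subgroup.zpowers x) ∧
    ∀ N : Subgroup G, (∃ y : G, N = Subgroup.zpowers y) → M ≤ N → M = N

/-- The set of non-generators of a (cyclic) subgroup `M` of `G`. -/
def nonGens {G : Type*} [Group G] (M : Subgroup G) : Set G :=
  {x | x ∈ M ∧ Subgroup.zpowers x ≠ M}

/-- `Mbar M` is the union of the sets `M ∩ ⟨y⟩` over all `y ∈ G \ M`. -/
def Mbar {G : Type*} [Group G] (M : Subgroup G) : Set G :=
  ⋃ y ∈ (M : Set G)ᶜ, ((M : Set G) ∩ (Subgroup.zpowers y : Set G))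

/-- `(A, B)` is a separation of the induced subgraph of the power graph of `G` on `S`. -/
def IsSeparationOn {G : Type*} [Group G] (S A B : Set G) : Prop :=
  A.Nonempty ∧ B.Nonempty ∧ Disjoint A B ∧ A ∪ B = S ∧
    ∀ a ∈ A, ∀ b ∈ B, ¬ (powerGraph G).Adj a b

section Aux
open Subgroup
variable {G : Type*} [CommGroup G]
lemma PG.adj {g h : G} (hne : g ≠ h) (hmem : h ∈ zpowers g) : (powerGraph G).Adj g h :=
  ⟨hne, Or.inr hmem⟩
lemma PG.reach {X : Set G} {a b : G} (ha : a ∈ Xᶜ) (hb : b ∈ Xᶜ)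
    (hne : a ≠ b) (hmem : b ∈ zpowers a) :
    ((powerGraph G).induce Xᶜ).Reachable ⟨a, ha⟩ ⟨b, hb⟩ :=
  SimpleGraph.Adj.reachable (PG.adj hne hmem)
lemma PG.mem_of_reachable {X A : Set G}
    (hcl : ∀ a b : G, a ∈ A → b ∈ Xᶜ → (powerGraph G).Adj a b → b ∈ A) :
    ∀ {u v : ↥(Xᶜ)}, ((powerGraph G).induce Xᶜ).Reachable u v → (u : G) ∈ A → (v : G) ∈ A := by
  intro u v h
  obtain ⟨w⟩ := h
  induction w with
  | nil => exact fun h => h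
  | cons hadj pw ih => exact fun hu => ih (hcl _ _ hu (Subtype.coe_prop _) hadj)

lemma PG.isCutSet_of_closed {X A : Set G}
    (hcl : ∀ a b : G, a ∈ A → b ∈ Xᶜ → (powerGraph G).Adj a b → b ∈ A)
    {a b : G} (ha : a ∈ A) (haX : a ∈ Xᶜ) (hbX : b ∈ Xᶜ) (hbA : b ∉ A) : IsCutSet X :=
  fun hpre => hbA (PG.mem_of_reachable hcl (hpre ⟨a, haX⟩ ⟨b, hbX⟩) ha)

lemma PG.pow_congr {g : G} {d k j : ℕ} (hg : g ^ d = 1) (h : k ≡ j [MOD d]) : g ^ k = g ^ j :=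
  pow_eq_pow_iff_modEq.mpr (h.of_dvd (orderOf_dvd_of_pow_eq_one hg))
lemma PG.npow_mem (g : G) (k : ℕ) : g ^ k ∈ zpowers g := ⟨k, by simp [zpow_natCast]⟩
lemma PG.mem_zpowers_of_pow {g x : G} {k : ℕ} (h : g ^ k = x) : x ∈ zpowers g :=
  h ▸ PG.npow_mem g k
lemma PG.zpow_npow_comm (g : G) (k : ℤ) (m : ℕ) : (g ^ k) ^ m = (g ^ m) ^ k := by
  rw [← zpow_natCast (g ^ k), ← zpow_mul, mul_comm, zpow_mul, zpow_natCast]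
lemma PG.tor_of_mem_zpowers {w z : G} {q : ℕ} (hw : w ^ q = 1) (hz : z ∈ zpowers w) :
    z ^ q = 1 := by
  obtain ⟨k, rfl⟩ := hz
  rw [← zpow_natCast, ← zpow_mul, mul_comm, zpow_mul, zpow_natCast, hw, one_zpow]
lemma PG.zcard (u : G) : ((zpowers u : Subgroup G) : Set G).ncard = orderOf u := by
  rw [← Nat.card_coe_set_eq, SetLike.coe_sort_coe, Nat.card_zpowers]
lemma PG.ncard_le_of_cover {α : Type*} [Finite α] {s t : Set α} (f : α → α)
    (h : ∀ v ∈ s, ∃ w ∈ t, f w = v) : s.ncard ≤ t.ncard := by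
  have hsub : s ⊆ f '' t := fun v hv => (h v hv).imp (fun w hw => ⟨hw.1, hw.2⟩)
  exact (Set.ncard_le_ncard hsub (t.toFinite.image f)).trans (Set.ncard_image_le t.toFinite)

-- `u` is a nontrivial surviving `qa`-element; produce a surviving nontrivial `qb`-element
-- reachable from it.
lemma PG.step_cross [Fintype G] {qa qb ea eb : ℕ}
    (haa : ea ≡ 1 [MOD qa]) (hab : ea ≡ 0 [MOD qb])
    (hba : eb ≡ 0 [MOD qa]) (hbb : eb ≡ 1 [MOD qb])
    {X : Set G} (h1 : (1 : G) ∈ X) (hXb : X.ncard < qb)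
    (hKb : qb ≤ {g : G | g ^ qb = 1}.ncard)
    {u : G} (hu : u ∈ Xᶜ) (hu1 : u ≠ 1) (hut : u ^ qa = 1) :
    ∃ v, ∃ hv : v ∈ Xᶜ, v ≠ 1 ∧ v ^ qb = 1 ∧
      ((powerGraph G).induce Xᶜ).Reachable ⟨u, hu⟩ ⟨v, hv⟩ := by
  have hue : u ^ ea = u := by
    have := PG.pow_congr hut haa; rwa [pow_one] at this
  have hue' : u ^ eb = 1 := by
    have := PG.pow_congr hut hba; rwa [pow_zero] at this
  by_cases hgood : ∃ v : G, (v ^ qb = 1 ∧ v ≠ 1) ∧ v ∉ X ∧ u * v ∉ X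
  · obtain ⟨v, ⟨hvt, hv1⟩, hvX, huvX⟩ := hgood
    have hve : v ^ eb = v := by
      have := PG.pow_congr hvt hbb; rwa [pow_one] at this
    have hve' : v ^ ea = 1 := by
      have := PG.pow_congr hvt hab; rwa [pow_zero] at this
    have hmu : u ∈ zpowers (u * v) := by
      have : (u * v) ^ ea = u := by rw [mul_pow, hue, hve', mul_one]
      exact PG.mem_zpowers_of_pow this
    have hmv : v ∈ zpowers (u * v) := by
      have : (u * v) ^ eb = v := by rw [mul_pow, hue', hve, one_mul]
      exact PG.mem_zpowers_of_pow this
    have hneu : u * v ≠ u := fun e => hv1 (by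
      have : u * v = u * 1 := by rw [mul_one]; exact e
      exact mul_left_cancel this)
    have hnev : u * v ≠ v := fun e => hu1 (by
      have : u * v = 1 * v := by rw [one_mul]; exact e
      exact mul_right_cancel this)
    have r1 := PG.reach (X := X) huvX hu hneu hmu
    have r2 := PG.reach (X := X) huvX hvX hnev hmv
    exact ⟨v, hvX, hv1, hvt, r1.symm.trans r2⟩
  · exfalso
    push_neg at hgood
    have cover : ∀ v ∈ {g : G | g ^ qb = 1} \ {1}, ∃ w ∈ X \ {1}, w ^ eb = v := by
      rintro v ⟨hvt, hv1⟩
      simp only [Set.mem_singleton_iff] at hv1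
      have hve : v ^ eb = v := by
        have := PG.pow_congr hvt hbb; rwa [pow_one] at this
      by_cases hvX : v ∈ X
      · exact ⟨v, ⟨hvX, hv1⟩, hve⟩
      · have huvX : u * v ∈ X := hgood v ⟨hvt, hv1⟩ hvX
        have hproj : (u * v) ^ eb = v := by rw [mul_pow, hue', hve, one_mul]
        have hne1 : u * v ≠ 1 := fun e => hv1 (by rw [← hproj, e, one_pow])
        exact ⟨u * v, ⟨huvX, hne1⟩, hproj⟩
    have h1t : (1 : G) ∈ {g : G | g ^ qb = 1} := by simp
    have hc1 : ({g : G | g ^ qb = 1} \ {1}).ncard = {g : G | g ^ qb = 1}.ncard - 1 :=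
      Set.ncard_diff_singleton_of_mem h1t
    have hc2 : ({g : G | g ^ qb = 1} \ {1}).ncard ≤ (X \ {1}).ncard :=
      PG.ncard_le_of_cover (fun w => w ^ eb) cover
    have hc3 : (X \ {1}).ncard = X.ncard - 1 :=
      Set.ncard_diff_singleton_of_mem h1
    have hpos : 0 < X.ncard := (Set.ncard_pos (Set.toFinite _)).mpr ⟨1, h1⟩
    omega

lemma PG.step_same [Fintype G] {qa qb ea eb : ℕ}
    (haa : ea ≡ 1 [MOD qa]) (hab : ea ≡ 0 [MOD qb])
    (hba : eb ≡ 0 [MOD qa]) (hbb : eb ≡ 1 [MOD qb])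
    {X : Set G} (h1 : (1 : G) ∈ X) (hXa : X.ncard < qa)
    (hKa : qa ≤ {g : G | g ^ qa = 1}.ncard)
    {u u' : G} (hu : u ∈ Xᶜ) (hu' : u' ∈ Xᶜ) (hu1 : u ≠ 1) (hu'1 : u' ≠ 1)
    (hut : u ^ qb = 1) (hu't : u' ^ qb = 1) :
    ((powerGraph G).induce Xᶜ).Reachable ⟨u, hu⟩ ⟨u', hu'⟩ := by
  have eself : ∀ w : G, w ^ qb = 1 → w ^ eb = w := fun w hw => by
    have := PG.pow_congr hw hbb; rwa [pow_one] at this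
  have ekill : ∀ w : G, w ^ qb = 1 → w ^ ea = 1 := fun w hw => by
    have := PG.pow_congr hw hab; rwa [pow_zero] at this
  have eself' : ∀ w : G, w ^ qa = 1 → w ^ ea = w := fun w hw => by
    have := PG.pow_congr hw haa; rwa [pow_one] at this
  have ekill' : ∀ w : G, w ^ qa = 1 → w ^ eb = 1 := fun w hw => by
    have := PG.pow_congr hw hba; rwa [pow_zero] at this
  by_cases hgood : ∃ v : G, (v ^ qa = 1 ∧ v ≠ 1) ∧ v ∉ X ∧ u * v ∉ X ∧ u' * v ∉ X
  · obtain ⟨v, ⟨hvt, hv1⟩, hvX, huvX, hu'vX⟩ := hgood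
    have key : ∀ (w : G), w ^ qb = 1 → (w * v) ^ eb = w ∧ (w * v) ^ ea = v := fun w hw =>
      ⟨by rw [mul_pow, eself w hw, ekill' v hvt, mul_one],
       by rw [mul_pow, ekill w hw, eself' v hvt, one_mul]⟩
    have hnuv : u * v ≠ u := fun e => hv1 (mul_left_cancel (a := u) (by rw [mul_one]; exact e))
    have hnvv : u * v ≠ v := fun e => hu1 (mul_right_cancel (b := v) (by rw [one_mul]; exact e))
    have hnu'v : u' * v ≠ u' := fun e => hv1 (mul_left_cancel (a := u') (by rw [mul_one]; exact e))
    have hnv'v : u' * v ≠ v := fun e => hu'1 (mul_right_cancel (b := v) (by rw [one_mul]; exact e))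
    have r1 := PG.reach (X := X) huvX hu hnuv (PG.mem_zpowers_of_pow (key u hut).1)
    have r2 := PG.reach (X := X) huvX hvX hnvv (PG.mem_zpowers_of_pow (key u hut).2)
    have r3 := PG.reach (X := X) hu'vX hvX hnv'v (PG.mem_zpowers_of_pow (key u' hu't).2)
    have r4 := PG.reach (X := X) hu'vX hu' hnu'v (PG.mem_zpowers_of_pow (key u' hu't).1)
    exact r1.symm.trans (r2.trans (r3.symm.trans r4))
  · exfalso
    push_neg at hgood
    have cover : ∀ v ∈ {g : G | g ^ qa = 1} \ {1}, ∃ w ∈ X \ {1}, w ^ ea = v := by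
      rintro v ⟨hvt, hv1⟩
      simp only [Set.mem_singleton_iff] at hv1
      by_cases hvX : v ∈ X
      · exact ⟨v, ⟨hvX, hv1⟩, eself' v hvt⟩
      by_cases huvX : u * v ∈ X
      · have hproj : (u * v) ^ ea = v := by rw [mul_pow, ekill u hut, eself' v hvt, one_mul]
        exact ⟨u * v, ⟨huvX, fun e => hv1 (by rw [← hproj, e, one_pow])⟩, hproj⟩
      · have hu'vX : u' * v ∈ X := hgood v ⟨hvt, hv1⟩ hvX huvX
        have hproj : (u' * v) ^ ea = v := by rw [mul_pow, ekill u' hu't, eself' v hvt, one_mul]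
        exact ⟨u' * v, ⟨hu'vX, fun e => hv1 (by rw [← hproj, e, one_pow])⟩, hproj⟩
    have h1t : (1 : G) ∈ {g : G | g ^ qa = 1} := by simp
    have hc1 : ({g : G | g ^ qa = 1} \ {1}).ncard = {g : G | g ^ qa = 1}.ncard - 1 :=
      Set.ncard_diff_singleton_of_mem h1t
    have hc2 : ({g : G | g ^ qa = 1} \ {1}).ncard ≤ (X \ {1}).ncard :=
      PG.ncard_le_of_cover (fun w => w ^ ea) cover
    have hc3 : (X \ {1}).ncard = X.ncard - 1 :=
      Set.ncard_diff_singleton_of_mem h1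
    have hpos : 0 < X.ncard := (Set.ncard_pos (Set.toFinite _)).mpr ⟨1, h1⟩
    omega

lemma PG.both_tor_eq_one {q0 q1 : ℕ} (hco : Nat.Coprime q0 q1) {z : G}
    (h0 : z ^ q0 = 1) (h1 : z ^ q1 = 1) : z = 1 := by
  have d0 := orderOf_dvd_of_pow_eq_one h0
  have d1 := orderOf_dvd_of_pow_eq_one h1
  have := Nat.dvd_gcd d0 d1
  rw [Nat.Coprime.gcd_eq_one hco] at this
  exact orderOf_eq_one_iff.mp (Nat.dvd_one.mp this)

lemma PG.ord_ge {pp nn : ℕ} (hpp : pp.Prime) {u : G} (hu : u ^ pp ^ nn = 1) (hne : u ≠ 1) :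
    pp ≤ orderOf u := by
  have hd : orderOf u ∣ pp ^ nn := orderOf_dvd_of_pow_eq_one hu
  obtain ⟨j, _, hj⟩ := (Nat.dvd_prime_pow hpp).mp hd
  rcases Nat.eq_zero_or_pos j with h0 | h0
  · exact absurd (orderOf_eq_one_iff.mp (by rw [hj, h0, pow_zero])) hne
  · calc pp = pp ^ 1 := (pow_one pp).symm
      _ ≤ pp ^ j := Nat.pow_le_pow_right hpp.pos h0
      _ = orderOf u := hj.symm
  
lemma PG.preconnected_of_small [Fintype G] {p0 p1 n0 n1 : ℕ}
    (hp0 : p0.Prime) (hp1 : p1.Prime) (hne : p0 ≠ p1)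
    (hexp : ∀ g : G, g ^ (p0 ^ n0 * p1 ^ n1) = 1)
    (hK0 : p0 ^ n0 ≤ {g : G | g ^ p0 ^ n0 = 1}.ncard)
    (hK1 : p1 ^ n1 ≤ {g : G | g ^ p1 ^ n1 = 1}.ncard)
    (X : Set G) (hX0 : X.ncard < p0 ^ n0) (hX1 : X.ncard < p1 ^ n1)
    (hX2 : X.ncard < p0 + p1 - 1) :
    ((powerGraph G).induce Xᶜ).Preconnected := by
  by_cases h1 : (1 : G) ∈ X
  · -- the hard case
    have hco : Nat.Coprime (p0 ^ n0) (p1 ^ n1) :=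
      ((Nat.coprime_primes hp0 hp1).mpr hne).pow n0 n1
    obtain ⟨e0, he0⟩ := Nat.chineseRemainder hco 1 0
    obtain ⟨e1, he1⟩ := Nat.chineseRemainder hco 0 1
    have proj0_tor : ∀ g : G, (g ^ e0) ^ p0 ^ n0 = 1 := by
      intro g
      obtain ⟨k, hk⟩ := (Nat.modEq_zero_iff_dvd).mp he0.2
      rw [← pow_mul, hk, show p1 ^ n1 * k * p0 ^ n0 = p0 ^ n0 * p1 ^ n1 * k by ring,
        pow_mul, hexp, one_pow]
    have proj1_tor : ∀ g : G, (g ^ e1) ^ p1 ^ n1 = 1 := by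
      intro g
      obtain ⟨k, hk⟩ := (Nat.modEq_zero_iff_dvd).mp he1.1
      rw [← pow_mul, hk, show p0 ^ n0 * k * p1 ^ n1 = p0 ^ n0 * p1 ^ n1 * k by ring,
        pow_mul, hexp, one_pow]
    have decomp : ∀ g : G, g ^ e0 * g ^ e1 = g := by
      intro g
      rw [← pow_add]
      have hmod : e0 + e1 ≡ 1 [MOD p0 ^ n0 * p1 ^ n1] :=
        (Nat.modEq_and_modEq_iff_modEq_mul hco).mp
          ⟨by simpa using he0.1.add he1.1, by simpa using he0.2.add he1.2⟩
      have := PG.pow_congr (hexp g) hmod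
      rwa [pow_one] at this
    -- Step A : from any surviving vertex reach a surviving nontrivial "pure" vertex
    have stepA : ∀ (g : G) (hg : g ∈ Xᶜ), ∃ (h : G) (hh : h ∈ Xᶜ), h ≠ 1 ∧
        (h ^ p0 ^ n0 = 1 ∨ h ^ p1 ^ n1 = 1) ∧
        ((powerGraph G).induce Xᶜ).Reachable ⟨g, hg⟩ ⟨h, hh⟩ := by
      intro g hg
      have hg1 : g ≠ 1 := fun e => hg (e ▸ h1)
      by_cases hq1 : g ^ e1 = 1
      · refine ⟨g, hg, hg1, Or.inl ?_, SimpleGraph.Reachable.refl _⟩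
        have : g ^ e0 = g := by conv_rhs => rw [← decomp g, hq1, mul_one]
        exact this ▸ proj0_tor g
      by_cases hq0 : g ^ e0 = 1
      · refine ⟨g, hg, hg1, Or.inr ?_, SimpleGraph.Reachable.refl _⟩
        have : g ^ e1 = g := by conv_rhs => rw [← decomp g, hq0, one_mul]
        exact this ▸ proj1_tor g
      -- mixed case
      have hx_ord : p0 ≤ orderOf (g ^ e0) := PG.ord_ge hp0 (proj0_tor g) hq0
      have hy_ord : p1 ≤ orderOf (g ^ e1) := PG.ord_ge hp1 (proj1_tor g) hq1
      have hint : ((zpowers (g ^ e0) : Subgroup G) : Set G) ∩ ↑(zpowers (g ^ e1)) ⊆ {1} := by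
        rintro z ⟨hz0, hz1⟩
        exact PG.both_tor_eq_one hco (PG.tor_of_mem_zpowers (proj0_tor g) hz0)
          (PG.tor_of_mem_zpowers (proj1_tor g) hz1)
      have hintc : (((zpowers (g ^ e0) : Subgroup G) : Set G) ∩ ↑(zpowers (g ^ e1))).ncard ≤ 1 := by
        have := Set.ncard_le_ncard hint (Set.toFinite _)
        simpa using this
      have huncard := Set.ncard_union_add_ncard_inter
        ((zpowers (g ^ e0) : Subgroup G) : Set G) (↑(zpowers (g ^ e1)))
        (Set.toFinite _) (Set.toFinite _)
      rw [PG.zcard, PG.zcard] at huncard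
      have hbig : p0 + p1 - 1 ≤
          (((zpowers (g ^ e0) : Subgroup G) : Set G) ∪ ↑(zpowers (g ^ e1))).ncard := by omega
      have hnotsub : ¬ (((zpowers (g ^ e0) : Subgroup G) : Set G) ∪ ↑(zpowers (g ^ e1)) ⊆ X) := by
        intro hsub
        have := Set.ncard_le_ncard hsub (Set.toFinite _)
        omega
      obtain ⟨h, hh_mem, hhX⟩ := Set.not_subset.mp hnotsub
      have hh1 : h ≠ 1 := fun e => hhX (e ▸ h1)
      have hh_tor : h ^ p0 ^ n0 = 1 ∨ h ^ p1 ^ n1 = 1 := by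
        rcases hh_mem with hm | hm
        · exact Or.inl (PG.tor_of_mem_zpowers (proj0_tor g) hm)
        · exact Or.inr (PG.tor_of_mem_zpowers (proj1_tor g) hm)
      have hhz : h ∈ zpowers g := by
        rcases hh_mem with hm | hm
        · exact Subgroup.zpowers_le.mpr (PG.npow_mem g e0) hm
        · exact Subgroup.zpowers_le.mpr (PG.npow_mem g e1) hm
      have hgne : g ≠ h := by
        intro e
        rcases hh_tor with ht | ht
        · rw [← e] at ht
          have : g ^ e1 = 1 := by
            have := PG.pow_congr ht he1.1; rwa [pow_zero] at this
          exact hq1 this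
        · rw [← e] at ht
          have : g ^ e0 = 1 := by
            have := PG.pow_congr ht he0.2; rwa [pow_zero] at this
          exact hq0 this
      exact ⟨h, hhX, hh1, hh_tor, PG.reach hg hhX hgne hhz⟩
    -- linking pure vertices
    have link : ∀ (h h' : G) (hh : h ∈ Xᶜ) (hh' : h' ∈ Xᶜ), h ≠ 1 → h' ≠ 1 →
        (h ^ p0 ^ n0 = 1 ∨ h ^ p1 ^ n1 = 1) → (h' ^ p0 ^ n0 = 1 ∨ h' ^ p1 ^ n1 = 1) →
        ((powerGraph G).induce Xᶜ).Reachable ⟨h, hh⟩ ⟨h', hh'⟩ := by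
      intro h h' hh hh' h1' h1'' ht ht'
      have same0 : ∀ (w w' : G) (hw : w ∈ Xᶜ) (hw' : w' ∈ Xᶜ), w ≠ 1 → w' ≠ 1 →
          w ^ p0 ^ n0 = 1 → w' ^ p0 ^ n0 = 1 →
          ((powerGraph G).induce Xᶜ).Reachable ⟨w, hw⟩ ⟨w', hw'⟩ := by
        intro w w' hw hw' hw1 hw'1 hwt hw't
        exact PG.step_same he1.2 he1.1 he0.2 he0.1 h1 hX1 hK1 hw hw' hw1 hw'1 hwt hw't
      have same1 : ∀ (w w' : G) (hw : w ∈ Xᶜ) (hw' : w' ∈ Xᶜ), w ≠ 1 → w' ≠ 1 →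
          w ^ p1 ^ n1 = 1 → w' ^ p1 ^ n1 = 1 →
          ((powerGraph G).induce Xᶜ).Reachable ⟨w, hw⟩ ⟨w', hw'⟩ := by
        intro w w' hw hw' hw1 hw'1 hwt hw't
        exact PG.step_same he0.1 he0.2 he1.1 he1.2 h1 hX0 hK0 hw hw' hw1 hw'1 hwt hw't
      rcases ht with ht | ht <;> rcases ht' with ht' | ht'
      · exact same0 h h' hh hh' h1' h1'' ht ht'
      · obtain ⟨v, hv, hv1, hvt, hr⟩ :=
          PG.step_cross he0.1 he0.2 he1.1 he1.2 h1 hX1 hK1 hh h1' ht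
        exact hr.trans (same1 v h' hv hh' hv1 h1'' hvt ht')
      · obtain ⟨v, hv, hv1, hvt, hr⟩ :=
          PG.step_cross he1.2 he1.1 he0.2 he0.1 h1 hX0 hK0 hh h1' ht
        exact hr.trans (same0 v h' hv hh' hv1 h1'' hvt ht')
      · exact same1 h h' hh hh' h1' h1'' ht ht'
    intro u v
    obtain ⟨g1, hg1, hg11, hg1t, hr1⟩ := stepA u.1 u.2
    obtain ⟨g2, hg2, hg21, hg2t, hr2⟩ := stepA v.1 v.2
    exact (hr1.trans ((link g1 g2 hg1 hg2 hg11 hg21 hg1t hg2t).trans hr2.symm))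
  · -- 1 survives and is adjacent to everything
    have h1c : (1 : G) ∈ Xᶜ := h1
    have hr : ∀ w : ↥(Xᶜ), ((powerGraph G).induce Xᶜ).Reachable w ⟨1, h1c⟩ := by
      intro w
      by_cases hw : (w : G) = 1
      · exact (by rw [show w = (⟨1, h1c⟩ : ↥(Xᶜ)) from Subtype.ext hw])
      · exact PG.reach w.2 h1c hw (Subgroup.one_mem _)
    intro u v
    exact (hr u).trans (hr v).symm
end Aux


/-- Theorem 1.2(ii) (main-2(ii)): `G` finite non-cyclic abelian of order `p₀^{n₀} p₁^{n₁}` with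
both Sylow subgroups non-cyclic, `p₀ ≥ 3`, and `C` a maximal cyclic subgroup of order `p₀ p₁`;
then `κ(P(G)) = min {|P₀|, |P₁|, |C̃|}` where `|C̃| = p₀ + p₁ - 1`. -/
theorem statement_2 {G : Type*} [CommGroup G] [Fintype G] (hnc : ¬ IsCyclic G)
    (p n : Fin 2 → ℕ) (hp : ∀ t, (p t).Prime) (hlt : p 0 < p 1) (hn : ∀ t, 1 ≤ n t)
    (h3 : 3 ≤ p 0)
    (hcard : Nat.card G = p 0 ^ n 0 * p 1 ^ n 1)
    (P : ∀ t, Sylow (p t) G)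
    (hP : ∀ t, ¬ IsCyclic ↥((P t : Subgroup G)))
    (C : Subgroup G) (hC : IsMaxCyclic C) (hCord : Nat.card ↥C = p 0 * p 1) :
    kappa G = min (min (Nat.card ↥((P 0 : Subgroup G))) (Nat.card ↥((P 1 : Subgroup G))))
      ((nonGens C).ncard) ∧
    (nonGens C).ncard = p 0 + p 1 - 1 := by
  classical
  have hp0 := hp 0
  have hp1 := hp 1
  have hpne : p 0 ≠ p 1 := Nat.ne_of_lt hlt
  haveI hf0 : Fact (p 0).Prime := ⟨hp0⟩
  haveI hf1 : Fact (p 1).Prime := ⟨hp1⟩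
  have hcop : Nat.Coprime (p 0) (p 1) := (Nat.coprime_primes hp0 hp1).mpr hpne
  have hco : Nat.Coprime (p 0 ^ n 0) (p 1 ^ n 1) := hcop.pow (n 0) (n 1)
  obtain ⟨e0, he0⟩ := Nat.chineseRemainder hco 1 0
  obtain ⟨e1, he1⟩ := Nat.chineseRemainder hco 0 1
  have hexp : ∀ g : G, g ^ (p 0 ^ n 0 * p 1 ^ n 1) = 1 := fun g => by
    rw [← hcard]; exact pow_card_eq_one'
  have proj0_tor : ∀ g : G, (g ^ e0) ^ p 0 ^ n 0 = 1 := by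
    intro g
    obtain ⟨k, hk⟩ := (Nat.modEq_zero_iff_dvd).mp he0.2
    rw [← pow_mul, hk, show p 1 ^ n 1 * k * p 0 ^ n 0 = p 0 ^ n 0 * p 1 ^ n 1 * k by ring,
      pow_mul, hexp, one_pow]
  have proj1_tor : ∀ g : G, (g ^ e1) ^ p 1 ^ n 1 = 1 := by
    intro g
    obtain ⟨k, hk⟩ := (Nat.modEq_zero_iff_dvd).mp he1.1
    rw [← pow_mul, hk, show p 0 ^ n 0 * k * p 1 ^ n 1 = p 0 ^ n 0 * p 1 ^ n 1 * k by ring,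
      pow_mul, hexp, one_pow]
  have decomp : ∀ g : G, g ^ e0 * g ^ e1 = g := by
    intro g
    rw [← pow_add]
    have hmod : e0 + e1 ≡ 1 [MOD p 0 ^ n 0 * p 1 ^ n 1] :=
      (Nat.modEq_and_modEq_iff_modEq_mul hco).mp
        ⟨by simpa using he0.1.add he1.1, by simpa using he0.2.add he1.2⟩
    have := PG.pow_congr (hexp g) hmod
    rwa [pow_one] at this
  have eself0 : ∀ w : G, w ^ p 0 ^ n 0 = 1 → w ^ e0 = w := fun w hw => by
    have := PG.pow_congr hw he0.1; rwa [pow_one] at this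
  have ekill0 : ∀ w : G, w ^ p 1 ^ n 1 = 1 → w ^ e0 = 1 := fun w hw => by
    have := PG.pow_congr hw he0.2; rwa [pow_zero] at this
  have eself1 : ∀ w : G, w ^ p 1 ^ n 1 = 1 → w ^ e1 = w := fun w hw => by
    have := PG.pow_congr hw he1.2; rwa [pow_one] at this
  have ekill1 : ∀ w : G, w ^ p 0 ^ n 0 = 1 → w ^ e1 = 1 := fun w hw => by
    have := PG.pow_congr hw he1.1; rwa [pow_zero] at this
  -- Sylow subgroups are the torsion sets
  have hcardP : ∀ t, Nat.card ↥((P t : Subgroup G)) = p t ^ n t := by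
    intro t
    haveI : Fact (p t).Prime := ⟨hp t⟩
    have hfac : (Nat.card G).factorization (p t) = n t := by
      fin_cases t <;>
        rw [hcard, Nat.factorization_mul (pow_ne_zero _ hp0.pos.ne') (pow_ne_zero _ hp1.pos.ne'),
          Finsupp.add_apply, hp0.factorization_pow, hp1.factorization_pow,
          Finsupp.single_apply, Finsupp.single_apply] <;>
        simp [hpne, hpne.symm]
    rw [(P t).card_eq_multiplicity, hfac]
  have hmem : ∀ t (g : G), g ∈ (P t : Subgroup G) ↔ g ^ (p t ^ n t) = 1 := by
    intro t g
    haveI : Fact (p t).Prime := ⟨hp t⟩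
    constructor
    · intro hg
      refine orderOf_dvd_iff_pow_eq_one.mp ?_
      exact (hcardP t) ▸ Subgroup.orderOf_dvd_natCard _ hg
    · intro hg
      have hdvd : orderOf g ∣ p t ^ n t := orderOf_dvd_of_pow_eq_one hg
      obtain ⟨m, hm, hordm⟩ := (Nat.dvd_prime_pow (hp t)).mp hdvd
      have hpg : IsPGroup (p t) (Subgroup.zpowers g) :=
        IsPGroup.of_card (by rw [Nat.card_zpowers, hordm])
      obtain ⟨Q, hQ⟩ := hpg.exists_le_sylow
      haveI := Sylow.unique_of_normal Q (Subgroup.normal_of_comm (Q : Subgroup G))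
      have hQP : Q = P t := Subsingleton.elim _ _
      exact (hQP ▸ hQ) (Subgroup.mem_zpowers g)
  have hsetP : ∀ t, ((P t : Subgroup G) : Set G) = {g : G | g ^ (p t ^ n t) = 1} :=
    fun t => Set.ext fun g => hmem t g
  have hncards : ∀ t, {g : G | g ^ (p t ^ n t) = 1}.ncard = p t ^ n t := by
    intro t
    rw [← hsetP t, ← Nat.card_coe_set_eq, SetLike.coe_sort_coe, hcardP t]
  -- a generator of C and its components
  obtain ⟨c, hc⟩ := hC.1
  have hordc : orderOf c = p 0 * p 1 := by
    rw [← Nat.card_zpowers, ← hc, hCord]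
  set a := c ^ (p 1) with ha_def
  set b := c ^ (p 0) with hb_def
  have horda : orderOf a = p 0 := by
    rw [ha_def, orderOf_pow, hordc, Nat.gcd_eq_right ⟨p 0, mul_comm (p 0) (p 1)⟩,
      Nat.mul_div_cancel _ hp1.pos]
  have hordb : orderOf b = p 1 := by
    rw [hb_def, orderOf_pow, hordc, Nat.gcd_eq_right ⟨p 1, rfl⟩,
      Nat.mul_div_cancel_left _ hp0.pos]
  set c' := a * b with hc'_def
  have hc'pow : c' = c ^ (p 1 + p 0) := by rw [hc'_def, ha_def, hb_def, pow_add]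
  have hordc' : orderOf c' = p 0 * p 1 := by
    have h0 : ¬ p 0 ∣ (p 1 + p 0) := by
      intro hd
      have h' : p 0 ∣ p 1 := by
        have := Nat.dvd_sub hd (dvd_refl (p 0))
        rwa [Nat.add_sub_cancel] at this
      exact hpne ((Nat.prime_dvd_prime_iff_eq hp0 hp1).mp h')
    have h1' : ¬ p 1 ∣ (p 1 + p 0) := by
      intro hd
      have h' : p 1 ∣ p 0 := by
        have := Nat.dvd_sub hd (dvd_refl (p 1))
        rwa [Nat.add_sub_cancel_left] at this
      exact hpne ((Nat.prime_dvd_prime_iff_eq hp1 hp0).mp h').symm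
    have hcoS : Nat.Coprime (p 0 * p 1) (p 1 + p 0) :=
      Nat.Coprime.mul (hp0.coprime_iff_not_dvd.mpr h0) (hp1.coprime_iff_not_dvd.mpr h1')
    rw [hc'pow, orderOf_pow, hordc, Nat.Coprime.gcd_eq_one hcoS, Nat.div_one]
  have hc'mem : c' ∈ C := by
    rw [hc, hc'pow]; exact PG.npow_mem c _
  have hCeq : C = Subgroup.zpowers c' := by
    refine (Subgroup.eq_of_le_of_card_ge (Subgroup.zpowers_le.mpr hc'mem) ?_).symm
    rw [Nat.card_zpowers, hordc', hCord]
  have hdvd0 : p 0 ∣ p 0 ^ n 0 := dvd_pow_self _ (Nat.one_le_iff_ne_zero.mp (hn 0))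
  have hdvd1 : p 1 ∣ p 1 ^ n 1 := dvd_pow_self _ (Nat.one_le_iff_ne_zero.mp (hn 1))
  have hat : a ^ (p 0 ^ n 0) = 1 := orderOf_dvd_iff_pow_eq_one.mp (horda ▸ hdvd0)
  have hbt : b ^ (p 1 ^ n 1) = 1 := orderOf_dvd_iff_pow_eq_one.mp (hordb ▸ hdvd1)
  have ha1 : a ≠ 1 := by
    intro e; rw [e, orderOf_one] at horda; exact hp0.ne_one horda.symm
  have hb1 : b ≠ 1 := by
    intro e; rw [e, orderOf_one] at hordb; exact hp1.ne_one hordb.symm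
  -- projections of elements of C
  have hprojC : ∀ z ∈ C, z ^ e0 ∈ Subgroup.zpowers a ∧ z ^ e1 ∈ Subgroup.zpowers b := by
    intro z hz
    rw [hCeq, Subgroup.mem_zpowers_iff] at hz
    obtain ⟨k, hk⟩ := hz
    constructor
    · have hh : z ^ e0 = (a ^ k) ^ e0 := by
        rw [← hk, hc'_def, mul_zpow, mul_pow]
        have hbk : ((b : G) ^ k) ^ (p 1 ^ n 1) = 1 :=
          PG.tor_of_mem_zpowers hbt (Subgroup.zpow_mem _ (Subgroup.mem_zpowers b) k)
        rw [ekill0 _ hbk, mul_one]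
      rw [hh, PG.zpow_npow_comm]
      exact Subgroup.zpow_mem _ (PG.npow_mem a e0) k
    · have hh : z ^ e1 = (b ^ k) ^ e1 := by
        rw [← hk, hc'_def, mul_zpow, mul_pow]
        have hak : ((a : G) ^ k) ^ (p 0 ^ n 0) = 1 :=
          PG.tor_of_mem_zpowers hat (Subgroup.zpow_mem _ (Subgroup.mem_zpowers a) k)
        rw [ekill1 _ hak, one_mul]
      rw [hh, PG.zpow_npow_comm]
      exact Subgroup.zpow_mem _ (PG.npow_mem b e1) k
  -- maximality of ⟨a⟩ among p0-elements, of ⟨b⟩ among p1-elements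
  have keymax0 : ∀ y : G, y ^ (p 0 ^ n 0) = 1 → a ∈ Subgroup.zpowers y →
      y ∈ Subgroup.zpowers a := by
    intro y hy hay
    have h2 : y ∈ Subgroup.zpowers (y * b) := PG.mem_zpowers_of_pow (k := e0) (by
      rw [mul_pow, eself0 y hy, ekill0 b hbt, mul_one])
    have h1b : b ∈ Subgroup.zpowers (y * b) := PG.mem_zpowers_of_pow (k := e1) (by
      rw [mul_pow, ekill1 y hy, eself1 b hbt, one_mul])
    have hcc : c' ∈ Subgroup.zpowers (y * b) := by
      rw [hc'_def]; exact Subgroup.mul_mem _ (Subgroup.zpowers_le.mpr h2 hay) h1b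
    have hle : C ≤ Subgroup.zpowers (y * b) := by
      rw [hCeq]; exact Subgroup.zpowers_le.mpr hcc
    have heq : C = Subgroup.zpowers (y * b) := hC.2 _ ⟨y * b, rfl⟩ hle
    have hyC : y ∈ C := by rw [heq]; exact h2
    have := (hprojC y hyC).1
    rwa [eself0 y hy] at this
  have keymax1 : ∀ y : G, y ^ (p 1 ^ n 1) = 1 → b ∈ Subgroup.zpowers y →
      y ∈ Subgroup.zpowers b := by
    intro y hy hby
    have h2 : y ∈ Subgroup.zpowers (y * a) := PG.mem_zpowers_of_pow (k := e1) (by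
      rw [mul_pow, eself1 y hy, ekill1 a hat, mul_one])
    have h1a : a ∈ Subgroup.zpowers (y * a) := PG.mem_zpowers_of_pow (k := e0) (by
      rw [mul_pow, ekill0 y hy, eself0 a hat, one_mul])
    have hcc : c' ∈ Subgroup.zpowers (y * a) := by
      rw [hc'_def]; exact Subgroup.mul_mem _ h1a (Subgroup.zpowers_le.mpr h2 hby)
    have hle : C ≤ Subgroup.zpowers (y * a) := by
      rw [hCeq]; exact Subgroup.zpowers_le.mpr hcc
    have heq : C = Subgroup.zpowers (y * a) := hC.2 _ ⟨y * a, rfl⟩ hle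
    have hyC : y ∈ C := by rw [heq]; exact h2
    have := (hprojC y hyC).2
    rwa [eself1 y hy] at this
  -- nontrivial elements of ⟨a⟩ (resp ⟨b⟩) generate it
  have hgen0 : ∀ x : G, x ∈ Subgroup.zpowers a → x ≠ 1 → a ∈ Subgroup.zpowers x := by
    intro x hx hx1
    have hdvd : orderOf x ∣ p 0 := horda ▸ orderOf_dvd_of_mem_zpowers hx
    have hord : orderOf x = p 0 :=
      ((Nat.Prime.eq_one_or_self_of_dvd hp0 _ hdvd).resolve_left
        (fun e => hx1 (orderOf_eq_one_iff.mp e)))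
    have hzeq : Subgroup.zpowers x = Subgroup.zpowers a :=
      Subgroup.eq_of_le_of_card_ge (Subgroup.zpowers_le.mpr hx)
        (by rw [Nat.card_zpowers, Nat.card_zpowers, hord, horda])
    rw [hzeq]; exact Subgroup.mem_zpowers a
  have hgen1 : ∀ x : G, x ∈ Subgroup.zpowers b → x ≠ 1 → b ∈ Subgroup.zpowers x := by
    intro x hx hx1
    have hdvd : orderOf x ∣ p 1 := hordb ▸ orderOf_dvd_of_mem_zpowers hx
    have hord : orderOf x = p 1 :=
      ((Nat.Prime.eq_one_or_self_of_dvd hp1 _ hdvd).resolve_left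
        (fun e => hx1 (orderOf_eq_one_iff.mp e)))
    have hzeq : Subgroup.zpowers x = Subgroup.zpowers b :=
      Subgroup.eq_of_le_of_card_ge (Subgroup.zpowers_le.mpr hx)
        (by rw [Nat.card_zpowers, Nat.card_zpowers, hord, hordb])
    rw [hzeq]; exact Subgroup.mem_zpowers b
  -- Sylow subgroups are strictly bigger than p (non-cyclic)
  have hq0gt : p 0 < p 0 ^ n 0 := by
    have hne' : p 0 ^ n 0 ≠ p 0 := by
      intro e
      exact hP 0 (isCyclic_of_prime_card ((hcardP 0).trans e))
    exact lt_of_le_of_ne (Nat.le_of_dvd (pow_pos hp0.pos _) hdvd0) (Ne.symm hne')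
  have hq1gt : p 1 < p 1 ^ n 1 := by
    have hne' : p 1 ^ n 1 ≠ p 1 := by
      intro e
      exact hP 1 (isCyclic_of_prime_card ((hcardP 1).trans e))
    exact lt_of_le_of_ne (Nat.le_of_dvd (pow_pos hp1.pos _) hdvd1) (Ne.symm hne')
  have ha_not1 : ¬ a ^ (p 1 ^ n 1) = 1 := fun h => ha1 (PG.both_tor_eq_one hco hat h)
  have hb_not0 : ¬ b ^ (p 0 ^ n 0) = 1 := fun h => hb1 (PG.both_tor_eq_one hco h hbt)
  -- CUT for Sylow-1 set
  have hcut1 : IsCutSet (((P 1 : Subgroup G)) : Set G) := by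
    have hXmem : ∀ g : G, g ∈ ((P 1 : Subgroup G) : Set G) ↔ g ^ (p 1 ^ n 1) = 1 :=
      fun g => hmem 1 g
    have hcl : ∀ g h : G, g ∈ {g : G | g ∉ ((P 1 : Subgroup G) : Set G) ∧
        a ∈ Subgroup.zpowers g} → h ∈ ((P 1 : Subgroup G) : Set G)ᶜ →
        (powerGraph G).Adj g h → h ∈ {g : G | g ∉ ((P 1 : Subgroup G) : Set G) ∧
        a ∈ Subgroup.zpowers g} := by
      intro g h hgA hh hadj
      obtain ⟨hgX, hga⟩ := hgA
      rcases hadj.2 with hm | hm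
      · exact ⟨hh, Subgroup.zpowers_le.mpr hm hga⟩
      · refine ⟨hh, ?_⟩
        rw [Subgroup.mem_zpowers_iff] at hga
        obtain ⟨k, hk⟩ := hga
        have hag0 : a ∈ Subgroup.zpowers (g ^ e0) := by
          refine Subgroup.mem_zpowers_iff.mpr ⟨k, ?_⟩
          rw [← PG.zpow_npow_comm, hk, eself0 a hat]
        have hg0a : g ^ e0 ∈ Subgroup.zpowers a := keymax0 _ (proj0_tor g) hag0
        rw [Subgroup.mem_zpowers_iff] at hm
        obtain ⟨k', hk'⟩ := hm
        have hh0 : h ^ e0 ∈ Subgroup.zpowers a := by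
          have heq' : (g ^ e0) ^ k' = h ^ e0 := by rw [← PG.zpow_npow_comm, hk']
          exact heq' ▸ Subgroup.zpow_mem _ hg0a k'
        have hh0ne : h ^ e0 ≠ 1 := by
          intro e
          apply hh
          rw [hXmem]
          have h' : h ^ e1 = h := by conv_rhs => rw [← decomp h, e, one_mul]
          exact h' ▸ proj1_tor h
        have := hgen0 _ hh0 hh0ne
        exact Subgroup.zpowers_le.mpr (PG.npow_mem h e0) this
    have haA : a ∈ {g : G | g ∉ ((P 1 : Subgroup G) : Set G) ∧ a ∈ Subgroup.zpowers g} :=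
      ⟨fun hx => ha_not1 ((hXmem a).mp hx), Subgroup.mem_zpowers a⟩
    have hex : ∃ u : G, u ^ (p 0 ^ n 0) = 1 ∧ u ∉ Subgroup.zpowers a := by
      by_contra hcon
      push_neg at hcon
      have hsub : {g : G | g ^ (p 0 ^ n 0) = 1} ⊆ (Subgroup.zpowers a : Set G) :=
        fun g hg => hcon g hg
      have hcard' := Set.ncard_le_ncard hsub (Set.toFinite _)
      rw [hncards 0, PG.zcard, horda] at hcard'
      omega
    obtain ⟨u, hut, hua⟩ := hex
    have huX : u ∉ ((P 1 : Subgroup G) : Set G) := fun hx => hua (by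
      have h' := PG.both_tor_eq_one hco hut ((hXmem u).mp hx)
      rw [h']; exact Subgroup.one_mem _)
    have huA : u ∉ {g : G | g ∉ ((P 1 : Subgroup G) : Set G) ∧ a ∈ Subgroup.zpowers g} :=
      fun hx => hua (keymax0 u hut hx.2)
    exact PG.isCutSet_of_closed hcl haA haA.1 huX huA
  -- CUT for Sylow-0 set
  have hcut0 : IsCutSet (((P 0 : Subgroup G)) : Set G) := by
    have hXmem : ∀ g : G, g ∈ ((P 0 : Subgroup G) : Set G) ↔ g ^ (p 0 ^ n 0) = 1 :=
      fun g => hmem 0 g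
    have hcl : ∀ g h : G, g ∈ {g : G | g ∉ ((P 0 : Subgroup G) : Set G) ∧
        b ∈ Subgroup.zpowers g} → h ∈ ((P 0 : Subgroup G) : Set G)ᶜ →
        (powerGraph G).Adj g h → h ∈ {g : G | g ∉ ((P 0 : Subgroup G) : Set G) ∧
        b ∈ Subgroup.zpowers g} := by
      intro g h hgA hh hadj
      obtain ⟨hgX, hgb⟩ := hgA
      rcases hadj.2 with hm | hm
      · exact ⟨hh, Subgroup.zpowers_le.mpr hm hgb⟩
      · refine ⟨hh, ?_⟩
        rw [Subgroup.mem_zpowers_iff] at hgb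
        obtain ⟨k, hk⟩ := hgb
        have hbg1 : b ∈ Subgroup.zpowers (g ^ e1) := by
          refine Subgroup.mem_zpowers_iff.mpr ⟨k, ?_⟩
          rw [← PG.zpow_npow_comm, hk, eself1 b hbt]
        have hg1b : g ^ e1 ∈ Subgroup.zpowers b := keymax1 _ (proj1_tor g) hbg1
        rw [Subgroup.mem_zpowers_iff] at hm
        obtain ⟨k', hk'⟩ := hm
        have hh1' : h ^ e1 ∈ Subgroup.zpowers b := by
          have heq' : (g ^ e1) ^ k' = h ^ e1 := by rw [← PG.zpow_npow_comm, hk']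
          exact heq' ▸ Subgroup.zpow_mem _ hg1b k'
        have hh1ne : h ^ e1 ≠ 1 := by
          intro e
          apply hh
          rw [hXmem]
          have h' : h ^ e0 = h := by conv_rhs => rw [← decomp h, e, mul_one]
          exact h' ▸ proj0_tor h
        have := hgen1 _ hh1' hh1ne
        exact Subgroup.zpowers_le.mpr (PG.npow_mem h e1) this
    have hbA : b ∈ {g : G | g ∉ ((P 0 : Subgroup G) : Set G) ∧ b ∈ Subgroup.zpowers g} :=
      ⟨fun hx => hb_not0 ((hXmem b).mp hx), Subgroup.mem_zpowers b⟩
    have hex : ∃ u : G, u ^ (p 1 ^ n 1) = 1 ∧ u ∉ Subgroup.zpowers b := by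
      by_contra hcon
      push_neg at hcon
      have hsub : {g : G | g ^ (p 1 ^ n 1) = 1} ⊆ (Subgroup.zpowers b : Set G) :=
        fun g hg => hcon g hg
      have hcard' := Set.ncard_le_ncard hsub (Set.toFinite _)
      rw [hncards 1, PG.zcard, hordb] at hcard'
      omega
    obtain ⟨u, hut, hub⟩ := hex
    have huX : u ∉ ((P 0 : Subgroup G) : Set G) := fun hx => hub (by
      have h' := PG.both_tor_eq_one hco ((hXmem u).mp hx) hut
      rw [h']; exact Subgroup.one_mem _)
    have huA : u ∉ {g : G | g ∉ ((P 0 : Subgroup G) : Set G) ∧ b ∈ Subgroup.zpowers g} :=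
      fun hx => hub (keymax1 u hut hx.2)
    exact PG.isCutSet_of_closed hcl hbA hbA.1 huX huA
  -- CUT for the nongenerators of C
  have hcut2 : IsCutSet (nonGens C) := by
    have hcl : ∀ g h : G, g ∈ {g : G | g ∉ nonGens C ∧ Subgroup.zpowers g = C} →
        h ∈ (nonGens C)ᶜ → (powerGraph G).Adj g h →
        h ∈ {g : G | g ∉ nonGens C ∧ Subgroup.zpowers g = C} := by
      intro g h hgA hh hadj
      obtain ⟨hgX, hgC⟩ := hgA
      rcases hadj.2 with hm | hm
      · have hle : C ≤ Subgroup.zpowers h := by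
          rw [← hgC]; exact Subgroup.zpowers_le.mpr hm
        exact ⟨hh, (hC.2 _ ⟨h, rfl⟩ hle).symm⟩
      · have hhC : h ∈ C := by rw [← hgC]; exact hm
        have hnn : ¬ (h ∈ C ∧ Subgroup.zpowers h ≠ C) := hh
        push_neg at hnn
        exact ⟨hh, hnn hhC⟩
    have hc'A : c' ∈ {g : G | g ∉ nonGens C ∧ Subgroup.zpowers g = C} :=
      ⟨fun hx => hx.2 hCeq.symm, hCeq.symm⟩
    have hexC : ∃ g : G, g ∉ C := by
      by_contra hcon
      push_neg at hcon
      exact hnc ⟨⟨c, fun x => by have h' := hcon x; rw [hc] at h'; exact h'⟩⟩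
    obtain ⟨g, hgC⟩ := hexC
    have hgX : g ∉ nonGens C := fun hx => hgC hx.1
    have hgA : g ∉ {g : G | g ∉ nonGens C ∧ Subgroup.zpowers g = C} :=
      fun hx => hgC (by rw [← hx.2]; exact Subgroup.mem_zpowers g)
    exact PG.isCutSet_of_closed hcl hc'A hc'A.1 hgX hgA
  -- computing the nongenerators of C
  have hng : nonGens C = ((Subgroup.zpowers a : Subgroup G) : Set G) ∪
      ↑(Subgroup.zpowers b) := by
    ext x
    constructor
    · rintro ⟨hxC, hxne⟩
      have hdvd : orderOf x ∣ p 0 * p 1 := by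
        rw [← hordc']
        exact orderOf_dvd_of_mem_zpowers (by rw [← hCeq]; exact hxC)
      have hxne' : orderOf x ≠ p 0 * p 1 := by
        intro e
        apply hxne
        refine Subgroup.eq_of_le_of_card_ge (Subgroup.zpowers_le.mpr hxC) ?_
        rw [Nat.card_zpowers, hCord, e]
      have hcase : orderOf x ∣ p 0 ∨ orderOf x ∣ p 1 := by
        by_cases h0 : p 0 ∣ orderOf x
        · by_cases h1' : p 1 ∣ orderOf x
          · exact absurd (Nat.dvd_antisymm hdvd (hcop.mul_dvd_of_dvd_of_dvd h0 h1')) hxne'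
          · left
            have hcx : Nat.Coprime (orderOf x) (p 1) := by
              rcases (Nat.coprime_or_dvd_of_prime hp1 (orderOf x)) with h | h
              · exact h.symm
              · exact absurd h h1'
            exact hcx.dvd_of_dvd_mul_right hdvd
        · right
          have hcx : Nat.Coprime (orderOf x) (p 0) := by
            rcases (Nat.coprime_or_dvd_of_prime hp0 (orderOf x)) with h | h
            · exact h.symm
            · exact absurd h h0
          exact hcx.dvd_of_dvd_mul_left hdvd
      rcases hcase with hcx | hcx
      · left
        have hxt : x ^ (p 0 ^ n 0) = 1 := orderOf_dvd_iff_pow_eq_one.mp (hcx.trans hdvd0)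
        have := (hprojC x hxC).1
        rwa [eself0 x hxt] at this
      · right
        have hxt : x ^ (p 1 ^ n 1) = 1 := orderOf_dvd_iff_pow_eq_one.mp (hcx.trans hdvd1)
        have := (hprojC x hxC).2
        rwa [eself1 x hxt] at this
    · intro hx
      rcases hx with hx | hx
      · refine ⟨?_, ?_⟩
        · have hle : Subgroup.zpowers a ≤ C :=
            Subgroup.zpowers_le.mpr (by rw [hc, ha_def]; exact PG.npow_mem c _)
          exact hle hx
        · intro e
          have h1' : orderOf x ∣ p 0 := horda ▸ orderOf_dvd_of_mem_zpowers hx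
          have h2' : orderOf x = p 0 * p 1 := by
            rw [← Nat.card_zpowers, e, hCord]
          rw [h2'] at h1'
          have h3' : p 0 * p 1 ≤ p 0 * 1 := by
            simpa using Nat.le_of_dvd hp0.pos h1'
          have h4' := Nat.le_of_mul_le_mul_left h3' hp0.pos
          have := hp1.two_le
          omega
      · refine ⟨?_, ?_⟩
        · have hle : Subgroup.zpowers b ≤ C :=
            Subgroup.zpowers_le.mpr (by rw [hc, hb_def]; exact PG.npow_mem c _)
          exact hle hx
        · intro e
          have h1' : orderOf x ∣ p 1 := hordb ▸ orderOf_dvd_of_mem_zpowers hx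
          have h2' : orderOf x = p 0 * p 1 := by
            rw [← Nat.card_zpowers, e, hCord]
          rw [h2'] at h1'
          have h3' : p 1 * p 0 ≤ p 1 * 1 := by
            have := Nat.le_of_dvd hp1.pos h1'
            simpa [mul_comm] using this
          have h4' := Nat.le_of_mul_le_mul_left h3' hp1.pos
          have := hp0.two_le
          omega
  have hngcard : (nonGens C).ncard = p 0 + p 1 - 1 := by
    rw [hng]
    have hint : ((Subgroup.zpowers a : Subgroup G) : Set G) ∩ ↑(Subgroup.zpowers b) = {1} := by
      ext z
      constructor
      · rintro ⟨hz0, hz1⟩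
        have h0' := PG.tor_of_mem_zpowers hat hz0
        have h1'' := PG.tor_of_mem_zpowers hbt hz1
        exact PG.both_tor_eq_one hco h0' h1''
      · intro hz
        rw [Set.mem_singleton_iff] at hz
        subst hz
        exact ⟨Subgroup.one_mem _, Subgroup.one_mem _⟩
    have huni := Set.ncard_union_add_ncard_inter
      ((Subgroup.zpowers a : Subgroup G) : Set G) (↑(Subgroup.zpowers b))
      (Set.toFinite _) (Set.toFinite _)
    rw [hint, PG.zcard, PG.zcard, horda, hordb, Set.ncard_singleton] at huni
    have := hp0.two_le
    have := hp1.two_le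
    omega
  -- ncard of the Sylow sets
  have hncP : ∀ t, ((P t : Subgroup G) : Set G).ncard = p t ^ n t := by
    intro t
    rw [hsetP t]; exact hncards t
  -- members of the kappa set
  have m0 : (p 0 ^ n 0) ∈ {m | ∃ X : Set G, X.ncard = m ∧ (IsCutSet X ∨ Xᶜ.ncard = 1)} :=
    ⟨((P 0 : Subgroup G) : Set G), hncP 0, Or.inl hcut0⟩
  have m1 : (p 1 ^ n 1) ∈ {m | ∃ X : Set G, X.ncard = m ∧ (IsCutSet X ∨ Xᶜ.ncard = 1)} :=
    ⟨((P 1 : Subgroup G) : Set G), hncP 1, Or.inl hcut1⟩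
  have m2 : (p 0 + p 1 - 1) ∈ {m | ∃ X : Set G, X.ncard = m ∧ (IsCutSet X ∨ Xᶜ.ncard = 1)} :=
    ⟨nonGens C, hngcard, Or.inl hcut2⟩
  refine ⟨?_, hngcard⟩
  rw [hcardP 0, hcardP 1, hngcard]
  unfold kappa
  apply le_antisymm
  · exact le_min (le_min (Nat.sInf_le m0) (Nat.sInf_le m1)) (Nat.sInf_le m2)
  · refine le_csInf ⟨_, m0⟩ ?_
    intro m hm
    obtain ⟨X, hXm, hcut | hcompl⟩ := hm
    · by_contra hlt'
      push_neg at hlt'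
      apply hcut
      have hb0 : m < p 0 ^ n 0 :=
        lt_of_lt_of_le hlt' (le_trans (min_le_left _ _) (min_le_left _ _))
      have hb1 : m < p 1 ^ n 1 :=
        lt_of_lt_of_le hlt' (le_trans (min_le_left _ _) (min_le_right _ _))
      have hb2 : m < p 0 + p 1 - 1 := lt_of_lt_of_le hlt' (min_le_right _ _)
      exact PG.preconnected_of_small hp0 hp1 hpne hexp
        (le_of_eq (hncards 0).symm) (le_of_eq (hncards 1).symm) X
        (hXm ▸ hb0) (hXm ▸ hb1) (hXm ▸ hb2)
    · have hsum := Set.ncard_add_ncard_compl X (Set.toFinite _) (Set.toFinite _)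
      rw [hXm, hcompl] at hsum
      have h2q : p 0 ^ n 0 * 2 ≤ p 0 ^ n 0 * p 1 ^ n 1 :=
        Nat.mul_le_mul_left _ (le_trans hp1.two_le
          (Nat.le_self_pow (Nat.one_le_iff_ne_zero.mp (hn 1)) _))
      have hk0 : min (min (p 0 ^ n 0) (p 1 ^ n 1)) (p 0 + p 1 - 1) ≤ p 0 ^ n 0 :=
        le_trans (min_le_left _ _) (min_le_left _ _)
      have hN := hcard
      have hq0pos : 0 < p 0 ^ n 0 := pow_pos hp0.pos _
      omega
end

section
/- Let G be a finite non-cyclic abelian group of order p1^{n1} p2^{n2} p3^{n3}, where 3 ≤ p1 < p2 < p3 are primes and n1, n2, n3 ≥ 1, and let P1, P2, P3 be the Sylow subgroups of G corresponding to p1, p2, p3. Suppose exactly one Sylow subgroup Pk of G is non-cyclic, and let i, j be such that {i,j,k} = {1,2,3}. Then PiPj (the subgroup generated by Pi and Pj) is the unique minimum cut-set of P(G), and κ(P(G)) = |PiPj| = pi^{ni} pj^{nj}. -/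
open Subgroup Finset

section Helpers
variable {G : Type*} [Group G]

lemma reach_const {V β : Type*} {Γ : SimpleGraph V} (f : V → β)
    (h : ∀ u v : V, Γ.Adj u v → f u = f v) {u v : V} (hr : Γ.Reachable u v) : f u = f v := by
  obtain ⟨w⟩ := hr
  induction w with
  | nil => rfl
  | cons ha _ ih => exact (h _ _ ha).trans ih

lemma mem_zpowers_iff_pow [Finite G] {x y : G} : y ∈ zpowers x ↔ ∃ n : ℕ, x ^ n = y := by
  rw [← (isOfFinOrder_of_finite x).mem_powers_iff_mem_zpowers, Submonoid.mem_powers_iff]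

lemma pgroup_card_pow_le {H : Type*} [CommGroup H] [Fintype H] [DecidableEq H] {q m : ℕ}
    (hq : q.Prime) (hord : ∀ x : H, orderOf x ∣ q ^ m)
    (hE : (univ.filter (fun x : H => x ^ q = 1)).card ≤ q) :
    ∀ v : ℕ, (univ.filter (fun x : H => x ^ q ^ v = 1)).card ≤ q ^ v := by
  intro v
  induction v with
  | zero =>
    simp only [pow_zero, pow_one]
    apply Finset.card_le_one.2 (by
      intro a ha b hb
      simp only [Finset.mem_filter, pow_one] at ha hb
      rw [ha.2, hb.2])
  | succ v ih =>
    set s : Finset H := univ.filter (fun x : H => x ^ q ^ (v+1) = 1) with hs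
    have hmap : ∀ a ∈ s, a ^ q ∈ univ.filter (fun x : H => x ^ q ^ v = 1) := by
      intro a ha
      simp only [hs, Finset.mem_filter, Finset.mem_univ, true_and] at ha ⊢
      rw [← pow_mul, ← pow_succ']
      exact ha
    have h1 : s.card ≤ q * (univ.filter (fun x : H => x ^ q ^ v = 1)).card := by
      refine Finset.card_le_mul_card_image_of_maps_to hmap q ?_
      intro b _
      by_cases hne : (s.filter (fun a => a ^ q = b)).Nonempty
      · obtain ⟨x0, hx0⟩ := hne
        simp only [Finset.mem_filter] at hx0
        calc (s.filter (fun a => a ^ q = b)).card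
            ≤ (univ.filter (fun x : H => x ^ q = 1)).card := by
              apply Finset.card_le_card_of_injOn (fun a => a * x0⁻¹)
              · intro a ha
                simp only [Finset.mem_coe, Finset.mem_filter, Finset.mem_univ, true_and] at ha ⊢
                rw [mul_pow, ha.2, inv_pow, hx0.2, mul_inv_cancel]
              · intro a _ b _ hab
                exact mul_right_cancel hab
          _ ≤ q := hE
      · rw [Finset.not_nonempty_iff_eq_empty] at hne
        simp [hne]
    calc s.card ≤ q * (univ.filter (fun x : H => x ^ q ^ v = 1)).card := h1
      _ ≤ q * q ^ v := Nat.mul_le_mul_left q ih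
      _ = q ^ (v+1) := by ring

lemma pgroup_noncyclic_exists {H : Type*} [CommGroup H] [Fintype H] {q m : ℕ}
    (hq : q.Prime) (hord : ∀ x : H, orderOf x ∣ q ^ m) (hnc : ¬ IsCyclic H) :
    ∃ a b : H, a ^ q = 1 ∧ b ^ q = 1 ∧ a ≠ 1 ∧ b ∉ zpowers a := by
  classical
  haveI : Fact q.Prime := ⟨hq⟩
  have hE : ¬ (univ.filter (fun x : H => x ^ q = 1)).card ≤ q := by
    intro hE
    apply hnc
    apply isCyclic_of_card_pow_eq_one_le
    intro n hn
    have hd : ∀ x : H, x ^ n = 1 ↔ x ^ Nat.gcd n (q ^ m) = 1 := by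
      intro x
      rw [← orderOf_dvd_iff_pow_eq_one, ← orderOf_dvd_iff_pow_eq_one]
      exact ⟨fun h => Nat.dvd_gcd h (hord x), fun h => h.trans (Nat.gcd_dvd_left _ _)⟩
    have hset : (univ.filter (fun x : H => x ^ n = 1))
        = univ.filter (fun x : H => x ^ Nat.gcd n (q ^ m) = 1) := by
      apply Finset.filter_congr; intro x _; exact hd x
    obtain ⟨v, hv, hgv⟩ := (Nat.dvd_prime_pow hq).1 (Nat.gcd_dvd_right n (q ^ m))
    show (univ.filter (fun x : H => x ^ n = 1)).card ≤ n
    rw [hset, hgv]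
    calc (univ.filter (fun x : H => x ^ q ^ v = 1)).card ≤ q ^ v :=
          pgroup_card_pow_le hq hord hE v
      _ ≤ n := by
          rw [← hgv]
          exact Nat.le_of_dvd hn (Nat.gcd_dvd_left _ _)
  push_neg at hE
  set E : Finset H := univ.filter (fun x : H => x ^ q = 1) with hEdef
  have hq2 : 2 ≤ q := hq.two_le
  have hEne : ∃ a ∈ E, a ≠ (1 : H) := by
    by_contra hcon
    push_neg at hcon
    have : E ⊆ {1} := fun x hx => Finset.mem_singleton.2 (hcon x hx)
    have := Finset.card_le_card this
    simp only [Finset.card_singleton] at this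
    omega
  obtain ⟨a, haE, ha1⟩ := hEne
  have haq : orderOf a = q := orderOf_eq_prime (by simpa [hEdef] using haE) ha1
  have hb : ∃ b ∈ E, b ∉ zpowers a := by
    by_contra hcon
    push_neg at hcon
    have hsub : E ⊆ (zpowers a : Set H).toFinset := by
      intro x hx; simpa using hcon x hx
    have hcards := Finset.card_le_card hsub
    rw [Set.toFinset_card] at hcards
    have : Fintype.card (zpowers a : Set H) = q := by
      rw [← Nat.card_eq_fintype_card]
      simpa [haq] using Nat.card_zpowers a
    omega
  obtain ⟨b, hbE, hba⟩ := hb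
  exact ⟨a, b, by simpa [hEdef] using haE, by simpa [hEdef] using hbE, ha1, hba⟩

end Helpers

section Socle
variable {G : Type*} [Group G] [Finite G]

lemma mem_zpowers_iff_pow' {x y : G} : y ∈ zpowers x ↔ ∃ n : ℕ, x ^ n = y := by
  rw [← (isOfFinOrder_of_finite x).mem_powers_iff_mem_zpowers, Submonoid.mem_powers_iff]

/-- In a cyclic `q`-group situation: the subgroup of order `q` of `⟨x⟩` is an invariant. -/
lemma socle_eq {q : ℕ} (hq : q.Prime) {M : ℕ} (hM : ∃ nk, M = q ^ nk) {x y : G}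
    (hx : orderOf x ∣ M) (hy : orderOf y ∣ M) (hx1 : x ≠ 1) (hxy : x ∈ zpowers y) :
    zpowers (x ^ (orderOf x / q)) = zpowers (y ^ (orderOf y / q)) := by
  obtain ⟨nk, rfl⟩ := hM
  have hq0 : 0 < q := hq.pos
  obtain ⟨a, _, hoa⟩ := (Nat.dvd_prime_pow hq).1 hx
  have hy1 : y ≠ 1 := by
    rintro rfl
    rw [zpowers_one_eq_bot, Subgroup.mem_bot] at hxy
    exact hx1 hxy
  obtain ⟨c, _, hoc⟩ := (Nat.dvd_prime_pow hq).1 hy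
  have ha1 : 1 ≤ a := by
    rcases Nat.eq_zero_or_pos a with h | h
    · exfalso; apply hx1; rw [← orderOf_eq_one_iff, hoa, h, pow_zero]
    · exact h
  have hc1 : 1 ≤ c := by
    rcases Nat.eq_zero_or_pos c with h | h
    · exfalso; apply hy1; rw [← orderOf_eq_one_iff, hoc, h, pow_zero]
    · exact h
  have hps : ∀ e : ℕ, 1 ≤ e → q ^ (e - 1) * q = q ^ e := fun e he => by
    rw [← pow_succ, Nat.sub_add_cancel he]
  have hdiva : orderOf x / q = q ^ (a - 1) := by
    rw [hoa, ← hps a ha1, Nat.mul_div_cancel _ hq0]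
  have hdivc : orderOf y / q = q ^ (c - 1) := by
    rw [hoc, ← hps c hc1, Nat.mul_div_cancel _ hq0]
  -- order of the socle generators is q
  have hordsoc : ∀ z : G, ∀ e : ℕ, 1 ≤ e → orderOf z = q ^ e →
      orderOf (z ^ (q ^ (e - 1))) = q := by
    intro z e he hze
    have : q ^ (e - 1) * q = q ^ e := by rw [← pow_succ, Nat.sub_add_cancel he]
    rw [orderOf_pow, hze, Nat.gcd_eq_right (pow_dvd_pow q (by omega)), ← this,
      Nat.mul_div_cancel_left _ (pow_pos hq0 _)]
  have hwx : orderOf (x ^ (q ^ (a - 1))) = q := hordsoc x a ha1 hoa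
  have hwy : orderOf (y ^ (q ^ (c - 1))) = q := hordsoc y c hc1 hoc
  -- x ^ (q^(a-1)) lies in zpowers (y ^ (q^(c-1)))
  have hmem : x ^ (q ^ (a - 1)) ∈ zpowers (y ^ (q ^ (c - 1))) := by
    obtain ⟨t, ht⟩ := mem_zpowers_iff_pow'.1 hxy
    have hpow : (y ^ t) ^ (q ^ (a - 1)) = x ^ (q ^ (a - 1)) := by rw [ht]
    have h1 : y ^ (t * q ^ (a - 1) * q) = 1 := by
      rw [pow_mul, pow_mul, hpow, ← pow_mul, ← pow_succ, Nat.sub_add_cancel ha1, ← hoa,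
        pow_orderOf_eq_one]
    have h2 : q ^ c ∣ t * q ^ (a - 1) * q := by rw [← hoc]; exact orderOf_dvd_of_pow_eq_one h1
    have h3 : q ^ (c - 1) * q ∣ (t * q ^ (a - 1)) * q := by
      rwa [hps c hc1]
    have h4 : q ^ (c - 1) ∣ t * q ^ (a - 1) := (Nat.mul_dvd_mul_iff_right hq0).1 h3
    obtain ⟨u, hu⟩ := h4
    refine mem_zpowers_iff_pow'.2 ⟨u, ?_⟩
    rw [← pow_mul, ← hu, ← ht, ← pow_mul]
  have hle : zpowers (x ^ (q ^ (a - 1))) ≤ zpowers (y ^ (q ^ (c - 1))) := zpowers_le.2 hmem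
  have heq : zpowers (x ^ (q ^ (a - 1))) = zpowers (y ^ (q ^ (c - 1))) := by
    apply Subgroup.eq_of_le_of_card_ge hle
    rw [Nat.card_zpowers, Nat.card_zpowers, hwx, hwy]
  rw [hdiva, hdivc, heq]

end Socle

theorem crux {G : Type*} [CommGroup G] [Fintype G]
    (q : ℕ) (hq : q.Prime) (hq3 : 3 ≤ q) (nk : ℕ) (hnk : 1 ≤ nk)
    (M : ℕ) (hMdef : M = q ^ nk)
    (N : ℕ) (hN1 : 1 ≤ N)
    (g0 : G) (hNdef : orderOf g0 = N)
    (K' : Subgroup G)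
    (htot : N < 2 * Nat.totient N)
    (hcop : N.Coprime M)
    (hKcard : Nat.card K' = M)
    (hGcard : Nat.card G = N * M)
    (hKnc : ¬ IsCyclic K')
    (hKmem : ∀ x : G, orderOf x ∣ M → x ∈ K')
    (hCmem : ∀ x : G, orderOf x ∣ N → x ∈ zpowers g0) :
    IsMinimumCutSet ((zpowers g0 : Subgroup G) : Set G) ∧
    (∀ X : Set G, IsMinimumCutSet X → X = ((zpowers g0 : Subgroup G) : Set G)) ∧
    kappa G = N := by
  classical
  haveI : Fact q.Prime := ⟨hq⟩
  obtain ⟨eC, hC⟩ := Nat.chineseRemainder hcop 1 0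
  obtain ⟨eK, hK⟩ := Nat.chineseRemainder hcop 0 1
  have hordG : ∀ g : G, orderOf g ∣ N * M := fun g => hGcard ▸ orderOf_dvd_natCard g
  have hM3 : 3 ≤ M := hMdef ▸ le_trans hq3 (Nat.le_self_pow (by omega) q)
  have key : ∀ (g : G) (s t : ℕ), s ≡ t [MOD N] → s ≡ t [MOD M] → g ^ s = g ^ t := by
    intro g s t h1 h2
    exact pow_eq_pow_iff_modEq.2
      (Nat.ModEq.of_dvd (hordG g) ((Nat.modEq_and_modEq_iff_modEq_mul hcop).1 ⟨h1, h2⟩))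
  have split : ∀ g : G, g ^ eC * g ^ eK = g := by
    intro g
    rw [← pow_add]
    have h1 : eC + eK ≡ 1 + 0 [MOD N] := hC.1.add hK.1
    have h2 : eC + eK ≡ 0 + 1 [MOD M] := hC.2.add hK.2
    simpa using key g (eC + eK) 1 (by simpa using h1) (by simpa using h2)
  have ordK : ∀ g : G, orderOf (g ^ eK) ∣ M := by
    intro g
    apply orderOf_dvd_of_pow_eq_one
    rw [← pow_mul]
    have h1 : eK * M ≡ 0 [MOD N] := by simpa using hK.1.mul_right M
    have h2 : eK * M ≡ 0 [MOD M] := Nat.modEq_zero_iff_dvd.2 (dvd_mul_left M eK)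
    simpa using key g (eK * M) 0 h1 h2
  have ordC : ∀ g : G, orderOf (g ^ eC) ∣ N := by
    intro g
    apply orderOf_dvd_of_pow_eq_one
    rw [← pow_mul]
    have h1 : eC * N ≡ 0 [MOD N] := Nat.modEq_zero_iff_dvd.2 (dvd_mul_left N eC)
    have h2 : eC * N ≡ 0 [MOD M] := by simpa using hC.2.mul_right N
    simpa using key g (eC * N) 0 h1 h2
  have memK : ∀ g : G, g ^ eK ∈ K' := fun g => hKmem _ (ordK g)
  have memCproj : ∀ g : G, g ^ eC ∈ zpowers g0 := fun g => hCmem _ (ordC g)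
  have fixM : ∀ g : G, orderOf g ∣ M → g ^ eK = g := by
    intro g hg
    simpa using (pow_eq_pow_iff_modEq (x := g) (n := eK) (m := 1)).2 (Nat.ModEq.of_dvd hg hK.2)
  have killKN : ∀ g : G, orderOf g ∣ N → g ^ eK = 1 := by
    intro g hg
    simpa using (pow_eq_pow_iff_modEq (x := g) (n := eK) (m := 0)).2 (Nat.ModEq.of_dvd hg hK.1)
  have fixN : ∀ g : G, orderOf g ∣ N → g ^ eC = g := by
    intro g hg
    simpa using (pow_eq_pow_iff_modEq (x := g) (n := eC) (m := 1)).2 (Nat.ModEq.of_dvd hg hC.1)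
  have killCM : ∀ g : G, orderOf g ∣ M → g ^ eC = 1 := by
    intro g hg
    simpa using (pow_eq_pow_iff_modEq (x := g) (n := eC) (m := 0)).2 (Nat.ModEq.of_dvd hg hC.2)
  set C : Subgroup G := zpowers g0 with hCdef
  have hCcard : Nat.card C = N := by rw [hCdef, Nat.card_zpowers, hNdef]
  have ordmemC : ∀ g : G, g ∈ C → orderOf g ∣ N := fun g hg => hCcard ▸ C.orderOf_dvd_natCard hg
  have ordmemK : ∀ g : G, g ∈ K' → orderOf g ∣ M := fun g hg => hKcard ▸ K'.orderOf_dvd_natCard hg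
  have memC_iff : ∀ g : G, g ∈ C ↔ g ^ eK = 1 := by
    intro g
    constructor
    · intro h; exact killKN g (ordmemC g h)
    · intro h
      have hs := split g
      rw [h, mul_one] at hs
      rw [← hs]; exact memCproj g
  have adj_fwd : ∀ g h : G, g ∈ zpowers h → g ^ eK ∈ zpowers (h ^ eK) := by
    intro g h hg
    obtain ⟨n, rfl⟩ := mem_zpowers_iff_pow'.1 hg
    exact mem_zpowers_iff_pow'.2 ⟨n, by rw [← pow_mul, mul_comm, pow_mul]⟩
  have adj_bwd : ∀ g h : G, g ^ eC ∈ zpowers (h ^ eC) → g ^ eK ∈ zpowers (h ^ eK) →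
      g ∈ zpowers h := by
    intro g h h1 h2
    obtain ⟨s, hs⟩ := mem_zpowers_iff_pow'.1 h1
    obtain ⟨t, ht⟩ := mem_zpowers_iff_pow'.1 h2
    obtain ⟨m, hm⟩ := Nat.chineseRemainder hcop s t
    refine mem_zpowers_iff_pow'.2 ⟨m, ?_⟩
    have e1 : (h ^ eC) ^ m = (h ^ eC) ^ s := pow_eq_pow_iff_modEq.2 (Nat.ModEq.of_dvd (ordC h) hm.1)
    have e2 : (h ^ eK) ^ m = (h ^ eK) ^ t := pow_eq_pow_iff_modEq.2 (Nat.ModEq.of_dvd (ordK h) hm.2)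
    calc h ^ m = (h ^ eC * h ^ eK) ^ m := by rw [split h]
      _ = (h ^ eC) ^ m * (h ^ eK) ^ m := mul_pow _ _ _
      _ = g ^ eC * g ^ eK := by rw [e1, e2, hs, ht]
      _ = g := split g
  set Cgen : Set G := {x : G | zpowers x = C} with hCgendef
  have hCgenC : Cgen ⊆ (C : Set G) := fun x hx => by
    rw [← hx]; exact mem_zpowers x
  set T : G → Set G := fun b => {x : G | x ^ eC ∈ Cgen ∧ x ^ eK = b} with hTdef
  have hCtop : ∀ x t : G, x ∈ C → t ^ eC ∈ Cgen → x ∈ zpowers t := by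
    intro x t hx htc
    apply adj_bwd
    · rw [fixN x (ordmemC x hx)]
      have hz : zpowers (t ^ eC) = C := htc
      rw [hz]; exact hx
    · rw [killKN x (ordmemC x hx)]; exact one_mem _
  have htopfib : ∀ g t : G, t ^ eC ∈ Cgen → g ^ eK ∈ zpowers (t ^ eK) → g ∈ zpowers t := by
    intro g t htc hk
    apply adj_bwd _ _ _ hk
    have hz : zpowers (t ^ eC) = C := htc
    rw [hz]; exact memCproj g
  have hTcard : ∀ b : G, b ∈ K' → Nat.totient N ≤ (T b).ncard := by
    intro b hb
    have hmaps : ∀ t : ℕ, t < N → N.Coprime t → g0 ^ t * b ∈ T b := by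
      intro t ht hco
      have hot : orderOf (g0 ^ t) ∣ N := by
        apply orderOf_dvd_of_pow_eq_one
        rw [← pow_mul, mul_comm, pow_mul, ← hNdef, pow_orderOf_eq_one, one_pow]
      have hobM : orderOf b ∣ M := ordmemK b hb
      have h1 : (g0 ^ t * b) ^ eC = g0 ^ t := by
        rw [mul_pow, fixN _ hot, killCM b hobM, mul_one]
      have h2 : (g0 ^ t * b) ^ eK = b := by
        rw [mul_pow, killKN _ hot, one_mul, fixM b hobM]
      refine ⟨?_, h2⟩
      rw [h1]
      show zpowers (g0 ^ t) = C
      apply Subgroup.eq_of_le_of_card_ge (zpowers_le.2 (mem_zpowers_iff_pow'.2 ⟨t, rfl⟩))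
      rw [hCcard, Nat.card_zpowers, orderOf_pow, hNdef, (show Nat.gcd N t = 1 from hco),
        Nat.div_one]
    set S0 : Set ℕ := {t : ℕ | t < N ∧ N.Coprime t} with hS0
    have himg : (fun t : ℕ => g0 ^ t * b) '' S0 ⊆ T b := by
      rintro x ⟨t, ⟨ht1, ht2⟩, rfl⟩
      exact hmaps t ht1 ht2
    have hinj : S0.InjOn (fun t : ℕ => g0 ^ t * b) := by
      intro s hs t ht hst
      have hgg : g0 ^ s = g0 ^ t := mul_right_cancel hst
      exact pow_injOn_Iio_orderOf (by simpa [hNdef] using hs.1) (by simpa [hNdef] using ht.1) hgg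
    have hS0card : S0.ncard = Nat.totient N := by
      have hfs : S0 = ↑((Finset.range N).filter N.Coprime) := by
        ext t
        simp [hS0, Finset.mem_filter, Finset.mem_range, and_comm]
      rw [hfs, Set.ncard_coe_finset]
      rfl
    calc Nat.totient N = S0.ncard := hS0card.symm
      _ = ((fun t : ℕ => g0 ^ t * b) '' S0).ncard := (Set.ncard_image_of_injOn hinj).symm
      _ ≤ (T b).ncard := Set.ncard_le_ncard himg (Set.toFinite _)
  have hTdisj : ∀ Y : Set G, Y.ncard ≤ N → ∀ b b' : G, b ∈ K' → b' ∈ K' → b ≠ b' →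
      T b ⊆ Y → ¬ (T b' ⊆ Y) := by
    intro Y hY b b' hb hb' hne hTb hTb'
    have hdisj : Disjoint (T b) (T b') := by
      rw [Set.disjoint_left]
      rintro x ⟨_, hx2⟩ ⟨_, hx2'⟩
      exact hne (hx2 ▸ hx2' ▸ rfl)
    have hsub : T b ∪ T b' ⊆ Y := Set.union_subset hTb hTb'
    have hle := Set.ncard_le_ncard hsub (Set.toFinite _)
    rw [Set.ncard_union_eq hdisj (Set.toFinite _) (Set.toFinite _)] at hle
    have h1 := hTcard b hb
    have h2 := hTcard b' hb'
    omega
  have hstep : ∀ (Y : Set G) (u v : ↥(Yᶜ)), (↑u : G) ∈ zpowers (↑v : G) →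
      ((powerGraph G).induce Yᶜ).Reachable u v := by
    intro Y u v h
    by_cases he : (↑u : G) = ↑v
    · rw [Subtype.ext he]
    · apply SimpleGraph.Adj.reachable
      show (powerGraph G).Adj ↑u ↑v
      exact (⟨he, Or.inl h⟩ : (↑u : G) ≠ ↑v ∧ _)
  have hCncard : ((C : Subgroup G) : Set G).ncard = N := by
    rw [← Nat.card_coe_set_eq]
    exact hCcard
  -- The main lemma: every small cut-set equals C.
  have ML : ∀ Y : Set G, IsCutSet Y → Y.ncard ≤ N → Y = (C : Set G) := by
    intro Y hcut hYle
    by_cases hA : ∃ h0 ∈ Cgen, h0 ∉ Y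
    · exfalso
      apply hcut
      obtain ⟨h0, hgen, hh0Y⟩ := hA
      have hh0C : h0 ∈ C := hCgenC hgen
      have hh0N : orderOf h0 ∣ N := ordmemC h0 hh0C
      have hT1h0 : h0 ∈ T 1 := ⟨by rw [fixN h0 hh0N]; exact hgen, killKN h0 hh0N⟩
      have hub : ∀ v : ↥(Yᶜ), ((powerGraph G).induce Yᶜ).Reachable v
          ⟨h0, (by simpa using hh0Y : h0 ∈ Yᶜ)⟩ := by
        rintro ⟨g, hgY⟩
        by_cases hTb : ∃ t ∈ T (g ^ eK), t ∉ Y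
        · obtain ⟨t, ⟨htc, htk⟩, htY⟩ := hTb
          have r1 : g ∈ zpowers t := htopfib g t htc (by rw [htk]; exact mem_zpowers _)
          have r2 : h0 ∈ zpowers t := hCtop h0 t hh0C htc
          exact (hstep Y ⟨g, hgY⟩ ⟨t, (by simpa using htY)⟩ r1).trans
            (hstep Y ⟨h0, (by simpa using hh0Y)⟩ ⟨t, (by simpa using htY)⟩ r2).symm
        · push_neg at hTb
          have hTbY : T (g ^ eK) ⊆ Y := hTb
          have hb1 : g ^ eK ≠ 1 := by
            intro h
            exact hh0Y (hTbY (h ▸ hT1h0))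
          have hbK : g ^ eK ∈ K' := memK g
          have hModd : Odd M := hMdef ▸ (hq.odd_of_ne_two (by omega)).pow
          have hbinv : (g ^ eK)⁻¹ ≠ g ^ eK := by
            intro h
            have h2 : (g ^ eK) ^ 2 = 1 := by
              rw [pow_two]
              calc g ^ eK * g ^ eK = (g ^ eK)⁻¹ * g ^ eK := by rw [h]
                _ = 1 := inv_mul_cancel _
            have hdvd2 : orderOf (g ^ eK) ∣ 2 := orderOf_dvd_of_pow_eq_one h2
            have hgcd : Nat.gcd 2 M = 1 := Nat.coprime_two_left.2 hModd
            have hdg : orderOf (g ^ eK) ∣ Nat.gcd 2 M := Nat.dvd_gcd hdvd2 (ordK g)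
            rw [hgcd] at hdg
            exact hb1 (orderOf_eq_one_iff.1 (Nat.dvd_one.1 hdg))
          have hTb' := hTdisj Y hYle _ _ hbK (inv_mem hbK) (Ne.symm hbinv) hTbY
          rw [Set.not_subset] at hTb'
          obtain ⟨t, ⟨htc, htk⟩, htY⟩ := hTb'
          have r1 : g ∈ zpowers t := htopfib g t htc
            (by rw [htk]; simpa using inv_mem (mem_zpowers (g ^ eK)⁻¹))
          have r2 : h0 ∈ zpowers t := hCtop h0 t hh0C htc
          exact (hstep Y ⟨g, hgY⟩ ⟨t, (by simpa using htY)⟩ r1).trans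
            (hstep Y ⟨h0, (by simpa using hh0Y)⟩ ⟨t, (by simpa using htY)⟩ r2).symm
      intro u v
      exact (hub u).trans (hub v).symm
    · push_neg at hA
      have hT1Y : T 1 ⊆ Y := by
        rintro x ⟨hxc, hxk⟩
        have hxC : x ∈ C := (memC_iff x).2 hxk
        have hfix : x ^ eC = x := fixN x (ordmemC x hxC)
        exact hA x (hfix ▸ hxc)
      have hCY : (C : Set G) ⊆ Y := by
        by_contra hc
        rw [Set.not_subset] at hc
        obtain ⟨c0, hc0C, hc0Y⟩ := hc
        apply hcut
        have hc0C' : c0 ∈ C := hc0C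
        have hub : ∀ v : ↥(Yᶜ), ((powerGraph G).induce Yᶜ).Reachable v
            ⟨c0, (by simpa using hc0Y)⟩ := by
          rintro ⟨g, hgY⟩
          have hpick : ∃ b' : G, b' ∈ K' ∧ b' ≠ 1 ∧ g ^ eK ∈ zpowers b' := by
            by_cases hb1 : g ^ eK = 1
            · have hne : ∃ b1 ∈ K', b1 ≠ (1 : G) := by
                by_contra hcon
                push_neg at hcon
                have hbot : K' = ⊥ := by
                  rw [eq_bot_iff]
                  intro z hz
                  exact hcon z hz
                rw [hbot, Nat.card_eq_fintype_card] at hKcard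
                simp [Fintype.card_eq_one_iff_nonempty_unique] at hKcard
                omega
              obtain ⟨b1, hb1K, hb1ne⟩ := hne
              exact ⟨b1, hb1K, hb1ne, by rw [hb1]; exact one_mem _⟩
            · exact ⟨g ^ eK, memK g, hb1, mem_zpowers _⟩
          obtain ⟨b', hb'K, hb'1, hgb'⟩ := hpick
          have hTb' := hTdisj Y hYle 1 b' (one_mem _) hb'K (Ne.symm hb'1) hT1Y
          rw [Set.not_subset] at hTb'
          obtain ⟨t, ⟨htc, htk⟩, htY⟩ := hTb'
          have r1 : g ∈ zpowers t := htopfib g t htc (by rw [htk]; exact hgb')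
          have r2 : c0 ∈ zpowers t := hCtop c0 t hc0C' htc
          exact (hstep Y ⟨g, hgY⟩ ⟨t, (by simpa using htY)⟩ r1).trans
            (hstep Y ⟨c0, (by simpa using hc0Y)⟩ ⟨t, (by simpa using htY)⟩ r2).symm
        intro u v
        exact (hub u).trans (hub v).symm
      exact (Set.eq_of_subset_of_ncard_le hCY (by rw [hCncard]; exact hYle)
        (Set.toFinite _)).symm
  -- C is a cut-set
  have hKord : ∀ x : ↥K', orderOf x ∣ q ^ nk := by
    intro x
    have hd := orderOf_dvd_natCard x
    rwa [hKcard, hMdef] at hd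
  obtain ⟨a, b, haq, hbq, ha1, hba⟩ := pgroup_noncyclic_exists hq hKord hKnc
  have hb1 : b ≠ 1 := fun h => hba (h ▸ one_mem _)
  have ha'q : orderOf (↑a : G) = q := by
    rw [Subgroup.orderOf_coe]
    exact orderOf_eq_prime haq ha1
  have hb'q : orderOf (↑b : G) = q := by
    rw [Subgroup.orderOf_coe]
    exact orderOf_eq_prime hbq hb1
  have hb'a' : (↑b : G) ∉ zpowers (↑a : G) := by
    intro h
    obtain ⟨n, hn⟩ := mem_zpowers_iff_pow'.1 h
    apply hba
    refine mem_zpowers_iff_pow'.2 ⟨n, ?_⟩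
    exact Subtype.coe_injective (by push_cast; exact hn)
  have hqM : q ∣ M := hMdef ▸ dvd_pow_self q (by omega)
  have hnotC : ∀ z : G, orderOf z = q → z ∉ (C : Set G) := by
    intro z hz hzC
    have h1 : q ∣ N := hz ▸ ordmemC z hzC
    have h2 : q ∣ Nat.gcd N M := Nat.dvd_gcd h1 hqM
    rw [(show Nat.gcd N M = 1 from hcop)] at h2
    have := Nat.le_of_dvd one_pos h2
    omega
  have hanotC : (↑a : G) ∈ ((C : Set G))ᶜ := by simpa using hnotC _ ha'q
  have hbnotC : (↑b : G) ∈ ((C : Set G))ᶜ := by simpa using hnotC _ hb'q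
  have hCut : IsCutSet (C : Set G) := by
    intro hpre
    set f : ↥(((C : Subgroup G) : Set G)ᶜ) → Subgroup G :=
      fun u => zpowers (((↑u : G) ^ eK) ^ (orderOf ((↑u : G) ^ eK) / q)) with hf
    have hadj : ∀ u v, ((powerGraph G).induce ((C : Set G))ᶜ).Adj u v → f u = f v := by
      intro u v huv
      have hadj' : (powerGraph G).Adj ↑u ↑v := huv
      obtain ⟨hne, hor⟩ := (hadj' : (↑u : G) ≠ ↑v ∧ ((↑u : G) ∈ zpowers (↑v : G) ∨ (↑v : G) ∈ zpowers (↑u : G)))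
      have hu1 : (↑u : G) ^ eK ≠ 1 := by
        intro h
        exact (Set.mem_compl_iff _ _).1 u.2 ((memC_iff _).2 h)
      have hv1 : (↑v : G) ^ eK ≠ 1 := by
        intro h
        exact (Set.mem_compl_iff _ _).1 v.2 ((memC_iff _).2 h)
      cases hor with
      | inl h =>
        exact socle_eq hq ⟨nk, hMdef⟩ (ordK _) (ordK _) hu1 (adj_fwd _ _ h)
      | inr h =>
        exact (socle_eq hq ⟨nk, hMdef⟩ (ordK _) (ordK _) hv1 (adj_fwd _ _ h)).symm
    have hra := hpre ⟨(↑a : G), hanotC⟩ ⟨(↑b : G), hbnotC⟩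
    have hfab := reach_const f hadj hra
    have hfa : f ⟨(↑a : G), hanotC⟩ = zpowers (↑a : G) := by
      have h1 : (↑a : G) ^ eK = ↑a := fixM _ (by rw [ha'q]; exact hqM)
      rw [hf]
      simp only
      rw [h1, ha'q, Nat.div_self hq.pos, pow_one]
    have hfb : f ⟨(↑b : G), hbnotC⟩ = zpowers (↑b : G) := by
      have h1 : (↑b : G) ^ eK = ↑b := fixM _ (by rw [hb'q]; exact hqM)
      rw [hf]
      simp only
      rw [h1, hb'q, Nat.div_self hq.pos, pow_one]
    rw [hfa, hfb] at hfab
    exact hb'a' (hfab ▸ mem_zpowers (↑b : G))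
  have hmin : IsMinimumCutSet (C : Set G) := by
    refine ⟨hCut, ?_⟩
    intro Y hY
    by_contra hlt
    push_neg at hlt
    rw [hCncard] at hlt
    have hYC := ML Y hY (le_of_lt hlt)
    rw [hYC, hCncard] at hlt
    omega
  refine ⟨hmin, ?_, ?_⟩
  · intro X hX
    have hXle : X.ncard ≤ N := by
      have := hX.2 _ hCut
      rwa [hCncard] at this
    exact ML X hX.1 hXle
  · have hmem : N ∈ {m | ∃ X : Set G, X.ncard = m ∧ (IsCutSet X ∨ Xᶜ.ncard = 1)} :=
      ⟨(C : Set G), hCncard, Or.inl hCut⟩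
    apply le_antisymm (Nat.sInf_le hmem)
    apply le_csInf ⟨N, hmem⟩
    rintro m ⟨X, rfl, hX | hX⟩
    · by_contra hlt
      push_neg at hlt
      have hXC := ML X hX (le_of_lt hlt)
      rw [hXC, hCncard] at hlt
      omega
    · have htotal : X.ncard + Xᶜ.ncard = Nat.card G := by
        rw [← Set.ncard_add_ncard_compl X]
      rw [hX, hGcard] at htotal
      have h3 : N * 3 ≤ N * M := Nat.mul_le_mul_left N hM3
      omega

lemma exists_zpowers_eq {G : Type*} [Group G] [Finite G] (H : Subgroup G) (h : IsCyclic H) :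
    ∃ x : G, x ∈ H ∧ zpowers x = H ∧ orderOf x = Nat.card H := by
  obtain ⟨ξ, hξ⟩ := h.exists_generator
  have hz : zpowers (↑ξ : G) = H := by
    apply le_antisymm (zpowers_le.2 ξ.2)
    intro g hg
    obtain ⟨m, hm⟩ := mem_zpowers_iff_pow'.1 (hξ ⟨g, hg⟩)
    refine mem_zpowers_iff_pow'.2 ⟨m, ?_⟩
    have := congrArg (Subtype.val) hm
    push_cast at this
    exact this
  refine ⟨↑ξ, ξ.2, hz, ?_⟩
  rw [← Nat.card_zpowers, hz]

lemma mem_sylow_of_orderOf_dvd {G : Type*} [CommGroup G] [Fintype G] {q : ℕ} [Fact q.Prime]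
    (P : Sylow q G) {w : G} {m : ℕ} (h : orderOf w ∣ q ^ m) : w ∈ P := by
  have hp : IsPGroup q (zpowers w) := by
    obtain ⟨a, _, ha⟩ := (Nat.dvd_prime_pow (Fact.out)).1 h
    exact IsPGroup.of_card (by rw [Nat.card_zpowers, ha])
  obtain ⟨Q, hQ⟩ := hp.exists_le_sylow
  obtain ⟨g, hg⟩ := MulAction.exists_smul_eq G Q P
  rw [Sylow.smul_eq_of_normal] at hg
  rw [← hg]
  exact hQ (mem_zpowers w)

/-- Theorem 1.3(iii) (main-3(iii)): `G` finite non-cyclic abelian of order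
`p₀^{n₀} p₁^{n₁} p₂^{n₂}` with `3 ≤ p₀ < p₁ < p₂`, where exactly the Sylow subgroup `P k`
is non-cyclic; then `P i ⊔ P j` (`{i,j,k} = {0,1,2}`) is the unique minimum cut-set of the
power graph and `κ(P(G)) = p_i^{n_i} p_j^{n_j}`. -/
theorem statement_6 {G : Type*} [CommGroup G] [Fintype G] (hnc : ¬ IsCyclic G)
    (p n : Fin 3 → ℕ) (hp : ∀ t, (p t).Prime) (hmono : StrictMono p)
    (hp0 : 3 ≤ p 0) (hn : ∀ t, 1 ≤ n t)
    (hcard : Nat.card G = p 0 ^ n 0 * p 1 ^ n 1 * p 2 ^ n 2)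
    (P : ∀ t, Sylow (p t) G)
    (i j k : Fin 3) (hij : i ≠ j) (hik : i ≠ k) (hjk : j ≠ k)
    (hknc : ¬ IsCyclic ↥((P k : Subgroup G)))
    (hcyc : ∀ t, t ≠ k → IsCyclic ↥((P t : Subgroup G))) :
    IsMinimumCutSet ((((P i : Subgroup G) ⊔ (P j : Subgroup G)) : Subgroup G) : Set G) ∧
    (∀ X : Set G, IsMinimumCutSet X →
      X = ((((P i : Subgroup G) ⊔ (P j : Subgroup G)) : Subgroup G) : Set G)) ∧
    kappa G = p i ^ n i * p j ^ n j ∧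
    Nat.card ↥((P i : Subgroup G) ⊔ (P j : Subgroup G)) = p i ^ n i * p j ^ n j := by
  classical
  haveI hfac : ∀ t : Fin 3, Fact (p t).Prime := fun t => ⟨hp t⟩
  have hinj : Function.Injective p := hmono.injective
  have hple : ∀ t, 3 ≤ p t := fun t => le_trans hp0 (hmono.monotone (Fin.zero_le t))
  have hpne : ∀ s t : Fin 3, s ≠ t → p s ≠ p t := fun s t h he => h (hinj he)
  have hpow_ne : ∀ t, p t ^ n t ≠ 0 := fun t => pow_ne_zero _ (hp t).pos.ne'
  have hfact : ∀ t, (Nat.card G).factorization (p t) = n t := by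
    intro t
    rw [hcard, Nat.factorization_mul (mul_ne_zero (hpow_ne 0) (hpow_ne 1)) (hpow_ne 2),
      Nat.factorization_mul (hpow_ne 0) (hpow_ne 1),
      (hp 0).factorization_pow, (hp 1).factorization_pow, (hp 2).factorization_pow]
    simp only [Finsupp.add_apply, Finsupp.single_apply]
    fin_cases t <;>
      simp [hpne 0 1 (by decide), hpne 0 2 (by decide), hpne 1 2 (by decide),
        hpne 1 0 (by decide), hpne 2 0 (by decide), hpne 2 1 (by decide)]
  have hcardP : ∀ t, Nat.card (P t : Subgroup G) = p t ^ n t := by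
    intro t
    rw [Sylow.card_eq_multiplicity, hfact t]
  obtain ⟨x, hxmem, hxz, hxord⟩ := exists_zpowers_eq ((P i : Subgroup G)) (hcyc i hik)
  obtain ⟨y, hymem, hyz, hyord⟩ := exists_zpowers_eq ((P j : Subgroup G)) (hcyc j hjk)
  rw [hcardP i] at hxord
  rw [hcardP j] at hyord
  have hcopij : (p i ^ n i).Coprime (p j ^ n j) :=
    Nat.Coprime.pow (n i) (n j) ((Nat.coprime_primes (hp i) (hp j)).2 (hpne i j hij))
  have hg0ord : orderOf (x * y) = p i ^ n i * p j ^ n j := by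
    rw [(Commute.all x y).orderOf_mul_eq_mul_orderOf_of_coprime
      (by rw [hxord, hyord]; exact hcopij), hxord, hyord]
  have hsup : zpowers (x * y) = (P i : Subgroup G) ⊔ (P j : Subgroup G) := by
    apply le_antisymm
    · exact zpowers_le.2 (mul_mem (Subgroup.mem_sup_left hxmem) (Subgroup.mem_sup_right hymem))
    · apply sup_le
      · rw [← hxz]
        apply zpowers_le.2
        obtain ⟨t, ht⟩ := Nat.chineseRemainder hcopij 1 0
        refine mem_zpowers_iff_pow'.2 ⟨t, ?_⟩
        rw [mul_pow]
        have h1 : x ^ t = x := by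
          have := (pow_eq_pow_iff_modEq (x := x) (n := t) (m := 1)).2 (by rw [hxord]; exact ht.1)
          simpa using this
        have h2 : y ^ t = 1 := by
          apply orderOf_dvd_iff_pow_eq_one.1
          rw [hyord]
          exact Nat.modEq_zero_iff_dvd.1 ht.2
        rw [h1, h2, mul_one]
      · rw [← hyz]
        apply zpowers_le.2
        obtain ⟨t, ht⟩ := Nat.chineseRemainder hcopij 0 1
        refine mem_zpowers_iff_pow'.2 ⟨t, ?_⟩
        rw [mul_pow]
        have h1 : y ^ t = y := by
          have := (pow_eq_pow_iff_modEq (x := y) (n := t) (m := 1)).2 (by rw [hyord]; exact ht.2)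
          simpa using this
        have h2 : x ^ t = 1 := by
          apply orderOf_dvd_iff_pow_eq_one.1
          rw [hxord]
          exact Nat.modEq_zero_iff_dvd.1 ht.1
        rw [h1, h2, one_mul]
  have hCmem : ∀ z : G, orderOf z ∣ p i ^ n i * p j ^ n j → z ∈ zpowers (x * y) := by
    intro z hz
    rw [hsup]
    obtain ⟨ei, hei⟩ := Nat.chineseRemainder hcopij 1 0
    obtain ⟨ej, hej⟩ := Nat.chineseRemainder hcopij 0 1
    have hzsplit : z ^ ei * z ^ ej = z := by
      rw [← pow_add]
      have h1 : ei + ej ≡ 1 [MOD p i ^ n i] := by simpa using hei.1.add hej.1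
      have h2 : ei + ej ≡ 1 [MOD p j ^ n j] := by simpa using hei.2.add hej.2
      have h3 := (Nat.modEq_and_modEq_iff_modEq_mul hcopij).1 ⟨h1, h2⟩
      have := (pow_eq_pow_iff_modEq (x := z) (n := ei + ej) (m := 1)).2 (Nat.ModEq.of_dvd hz h3)
      simpa using this
    have hzi : z ^ ei ∈ (P i : Subgroup G) := by
      apply mem_sylow_of_orderOf_dvd (P i) (m := n i)
      apply orderOf_dvd_of_pow_eq_one
      rw [← pow_mul]
      have hd : p i ^ n i * p j ^ n j ∣ ei * p i ^ n i := by
        obtain ⟨u, hu⟩ := Nat.modEq_zero_iff_dvd.1 hei.2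
        exact ⟨u, by rw [hu]; ring⟩
      exact orderOf_dvd_iff_pow_eq_one.1 (hz.trans hd)
    have hzj : z ^ ej ∈ (P j : Subgroup G) := by
      apply mem_sylow_of_orderOf_dvd (P j) (m := n j)
      apply orderOf_dvd_of_pow_eq_one
      rw [← pow_mul]
      have hd : p i ^ n i * p j ^ n j ∣ ej * p j ^ n j := by
        obtain ⟨u, hu⟩ := Nat.modEq_zero_iff_dvd.1 hej.1
        exact ⟨u, by rw [hu]; ring⟩
      exact orderOf_dvd_iff_pow_eq_one.1 (hz.trans hd)
    rw [← hzsplit]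
    exact mul_mem (Subgroup.mem_sup_left hzi) (Subgroup.mem_sup_right hzj)
  have hKmem : ∀ z : G, orderOf z ∣ p k ^ n k → z ∈ (P k : Subgroup G) :=
    fun z hzz => mem_sylow_of_orderOf_dvd (P k) hzz
  have htot : p i ^ n i * p j ^ n j < 2 * Nat.totient (p i ^ n i * p j ^ n j) := by
    rw [Nat.totient_mul hcopij, Nat.totient_prime_pow (hp i) (hn i),
      Nat.totient_prime_pow (hp j) (hn j)]
    have hcore : p i * p j < 2 * ((p i - 1) * (p j - 1)) := by
      have h3i := hple i
      have h3j := hple j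
      have hne := hpne i j hij
      obtain ⟨ui, hui⟩ := (hp i).odd_of_ne_two (by omega)
      obtain ⟨uj, huj⟩ := (hp j).odd_of_ne_two (by omega)
      obtain ⟨si, hsi⟩ : ∃ s, p i = s + 1 := ⟨p i - 1, by omega⟩
      obtain ⟨sj, hsj⟩ : ∃ s, p j = s + 1 := ⟨p j - 1, by omega⟩
      have e1 : p i - 1 = si := by omega
      have e2 : p j - 1 = sj := by omega
      rw [e1, e2, hsi, hsj]
      rcases lt_or_gt_of_ne hne with h | h
      · have h5 : 5 ≤ p j := by omega
        have hsi2 : 2 ≤ si := by omega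
        have hsj2 : 4 ≤ sj := by omega
        nlinarith
      · have h5 : 5 ≤ p i := by omega
        have hsi2 : 4 ≤ si := by omega
        have hsj2 : 2 ≤ sj := by omega
        nlinarith
    have hi1 : p i ^ n i = p i ^ (n i - 1) * p i := by
      rw [← pow_succ, Nat.sub_add_cancel (hn i)]
    have hj1 : p j ^ n j = p j ^ (n j - 1) * p j := by
      rw [← pow_succ, Nat.sub_add_cancel (hn j)]
    have hpos : 0 < p i ^ (n i - 1) * p j ^ (n j - 1) :=
      Nat.mul_pos (pow_pos (hp i).pos _) (pow_pos (hp j).pos _)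
    calc p i ^ n i * p j ^ n j
        = (p i ^ (n i - 1) * p j ^ (n j - 1)) * (p i * p j) := by rw [hi1, hj1]; ring
      _ < (p i ^ (n i - 1) * p j ^ (n j - 1)) * (2 * ((p i - 1) * (p j - 1))) :=
          mul_lt_mul_of_pos_left hcore hpos
      _ = 2 * (p i ^ (n i - 1) * (p i - 1) * (p j ^ (n j - 1) * (p j - 1))) := by ring
  have hcopNM : (p i ^ n i * p j ^ n j).Coprime (p k ^ n k) :=
    Nat.Coprime.mul
      (Nat.Coprime.pow (n i) (n k) ((Nat.coprime_primes (hp i) (hp k)).2 (hpne i k hik)))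
      (Nat.Coprime.pow (n j) (n k) ((Nat.coprime_primes (hp j) (hp k)).2 (hpne j k hjk)))
  have hGcard : Nat.card G = p i ^ n i * p j ^ n j * p k ^ n k := by
    have huniv : ({i, j, k} : Finset (Fin 3)) = Finset.univ := by
      apply Finset.eq_univ_of_card
      rw [Finset.card_insert_of_notMem (by simp [hij, hik]),
        Finset.card_insert_of_notMem (by simp [hjk]), Finset.card_singleton]
      simp
    have hprod : ∀ f : Fin 3 → ℕ, f i * f j * f k = ∏ t, f t := by
      intro f
      rw [← huniv, Finset.prod_insert (by simp [hij, hik]),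
        Finset.prod_insert (by simp [hjk]), Finset.prod_singleton, mul_assoc]
    rw [hcard, ← Fin.prod_univ_three (fun t => p t ^ n t), ← hprod (fun t => p t ^ n t)]
  have hN1 : 1 ≤ p i ^ n i * p j ^ n j :=
    Nat.one_le_iff_ne_zero.2 (mul_ne_zero (hpow_ne i) (hpow_ne j))
  obtain ⟨h1, h2, h3⟩ := crux (p k) (hp k) (hple k) (n k) (hn k) (p k ^ n k) rfl
    (p i ^ n i * p j ^ n j) hN1 (x * y) hg0ord ((P k : Subgroup G)) htot hcopNM
    (hcardP k) hGcard hknc hKmem hCmem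
  rw [hsup] at h1 h2
  refine ⟨h1, h2, h3, ?_⟩
  rw [← hsup, Nat.card_zpowers, hg0ord]
end

section
/- Let G be a non-cyclic group (not necessarily finite) and let M be a maximal cyclic subgroup of G. Set A = G \ M and B = M \ M̃ (the set of generators of M). Then (A, B) is a separation of the induced subgraph P(G \ M̃) of the power graph; in particular, M̃ is a cut-set of P(G). -/

lemma sep_disconnected {G : Type*} [Group G] {S A B : Set G}
    (h : IsSeparationOn S A B) : ¬ ((powerGraph G).induce S).Preconnected := by
  obtain ⟨⟨a, ha⟩, ⟨b, hb⟩, hdisj, hunion, hedge⟩ := h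
  intro hpc
  have haS : a ∈ S := hunion ▸ Or.inl ha
  have hbS : b ∈ S := hunion ▸ Or.inr hb
  have key : ∀ (u v : S), ((powerGraph G).induce S).Reachable u v →
      (u : G) ∈ A → (v : G) ∈ A := by
    intro u v hr
    obtain ⟨w⟩ := hr
    induction w with
    | nil => exact id
    | cons hadj p ih =>
      rename_i x y z
      intro hx
      apply ih
      have hyS : (y : G) ∈ A ∪ B := hunion ▸ y.2
      rcases hyS with hyA | hyB
      · exact hyA
      · exact absurd hadj (hedge _ hx _ hyB)
  have := key ⟨a, haS⟩ ⟨b, hbS⟩ (hpc _ _) ha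
  exact (hdisj.ne_of_mem this hb) rfl

/-- Proposition (all-group): for a non-cyclic group `G` and a maximal cyclic subgroup `M`,
the pair `(G \ M, M \ M̃)` is a separation of the induced subgraph `P(G \ M̃)` of the power
graph; in particular `M̃` is a cut-set of `P(G)`. -/
theorem statement_7 {G : Type*} [Group G] (hnc : ¬ IsCyclic G)
    (M : Subgroup G) (hM : IsMaxCyclic M) :
    IsSeparationOn ((nonGens M)ᶜ) ((M : Set G)ᶜ) ((M : Set G) \ nonGens M) ∧
    IsCutSet (nonGens M) := by
  obtain ⟨⟨g, hg⟩, hmax⟩ := hM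
  have hsep : IsSeparationOn ((nonGens M)ᶜ) ((M : Set G)ᶜ) ((M : Set G) \ nonGens M) := by
    refine ⟨?_, ?_, ?_, ?_, ?_⟩
    · by_contra hne
      rw [Set.not_nonempty_iff_eq_empty, Set.compl_empty_iff] at hne
      exact hnc ⟨g, fun x => by
        have : x ∈ M := by rw [← SetLike.mem_coe, hne]; trivial
        rwa [hg] at this⟩
    · refine ⟨g, ?_, ?_⟩
      · rw [hg]; exact Subgroup.mem_zpowers g
      · intro hgn
        exact hgn.2 hg.symm
    · exact Set.disjoint_left.mpr fun x hx hx2 => hx hx2.1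
    · ext x
      simp only [Set.mem_union, Set.mem_compl_iff, Set.mem_diff, SetLike.mem_coe,
        nonGens, Set.mem_setOf_eq, not_and, not_ne_iff, not_not]
      tauto
    · rintro a ha b ⟨hbM, hbn⟩ ⟨hne, hadj | hadj⟩
      · -- a ∈ zpowers b ≤ M
        have hbz : Subgroup.zpowers b = M := by
          by_contra hc
          exact hbn ⟨hbM, hc⟩
        exact ha (by rw [← hbz]; exact hadj)
      · -- b ∈ zpowers a, then M ≤ zpowers a, maximality ⟹ a ∈ M
        have hbz : Subgroup.zpowers b = M := by
          by_contra hc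
          exact hbn ⟨hbM, hc⟩
        have hle : M ≤ Subgroup.zpowers a := by
          rw [← hbz]
          exact Subgroup.zpowers_le.mpr hadj
        have := hmax (Subgroup.zpowers a) ⟨a, rfl⟩ hle
        exact ha (by rw [this]; exact Subgroup.mem_zpowers a)
  exact ⟨hsep, sep_disconnected hsep⟩
end

section
/- Let G be a non-cyclic group (not necessarily finite). For every maximal cyclic subgroup M of G, the set M̄, defined as the union of the sets M ∩ ⟨y⟩ over all y ∈ G \ M, is a cut-set of the power graph P(G). -/
/-- Proposition (M-bar): for a non-cyclic group `G` and a maximal cyclic subgroup `M`,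
the set `M̄ = ⋃_{y ∈ G \ M} (M ∩ ⟨y⟩)` is a cut-set of the power graph `P(G)`. -/
theorem statement_8 {G : Type*} [Group G] (hnc : ¬ IsCyclic G)
    (M : Subgroup G) (hM : IsMaxCyclic M) :
    IsCutSet (Mbar M) := by
  obtain ⟨x, hx⟩ := hM.1
  have hxM : x ∈ M := hx ▸ Subgroup.mem_zpowers x
  -- M ≠ ⊤
  have hMne : (M : Set G) ≠ Set.univ := by
    intro h
    apply hnc
    refine ⟨⟨x, fun g => ?_⟩⟩
    have : g ∈ M := by
      have : g ∈ (M : Set G) := h ▸ Set.mem_univ g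
      exact this
    rw [hx] at this; exact this
  obtain ⟨y, hyM⟩ : ∃ y, y ∉ M := by
    by_contra h; push_neg at h
    exact hMne (Set.eq_univ_of_forall h)
  -- Mbar ⊆ M
  have hMbarM : ∀ z ∈ Mbar M, z ∈ M := by
    intro z hz
    simp only [Mbar, Set.mem_iUnion] at hz
    obtain ⟨w, _, hzw⟩ := hz
    exact hzw.1
  -- x ∉ Mbar
  have hxMbar : x ∉ Mbar M := by
    intro h
    simp only [Mbar, Set.mem_iUnion] at h
    obtain ⟨w, hwM, hxw⟩ := h
    have hle : M ≤ Subgroup.zpowers w := by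
      rw [hx]
      exact (Subgroup.zpowers_le).mpr hxw.2
    have := hM.2 (Subgroup.zpowers w) ⟨w, rfl⟩ hle
    exact hwM (this ▸ Subgroup.mem_zpowers w)
  have hyMbar : y ∉ Mbar M := fun h => hyM (hMbarM y h)
  intro hpre
  have hreach := hpre ⟨x, hxMbar⟩ ⟨y, hyMbar⟩
  obtain ⟨p⟩ := hreach
  -- invariant: vertices along the walk stay in M
  have key : ∀ (u v : ((Mbar M)ᶜ : Set G)),
      ((powerGraph G).induce ((Mbar M)ᶜ : Set G)).Adj u v → (u : G) ∈ M → (v : G) ∈ M := by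
    rintro ⟨u, hu⟩ ⟨v, hv⟩ hadj huM
    have hadj' : (powerGraph G).Adj u v := hadj
    rcases hadj'.2 with h | h
    · by_contra hvM
      apply hu
      simp only [Mbar, Set.mem_iUnion]
      exact ⟨v, hvM, huM, h⟩
    · obtain ⟨n, rfl⟩ := h
      exact M.zpow_mem huM n
  have : ∀ {a b : ((Mbar M)ᶜ : Set G)}
      (q : ((powerGraph G).induce ((Mbar M)ᶜ : Set G)).Walk a b),
      (a : G) ∈ M → (b : G) ∈ M := by
    intro a b q
    induction q with
    | nil => exact id
    | cons h _ ih => exact fun ha => ih (key _ _ h ha)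
  exact hyM (this p hxM)
end

section
/- Let G be a non-cyclic group and let X be a minimal cut-set of the power graph P(G). Then the following are equivalent: (1) X contains no element which generates a maximal cyclic subgroup of G; (2) the induced subgraph P(M \ X) is connected for every maximal cyclic subgroup M of G. -/
/-- Proposition (gen-connected): for a non-cyclic group `G` and a minimal cut-set `X` of its
power graph, the following are equivalent: (1) no element of `X` generates a maximal cyclic
subgroup of `G`; (2) `P(M \ X)` is connected for every maximal cyclic subgroup `M`. -/
theorem statement_9 {G : Type*} [Group G] (hnc : ¬ IsCyclic G)
    (X : Set G) (hX : IsMinimalCutSet X) :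
    (∀ x ∈ X, ¬ IsMaxCyclic (Subgroup.zpowers x)) ↔
    (∀ M : Subgroup G, IsMaxCyclic M →
      ((powerGraph G).induce ((M : Set G) \ X)).Connected) := by
  constructor
  · -- (1) → (2)
    intro h1 M hM
    obtain ⟨⟨m, rfl⟩, hmax⟩ := hM
    have hmX : m ∉ X := fun hx => h1 m hx ⟨⟨m, rfl⟩, hmax⟩
    have hmem : m ∈ ((Subgroup.zpowers m : Subgroup G) : Set G) \ X :=
      ⟨Subgroup.mem_zpowers m, hmX⟩
    have hstar : ∀ w : ↥(((Subgroup.zpowers m : Subgroup G) : Set G) \ X),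
        ((powerGraph G).induce (((Subgroup.zpowers m : Subgroup G) : Set G) \ X)).Reachable
          w ⟨m, hmem⟩ := by
      intro w
      by_cases hw : (w : G) = m
      · exact (show w = (⟨m, hmem⟩ : _) from Subtype.ext hw) ▸ SimpleGraph.Reachable.refl _
      · exact SimpleGraph.Adj.reachable (show (powerGraph G).Adj (w : G) m from
          ⟨hw, Or.inl w.2.1⟩)
    haveI : Nonempty ↥(((Subgroup.zpowers m : Subgroup G) : Set G) \ X) := ⟨⟨m, hmem⟩⟩
    exact ⟨fun u v => (hstar u).trans (hstar v).symm⟩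
  · -- (2) → (1)
    intro h2 x hx hmax
    set M : Subgroup G := Subgroup.zpowers x with hMdef
    have hconn := h2 M hmax
    have hsub : (M : Set G) \ X ⊆ Xᶜ := fun y hy => hy.2
    -- hom from induce (M \ X) into induce Xᶜ
    let f : ((powerGraph G).induce ((M : Set G) \ X)) →g ((powerGraph G).induce Xᶜ) :=
      ⟨fun u => ⟨u, hsub u.2⟩, fun h => h⟩
    have hMXreach : ∀ u v : ↥((M : Set G) \ X),
        ((powerGraph G).induce Xᶜ).Reachable ⟨u, hsub u.2⟩ ⟨v, hsub v.2⟩ :=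
      fun u v => (hconn.preconnected u v).map f
    obtain ⟨b₀⟩ := hconn.nonempty
    -- main argument: no vertex of Xᶜ can fail to reach b₀'
    have main : ∀ c : ↥(Xᶜ : Set G),
        ¬ ((powerGraph G).induce Xᶜ).Reachable c ⟨b₀, hsub b₀.2⟩ → False := by
      intro c hc
      have hnotcut : ((powerGraph G).induce (X \ {x})ᶜ).Preconnected := by
        have := hX.2 x hx
        unfold IsCutSet at this
        exact not_not.mp this
      have hcx : (c : G) ≠ x := fun h => c.2 (h ▸ hx)
      have hcmem : (c : G) ∈ (X \ {x})ᶜ := fun h => c.2 h.1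
      have hbx : (b₀ : G) ≠ x := fun h => b₀.2.2 (h ▸ hx)
      have hbmem : (b₀ : G) ∈ (X \ {x})ᶜ := fun h => b₀.2.2 h.1
      obtain ⟨p⟩ := hnotcut ⟨c, hcmem⟩ ⟨b₀, hbmem⟩
      -- invariant along the walk
      have key : ∀ (u v : ↥((X \ {x})ᶜ : Set G))
          (p : ((powerGraph G).induce (X \ {x})ᶜ).Walk u v),
          ((u : G) ≠ x ∧ ∃ h : (u : G) ∈ Xᶜ,
            ((powerGraph G).induce Xᶜ).Reachable c ⟨u, h⟩) →
          ((v : G) ≠ x ∧ ∃ h : (v : G) ∈ Xᶜ,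
            ((powerGraph G).induce Xᶜ).Reachable c ⟨v, h⟩) := by
        intro u v p
        induction p with
        | nil => exact id
        | @cons u w v hadj p ih =>
          rintro ⟨hux, hu, hreach⟩
          apply ih
          have hadj' : (powerGraph G).Adj (u : G) (w : G) := hadj
          have hwx : (w : G) ≠ x := by
            intro hwx
            -- then u is adjacent to x, so u ∈ M
            have huM : (u : G) ∈ M := by
              rcases hadj'.2 with h | h
              · rw [hwx] at h; exact h
              · rw [hwx] at h
                have hle : M ≤ Subgroup.zpowers (u : G) :=
                  (Subgroup.zpowers_le).mpr h
                have := hmax.2 (Subgroup.zpowers (u : G)) ⟨(u : G), rfl⟩ hle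
                rw [this]
                exact Subgroup.mem_zpowers _
            have huMX : (u : G) ∈ (M : Set G) \ X := ⟨huM, hu⟩
            have : ((powerGraph G).induce Xᶜ).Reachable ⟨u, hu⟩ ⟨b₀, hsub b₀.2⟩ :=
              hMXreach ⟨(u : G), huMX⟩ b₀
            exact hc (hreach.trans this)
          have hwX : (w : G) ∈ Xᶜ := by
            intro hwIn
            exact w.2 ⟨hwIn, hwx⟩
          have hKadj : ((powerGraph G).induce Xᶜ).Adj ⟨u, hu⟩ ⟨w, hwX⟩ := hadj'
          exact ⟨hwx, hwX, hreach.trans hKadj.reachable⟩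
      have := key _ _ p ⟨hcx, c.2, by
        convert SimpleGraph.Reachable.refl c⟩
      obtain ⟨-, hb, hr⟩ := this
      exact hc (by convert hr using 2)
    -- X is a cut-set, so there exist a, b not reachable
    have hcut := hX.1
    unfold IsCutSet SimpleGraph.Preconnected at hcut
    push_neg at hcut
    obtain ⟨a, b, hab⟩ := hcut
    by_cases ha : ((powerGraph G).induce Xᶜ).Reachable a ⟨b₀, hsub b₀.2⟩
    · by_cases hb : ((powerGraph G).induce Xᶜ).Reachable b ⟨b₀, hsub b₀.2⟩
      · exact hab (ha.trans hb.symm)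
      · exact main b hb
    · exact main a ha
end

section
/- Let G be a non-cyclic group in which every element is contained in some maximal cyclic subgroup of G, and let X be a cut-set of the power graph P(G). If there exists a subset D of G which is contained in every maximal cyclic subgroup of G but is not contained in X, then there exists a maximal cyclic subgroup M of G such that the induced subgraph P(M \ X) is disconnected. -/
/-- Proposition (existence-0): `G` non-cyclic, every element lying in some maximal cyclic
subgroup, `X` a cut-set of `P(G)`. If some `D ⊆ G` is contained in every maximal cyclic
subgroup but not in `X`, then `P(M \ X)` is disconnected for some maximal cyclic `M`. -/
theorem statement_10 {G : Type*} [Group G] (hnc : ¬ IsCyclic G)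
    (hall : ∀ g : G, ∃ M : Subgroup G, IsMaxCyclic M ∧ g ∈ M)
    (X : Set G) (hX : IsCutSet X)
    (D : Set G) (hD : ∀ M : Subgroup G, IsMaxCyclic M → D ⊆ (M : Set G))
    (hDX : ¬ D ⊆ X) :
    ∃ M : Subgroup G, IsMaxCyclic M ∧
      ¬ ((powerGraph G).induce ((M : Set G) \ X)).Preconnected := by
  obtain ⟨d, hdD, hdX⟩ := Set.not_subset.mp hDX
  simp only [IsCutSet, SimpleGraph.Preconnected, not_forall] at hX
  obtain ⟨u, v, huv⟩ := hX
  have hdc : d ∈ Xᶜ := hdX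
  -- d is not reachable from u or from v
  have key : ∃ w : (Xᶜ : Set G),
      ¬ ((powerGraph G).induce Xᶜ).Reachable ⟨d, hdc⟩ w := by
    by_contra h
    push_neg at h
    exact huv ((h u).symm.trans (h v))
  obtain ⟨⟨w, hwc⟩, hw⟩ := key
  obtain ⟨M, hM, hwM⟩ := hall w
  refine ⟨M, hM, ?_⟩
  have hdM : d ∈ M := hD M hM hdD
  intro hpre
  have hwX : w ∉ X := hwc
  have h1 : d ∈ (M : Set G) \ X := ⟨hdM, hdX⟩
  have h2 : w ∈ (M : Set G) \ X := ⟨hwM, hwX⟩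
  have hreach := hpre ⟨d, h1⟩ ⟨w, h2⟩
  let f : (powerGraph G).induce ((M : Set G) \ X) →g (powerGraph G).induce Xᶜ :=
    ⟨fun a => ⟨a.1, a.2.2⟩, fun h => h⟩
  have e1 : f ⟨d, h1⟩ = ⟨d, hdc⟩ := Subtype.ext rfl
  have e2 : f ⟨w, h2⟩ = ⟨w, hwc⟩ := Subtype.ext rfl
  exact hw (e1 ▸ e2 ▸ hreach.map f)
end

section
/- Let G be a finite nilpotent group whose order is divisible by the distinct primes p1 < p2 < ··· < pr, and let Pi be the Sylow pi-subgroup of G for each i. Then a subgroup M of G is a maximal cyclic subgroup of G if and only if M = M1 M2 ··· Mr (the subgroup generated by M1, …, Mr), where Mi = M ∩ Pi is a maximal cyclic subgroup of Pi for each i; equivalently, for any cyclic subgroups Mi ≤ Pi (1 ≤ i ≤ r), the product M1 M2 ··· Mr is a maximal cyclic subgroup of G if and only if each Mi is a maximal cyclic subgroup of Pi. -/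
section helpers
variable {ι : Type*} {β : Type*} [Monoid β]

lemma helperA (s : Finset ι) (f : ι → β) (comm : (s : Set ι).Pairwise (Function.onFun Commute f)) (m : ℕ) :
    (s.noncommProd f comm) ^ m =
      s.noncommProd (fun i => f i ^ m) (comm.mono' fun i j h => h.pow_pow m m) := by
  classical
  induction s using Finset.cons_induction_on with
  | empty => simp
  | @cons a s ha ih =>
    rw [Finset.noncommProd_cons, Finset.noncommProd_cons]
    have hc : Commute (f a) (s.noncommProd f (comm.mono (by simp))) :=
      Finset.noncommProd_commute _ _ _ _ fun x hx =>
        comm (by simp) (by simp [hx]) (fun h => ha (h ▸ hx))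
    rw [hc.mul_pow, ih]

lemma helperB (s : Finset ι) (f : ι → β) (comm : (s : Set ι).Pairwise (Function.onFun Commute f))
    {i : ι} (hi : i ∈ s) (h1 : ∀ j ∈ s, j ≠ i → f j = 1) :
    s.noncommProd f comm = f i := by
  classical
  rw [← Finset.mul_noncommProd_erase s hi f comm]
  exact (congrArg (f i * ·) (Finset.noncommProd_eq_pow_card _ _ _ 1
    (fun x hx => h1 x (Finset.mem_of_mem_erase hx) (Finset.ne_of_mem_erase hx)))).trans
    (by rw [one_pow, mul_one])

lemma helperC (s : Finset ι) (x : β) (m : ι → ℕ) (comm) :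
    s.noncommProd (fun i => x ^ m i) comm = x ^ (∑ i ∈ s, m i) := by
  classical
  induction s using Finset.cons_induction_on with
  | empty => simp
  | @cons a s ha ih =>
    rw [Finset.noncommProd_cons, ih, Finset.sum_cons, pow_add]

lemma helperD {G : Type*} [Group G] {K : Subgroup G} {g : G} (hg : g ∈ K) :
    (Subgroup.zpowers g).subgroupOf K = Subgroup.zpowers (⟨g, hg⟩ : K) := by
  ext a
  simp only [Subgroup.mem_subgroupOf, Subgroup.mem_zpowers_iff, Subtype.ext_iff,
    SubgroupClass.coe_zpow]

end helpers

/-- Lemma (max-cyclic): for a finite nilpotent group `G` of order `∏ pᵢ^{nᵢ}` with Sylow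
subgroups `P i`, a subgroup `M` is a maximal cyclic subgroup of `G` iff `M` is the product of
the subgroups `M ⊓ P i`, each maximal cyclic in `P i`; equivalently, for cyclic subgroups
`Mᵢ ≤ P i`, the product `⨆ i, Mᵢ` is maximal cyclic in `G` iff each `Mᵢ` is maximal cyclic
in `P i`. -/
theorem statement_11 {G : Type*} [Group G] [Fintype G] (hnil : Group.IsNilpotent G)
    (r : ℕ) (p n : Fin r → ℕ) (hp : ∀ i, (p i).Prime) (hmono : StrictMono p)
    (hn : ∀ i, 1 ≤ n i) (hcard : Nat.card G = ∏ i, p i ^ n i)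
    (P : ∀ i, Sylow (p i) G) :
    (∀ M : Subgroup G, IsMaxCyclic M ↔
      (M = (⨆ i, (M ⊓ (P i : Subgroup G))) ∧
        ∀ i, IsMaxCyclic ((M ⊓ (P i : Subgroup G)).subgroupOf (P i : Subgroup G)))) ∧
    (∀ Mi : Fin r → Subgroup G, (∀ i, Mi i ≤ (P i : Subgroup G)) →
      (∀ i, ∃ x : G, Mi i = Subgroup.zpowers x) →
      (IsMaxCyclic (⨆ i, Mi i) ↔
        ∀ i, IsMaxCyclic ((Mi i).subgroupOf (P i : Subgroup G)))) := by
  classical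
  have hinj : Function.Injective p := hmono.injective
  -- coprimality of the prime powers
  have hco : ∀ i j : Fin r, i ≠ j → Nat.Coprime (p i ^ n i) (p j ^ n j) := fun i j hij =>
    Nat.Coprime.pow _ _ ((Nat.coprime_primes (hp i) (hp j)).mpr (fun h => hij (hinj h)))
  -- Sylow subgroups are normal
  have hnormal : ∀ i, ((P i : Subgroup G)).Normal := fun i => by
    haveI := Fact.mk (hp i); haveI := hnil
    exact Sylow.normal_of_normalizerCondition normalizerCondition_of_isNilpotent (P i)
  -- elements of distinct Sylows commute
  have hcomm : ∀ i j : Fin r, i ≠ j → ∀ g ∈ (P i : Subgroup G), ∀ h ∈ (P j : Subgroup G),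
      Commute g h := fun i j hij g hg h hh => by
    haveI := Fact.mk (hp i); haveI := Fact.mk (hp j)
    refine Subgroup.commute_of_normal_of_disjoint _ _ (hnormal i) (hnormal j) ?_ g h hg hh
    exact IsPGroup.disjoint_of_ne (p i) (p j) (fun h => (fun hij' => hij hij') (hinj h))
      _ _ (P i).2 (P j).2
  -- order of elements of P i divides p i ^ n i
  have hordP : ∀ i, ∀ g ∈ (P i : Subgroup G), orderOf g ∣ p i ^ n i := by
    intro i g hg
    obtain ⟨m, hm⟩ := (P i).2 ⟨g, hg⟩
    have hm' : g ^ p i ^ m = 1 := by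
      have := congrArg (Subgroup.subtype _) hm
      simpa using this
    have h1 : orderOf g ∣ p i ^ m := orderOf_dvd_of_pow_eq_one hm'
    have h2 : orderOf g ∣ (p i ^ n i) * ∏ j ∈ Finset.univ.erase i, p j ^ n j := by
      rw [Finset.mul_prod_erase Finset.univ (fun j => p j ^ n j) (Finset.mem_univ i)]
      exact hcard ▸ orderOf_dvd_natCard g
    refine (Nat.Coprime.dvd_of_dvd_mul_right ?_ h2)
    refine Nat.Coprime.coprime_dvd_left h1 ?_
    refine Nat.Coprime.prod_right fun j hj => ?_
    exact Nat.Coprime.pow _ _ ((Nat.coprime_primes (hp i) (hp j)).mpr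
      (fun h => (Finset.ne_of_mem_erase hj) (hinj h).symm))
  -- p i - elements belong to P i
  have hmemP : ∀ i, ∀ g : G, g ^ p i ^ n i = 1 → g ∈ (P i : Subgroup G) := by
    intro i g hg
    haveI := Fact.mk (hp i)
    obtain ⟨m, hmle, hm⟩ := (Nat.dvd_prime_pow (hp i)).mp (orderOf_dvd_of_pow_eq_one hg)
    have hPg : IsPGroup (p i) (Subgroup.zpowers g) :=
      IsPGroup.of_card (by rw [Nat.card_zpowers, hm])
    obtain ⟨Q, hQ⟩ := hPg.exists_le_sylow
    haveI := Sylow.unique_of_normal (P i) (hnormal i)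
    have : Q = P i := Subsingleton.elim _ _
    exact this ▸ hQ (Subgroup.mem_zpowers g)
  -- CRT exponents
  have hkex : ∀ i : Fin r, ∃ k : ℕ, ∀ j : Fin r,
      k ≡ (if j = i then 1 else 0) [MOD p j ^ n j] := by
    intro i
    refine ⟨(Nat.chineseRemainderOfFinset (fun j => if j = i then 1 else 0)
      (fun j => p j ^ n j) Finset.univ (fun j _ => (Nat.pow_pos (hp j).pos).ne')
      (fun a _ b _ hab => hco a b hab)).1, fun j => ?_⟩
    exact (Nat.chineseRemainderOfFinset _ _ _ _ _).2 j (Finset.mem_univ j)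
  choose k hk using hkex
  have hk1 : ∀ i, k i ≡ 1 [MOD p i ^ n i] := fun i => by simpa using hk i i
  have hk0 : ∀ i j, j ≠ i → p j ^ n j ∣ k i := fun i j hji => by
    have := hk i j
    rw [if_neg hji] at this
    exact (Nat.modEq_zero_iff_dvd).mp this
  -- order-based consequences
  have hk_fix : ∀ i, ∀ g ∈ (P i : Subgroup G), g ^ k i = g := by
    intro i g hg
    have : g ^ k i = g ^ 1 := by
      rw [pow_eq_pow_iff_modEq]
      exact (hk1 i).of_dvd (hordP i g hg)
    simpa using this
  have hk_kill : ∀ i, ∀ g ∈ (P i : Subgroup G), ∀ j, j ≠ i → g ^ k j = 1 := by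
    intro i g hg j hji
    exact orderOf_dvd_iff_pow_eq_one.mp ((hordP i g hg).trans (hk0 j i hji.symm))
  -- every x ^ k i is a p i element
  have hpart_mem : ∀ i, ∀ x : G, x ^ k i ∈ (P i : Subgroup G) := by
    intro i x
    refine hmemP i _ ?_
    rw [← pow_mul]
    refine orderOf_dvd_iff_pow_eq_one.mp ((orderOf_dvd_natCard x).trans ?_)
    rw [hcard, ← Finset.mul_prod_erase Finset.univ (fun j => p j ^ n j) (Finset.mem_univ i),
      mul_comm (p i ^ n i)]
    refine Nat.mul_dvd_mul ?_ dvd_rfl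
    -- ∏_{j ≠ i} p j ^ n j ∣ k i
    have : ((∏ j ∈ Finset.univ.erase i, p j ^ n j : ℕ) : ℤ) ∣ (k i : ℤ) := by
      rw [Nat.cast_prod]
      refine Finset.prod_dvd_of_coprime ?_ ?_
      · intro a ha b hb hab
        simp only [Function.onFun]
        rw [Int.isCoprime_iff_gcd_eq_one]
        exact_mod_cast hco a b hab
      · intro j hj
        exact_mod_cast Int.natCast_dvd_natCast.mpr (hk0 i j (Finset.ne_of_mem_erase hj))
    exact_mod_cast Int.natCast_dvd_natCast.mp this
  -- x ^ (∑ k i) = x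
  have hxsum : ∀ x : G, x ^ (∑ i, k i) = x := by
    intro x
    have hmod : (∑ i, k i) ≡ 1 [MOD Nat.card G] := by
      rw [hcard, Nat.modEq_iff_dvd]
      have hdvd : ((∏ i, p i ^ n i : ℕ) : ℤ) ∣ ((∑ i, k i : ℕ) : ℤ) - 1 := by
        rw [Nat.cast_prod]
        refine Finset.prod_dvd_of_coprime ?_ ?_
        · intro a _ b _ hab
          simp only [Function.onFun]
          rw [Int.isCoprime_iff_gcd_eq_one]
          exact_mod_cast hco a b hab
        · intro j _
          have h1 : ∀ i : Fin r, ((p j ^ n j : ℕ) : ℤ) ∣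
              ((k i : ℤ) - (if j = i then 1 else 0)) := by
            intro i
            have hd := (hk i j).dvd
            have hd' := dvd_neg.mpr hd
            rw [neg_sub] at hd'
            push_cast at hd' ⊢
            exact hd'
          have h2 : ((∑ i, k i : ℕ) : ℤ) - 1 =
              ∑ i : Fin r, ((k i : ℤ) - (if j = i then 1 else 0)) := by
            rw [Finset.sum_sub_distrib]
            push_cast
            congr 1
            simp
          rw [h2]
          exact Finset.dvd_sum fun i _ => h1 i
      have := dvd_neg.mpr hdvd
      rw [neg_sub] at this
      exact_mod_cast this
    have : x ^ (∑ i, k i) = x ^ 1 := by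
      rw [pow_eq_pow_iff_modEq]
      exact hmod.of_dvd (orderOf_dvd_natCard x)
    simpa using this
  -- pairwise commutation for families in the Sylows
  have hcommw : ∀ w : Fin r → G, (∀ i, w i ∈ (P i : Subgroup G)) →
      ((Finset.univ : Finset (Fin r)) : Set (Fin r)).Pairwise (Function.onFun Commute w) :=
    fun w hw i _ j _ hij => hcomm i j hij (w i) (hw i) (w j) (hw j)
  -- powers of the product recover components
  have hz_pow : ∀ (w : Fin r → G) (hw : ∀ i, w i ∈ (P i : Subgroup G)) (j : Fin r),
      (Finset.univ.noncommProd w (hcommw w hw)) ^ k j = w j := by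
    intro w hw j
    rw [helperA]
    refine helperB _ _ _ (Finset.mem_univ j) (fun j' _ hj' => ?_) |>.trans
      (hk_fix j (w j) (hw j))
    exact hk_kill j' (w j') (hw j') j hj'.symm
  have hz_mem_sup : ∀ (w : Fin r → G) (hw : ∀ i, w i ∈ (P i : Subgroup G)),
      Finset.univ.noncommProd w (hcommw w hw) ∈ ⨆ i, Subgroup.zpowers (w i) := by
    intro w hw
    refine Finset.noncommProd_induction _ _ _ (· ∈ ⨆ i, Subgroup.zpowers (w i))
      (fun a b ha hb => mul_mem ha hb) (one_mem _) (fun i _ => ?_)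
    exact Subgroup.mem_iSup_of_mem i (Subgroup.mem_zpowers (w i))
  have hz_comp_mem : ∀ (w : Fin r → G) (hw : ∀ i, w i ∈ (P i : Subgroup G)) (i : Fin r),
      w i ∈ Subgroup.zpowers (Finset.univ.noncommProd w (hcommw w hw)) := by
    intro w hw i
    rw [← hz_pow w hw i]
    exact Subgroup.pow_mem _ (Subgroup.mem_zpowers _) _
  have hz_sup : ∀ (w : Fin r → G) (hw : ∀ i, w i ∈ (P i : Subgroup G)),
      (⨆ i, Subgroup.zpowers (w i)) =
        Subgroup.zpowers (Finset.univ.noncommProd w (hcommw w hw)) := by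
    intro w hw
    refine le_antisymm (iSup_le fun i => Subgroup.zpowers_le.mpr (hz_comp_mem w hw i))
      (Subgroup.zpowers_le.mpr (hz_mem_sup w hw))
  have hz_inf : ∀ (w : Fin r → G) (hw : ∀ i, w i ∈ (P i : Subgroup G)) (i : Fin r),
      Subgroup.zpowers (Finset.univ.noncommProd w (hcommw w hw)) ⊓ (P i : Subgroup G) =
        Subgroup.zpowers (w i) := by
    intro w hw i
    refine le_antisymm ?_ (le_inf (Subgroup.zpowers_le.mpr (hz_comp_mem w hw i))
      (Subgroup.zpowers_le.mpr (hw i)))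
    rintro g ⟨hg1, hg2⟩
    obtain ⟨t, rfl⟩ := Subgroup.mem_zpowers_iff.mp hg1
    set z := Finset.univ.noncommProd w (hcommw w hw) with hz
    have h1 : z ^ t = (z ^ t) ^ k i := (hk_fix i _ hg2).symm
    have h2 : (z ^ t) ^ k i = (z ^ k i) ^ t := by
      rw [← zpow_natCast, ← zpow_mul, mul_comm, zpow_mul, zpow_natCast]
    rw [h1, h2, hz_pow w hw i]
    exact Subgroup.zpow_mem _ (Subgroup.mem_zpowers _) _
  -- every element is the product of its parts
  have hx_parts : ∀ x : G,
      Finset.univ.noncommProd (fun i => x ^ k i) (hcommw _ (fun i => hpart_mem i x)) = x := by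
    intro x
    rw [helperC]
    exact hxsum x
  have hx_inf : ∀ (x : G) (i : Fin r),
      Subgroup.zpowers x ⊓ (P i : Subgroup G) = Subgroup.zpowers (x ^ k i) := by
    intro x i
    have := hz_inf (fun i => x ^ k i) (fun i => hpart_mem i x) i
    rwa [hx_parts x] at this
  have hx_sup : ∀ x : G, (⨆ i, Subgroup.zpowers (x ^ k i)) = Subgroup.zpowers x := by
    intro x
    have := hz_sup (fun i => x ^ k i) (fun i => hpart_mem i x)
    rwa [hx_parts x] at this
  -- the key equivalence
  have key : ∀ x : G, IsMaxCyclic (Subgroup.zpowers x) ↔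
      ∀ i, IsMaxCyclic ((Subgroup.zpowers (x ^ k i)).subgroupOf (P i : Subgroup G)) := by
    intro x
    constructor
    · intro hmax i
      rw [helperD (hpart_mem i x)]
      refine ⟨⟨_, rfl⟩, ?_⟩
      rintro N ⟨yb, rfl⟩ hle
      set y : G := (yb : G) with hy
      have hyP : y ∈ (P i : Subgroup G) := yb.2
      have hxk_mem : x ^ k i ∈ Subgroup.zpowers y := by
        have h1 : (⟨x ^ k i, hpart_mem i x⟩ : (P i : Subgroup G)) ∈ Subgroup.zpowers yb :=
          hle (Subgroup.mem_zpowers _)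
        obtain ⟨t, ht⟩ := Subgroup.mem_zpowers_iff.mp h1
        refine Subgroup.mem_zpowers_iff.mpr ⟨t, ?_⟩
        have := congrArg (Subgroup.subtype (P i : Subgroup G)) ht
        simpa using this
      set w : Fin r → G := fun j => if j = i then y else x ^ k j with hwdef
      have hw : ∀ j, w j ∈ (P j : Subgroup G) := by
        intro j
        rcases eq_or_ne j i with h | h
        · subst h; simp [hwdef]; exact hyP
        · simp [hwdef, if_neg h]; exact hpart_mem j x
      set z' := Finset.univ.noncommProd w (hcommw w hw) with hz'
      have hwi : w i = y := by simp [hwdef]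
      have hyz : y ∈ Subgroup.zpowers z' := hwi ▸ hz_comp_mem w hw i
      have hle' : Subgroup.zpowers x ≤ Subgroup.zpowers z' := by
        rw [← hx_sup x]
        refine iSup_le fun j => Subgroup.zpowers_le.mpr ?_
        rcases eq_or_ne j i with h | h
        · subst h
          exact Subgroup.zpowers_le.mpr hyz hxk_mem
        · have : w j = x ^ k j := by simp [hwdef, if_neg h]
          exact this ▸ hz_comp_mem w hw j
      have heq : Subgroup.zpowers x = Subgroup.zpowers z' := hmax.2 _ ⟨z', rfl⟩ hle'
      have hyx : y ∈ Subgroup.zpowers x := heq ▸ hyz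
      have hyxk : y ∈ Subgroup.zpowers (x ^ k i) := by
        rw [← hx_inf x i]; exact ⟨hyx, hyP⟩
      refine le_antisymm hle (Subgroup.zpowers_le.mpr ?_)
      rw [← helperD (hpart_mem i x)]
      exact Subgroup.mem_subgroupOf.mpr hyxk
    · intro hmaxs
      refine ⟨⟨x, rfl⟩, ?_⟩
      rintro N ⟨y, rfl⟩ hle
      have hyparts : ∀ j, y ^ k j ∈ Subgroup.zpowers x := by
        intro j
        have hj1 : Subgroup.zpowers (x ^ k j) ≤ Subgroup.zpowers (y ^ k j) := by
          rw [← hx_inf x j, ← hx_inf y j]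
          exact inf_le_inf_right _ hle
        have hj2 : (Subgroup.zpowers (x ^ k j)).subgroupOf (P j : Subgroup G) ≤
            (Subgroup.zpowers (y ^ k j)).subgroupOf (P j : Subgroup G) := fun a ha =>
          Subgroup.mem_subgroupOf.mpr (hj1 (Subgroup.mem_subgroupOf.mp ha))
        have heq := (hmaxs j).2 _ ⟨⟨y ^ k j, hpart_mem j y⟩, helperD (hpart_mem j y)⟩ hj2
        have hyin : (⟨y ^ k j, hpart_mem j y⟩ : (P j : Subgroup G)) ∈
            (Subgroup.zpowers (x ^ k j)).subgroupOf (P j : Subgroup G) := by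
          rw [heq]
          exact Subgroup.mem_subgroupOf.mpr (Subgroup.mem_zpowers _)
        have := Subgroup.mem_subgroupOf.mp hyin
        exact Subgroup.zpowers_le.mpr (Subgroup.pow_mem _ (Subgroup.mem_zpowers x) _) this
      refine le_antisymm hle (Subgroup.zpowers_le.mpr ?_)
      rw [← hx_parts y]
      refine Finset.noncommProd_induction _ _ _ (· ∈ Subgroup.zpowers x)
        (fun a b ha hb => mul_mem ha hb) (one_mem _) (fun j _ => hyparts j)
  -- final assembly
  constructor
  · intro M
    constructor
    · intro hM
      obtain ⟨x, rfl⟩ := hM.1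
      constructor
      · simp_rw [hx_inf x, hx_sup x]
      · intro i
        rw [hx_inf x i]
        exact (key x).mp hM i
    · rintro ⟨hMeq, hMi⟩
      choose xb hxb using fun i => (hMi i).1
      set w : Fin r → G := fun i => ((xb i : (P i : Subgroup G)) : G) with hwdef
      have hw : ∀ i, w i ∈ (P i : Subgroup G) := fun i => (xb i).2
      have hMPi : ∀ i, M ⊓ (P i : Subgroup G) = Subgroup.zpowers (w i) := by
        intro i
        have h1 : Subgroup.map (P i : Subgroup G).subtype
            ((M ⊓ (P i : Subgroup G)).subgroupOf (P i : Subgroup G)) = M ⊓ (P i : Subgroup G) := by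
          rw [Subgroup.subgroupOf_map_subtype, inf_assoc, inf_idem]
        rw [hxb i] at h1
        rw [← h1, MonoidHom.map_zpowers]
        rfl
      have hMz : M = Subgroup.zpowers (Finset.univ.noncommProd w (hcommw w hw)) := by
        rw [← hz_sup w hw]
        conv_lhs => rw [hMeq]
        exact iSup_congr hMPi
      rw [hMz]
      refine (key _).mpr fun i => ?_
      rw [hz_pow w hw i, ← hMPi i, ← Subgroup.inf_subgroupOf_right]
      rw [Subgroup.inf_subgroupOf_right]
      exact hMi i
  · intro Mi hle hcyc
    choose xg hxg using hcyc
    have hw : ∀ i, xg i ∈ (P i : Subgroup G) := fun i =>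
      hle i ((hxg i) ▸ Subgroup.mem_zpowers (xg i))
    have hsup : (⨆ i, Mi i) = Subgroup.zpowers (Finset.univ.noncommProd xg (hcommw xg hw)) := by
      rw [← hz_sup xg hw]
      exact iSup_congr hxg
    rw [hsup]
    rw [key _]
    refine forall_congr' fun i => ?_
    rw [hz_pow xg hw i, ← hxg i]
end

section
/- Let G be a finite non-cyclic nilpotent group and let C be a maximal cyclic subgroup of G of minimum possible order. Then |M̃| ≥ |C̃| for every maximal cyclic subgroup M of G, where M̃ denotes the set of non-generators of M. -/
section Aux

open Subgroup

set_option maxHeartbeats 1000000 in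
lemma aux_prime_dvd_orderOf {G : Type*} [Group G] [Fintype G]
    (hnil : Group.IsNilpotent G) (g : G) (hmax : IsMaxCyclic (Subgroup.zpowers g))
    {p : ℕ} (hp : p.Prime) (hpd : p ∣ Nat.card G) : p ∣ orderOf g := by
  classical
  by_contra hnd
  haveI : Fact p.Prime := ⟨hp⟩
  have hnormal : ∀ {q : ℕ} [Fact q.Prime] (P : Sylow q G), (P : Subgroup G).Normal := by
    intro q hq P
    have h := (isNilpotent_of_finite_tfae (G := G)).out 0 3
    exact h.mp hnil q hq P
  let e := Sylow.directProductOfNormal hnormal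
  have hG0 : Nat.card G ≠ 0 := Nat.card_pos.ne'
  have hpmem : p ∈ (Nat.card G).primeFactors := Nat.mem_primeFactors.mpr ⟨hp, hpd, hG0⟩
  set ps := (Nat.card G).primeFactors with hps
  let pp : ps := ⟨p, hpmem⟩
  set f := e.symm g with hf
  have hof : orderOf f = orderOf g := orderOf_injective e.symm.toMonoidHom e.symm.injective g
  have hcop : Nat.Coprime p (orderOf g) := hp.coprime_iff_not_dvd.mpr hnd
  have hfp : f pp = 1 := by
    funext P
    have h1 : orderOf (f pp) ∣ orderOf f :=
      orderOf_map_dvd (Pi.evalMonoidHom (fun q : ps => ∀ P : Sylow (q : ℕ) G, ↥(P : Subgroup G)) pp) f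
    have h2 : orderOf (f pp P) ∣ orderOf (f pp) :=
      orderOf_map_dvd (Pi.evalMonoidHom (fun P : Sylow (p : ℕ) G => ↥(P : Subgroup G)) P) (f pp)
    have h3 : orderOf (f pp P) ∣ orderOf g := (h2.trans h1).trans hof.dvd
    obtain ⟨k, hk⟩ := P.isPGroup' (f pp P)
    have h4 : orderOf (f pp P) ∣ p ^ k := orderOf_dvd_of_pow_eq_one hk
    have h5 : orderOf (f pp P) = 1 := Nat.eq_one_of_dvd_one
      ((hcop.pow_left k) ▸ Nat.dvd_gcd h4 h3)
    exact orderOf_eq_one_iff.mp h5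
  have hcardP : ∀ P : Sylow p G, p ∣ Nat.card ↥(P : Subgroup G) := by
    intro P
    have hc := Sylow.card_eq_multiplicity P
    rw [hc]
    exact dvd_pow_self p (hp.factorization_pos_of_dvd hG0 hpd).ne'
  choose v hv using fun P : Sylow p G => exists_prime_orderOf_dvd_card' p (hcardP P)
  have hvne : v ≠ 1 := by
    intro h
    have h0 := hv (default : Sylow p G)
    rw [h] at h0
    simp only [Pi.one_apply, orderOf_one] at h0
    exact hp.one_lt.ne h0
  have hvord : orderOf v = p := by
    apply orderOf_eq_prime _ hvne
    funext P
    rw [Pi.pow_apply, Pi.one_apply]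
    have h0 := pow_orderOf_eq_one (v P)
    rwa [hv P] at h0
  set u : ∀ q : ps, ∀ P : Sylow (q : ℕ) G, ↥(P : Subgroup G) := Pi.mulSingle pp v with hu
  have huord : orderOf u = p := by rw [hu, orderOf_piMulSingle, hvord]
  have hcomm : Commute f u := by
    show f * u = u * f
    funext q
    show f q * u q = u q * f q
    by_cases hq : q = pp
    · subst hq
      rw [hu, Pi.mulSingle_eq_same, hfp]
      group
    · rw [hu, Pi.mulSingle_eq_of_ne hq]
      group
  set y := e u with hy
  have hyord : orderOf y = p :=
    (orderOf_injective e.toMonoidHom e.injective u).trans huord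
  have hgy : Commute g y := by
    have h0 : Commute (e f) (e u) := hcomm.map e.toMonoidHom
    have h1 : e f = g := e.apply_symm_apply g
    rwa [h1] at h0
  have hco2 : Nat.Coprime (orderOf g) (orderOf y) := by
    rw [hyord]; exact hcop.symm
  obtain ⟨k, hk1, hk2⟩ := Nat.chineseRemainder hco2 1 0
  have hyk : y ^ (k : ℕ) = 1 := orderOf_dvd_iff_pow_eq_one.mp (by
    rw [hyord] at hk2 ⊢
    exact (Nat.modEq_zero_iff_dvd).mp hk2)
  have hgk : g ^ (k : ℕ) = g := by
    conv_rhs => rw [← pow_one g]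
    exact pow_eq_pow_iff_modEq.mpr hk1
  have hmem : g ∈ Subgroup.zpowers (g * y) := by
    refine Subgroup.mem_zpowers_iff.mpr ⟨((k : ℕ) : ℤ), ?_⟩
    rw [zpow_natCast, hgy.mul_pow, hyk, hgk, mul_one]
  have heq := hmax.2 (Subgroup.zpowers (g * y)) ⟨g * y, rfl⟩
    (Subgroup.zpowers_le.mpr hmem)
  have hcards : orderOf g = orderOf (g * y) := by
    rw [← Nat.card_zpowers, ← Nat.card_zpowers, heq]
  rw [hgy.orderOf_mul_eq_mul_orderOf_of_coprime hco2, hyord] at hcards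
  have h1 : orderOf g * 1 = orderOf g * p := by rw [mul_one]; exact hcards
  have h2 := Nat.eq_of_mul_eq_mul_left (orderOf_pos g) h1
  exact hp.one_lt.ne' h2.symm

/-- Counting non-generators of a cyclic subgroup. -/
lemma aux_nonGens_ncard {G : Type*} [Group G] [Fintype G] (g : G) :
    (nonGens (Subgroup.zpowers g)).ncard = orderOf g - (orderOf g).totient := by
  classical
  set M := Subgroup.zpowers g with hM
  set n := orderOf g with hn
  haveI : Fintype ↥M := Fintype.ofFinite _
  haveI : IsCyclic ↥M := by
    refine ⟨⟨⟨g, Subgroup.mem_zpowers g⟩, ?_⟩⟩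
    rintro ⟨x, hx⟩
    obtain ⟨k, hk⟩ := Subgroup.mem_zpowers_iff.mp hx
    exact Subgroup.mem_zpowers_iff.mpr ⟨k, Subtype.ext (by simpa using hk)⟩
  have hcard : Nat.card ↥M = n := Nat.card_zpowers g
  have hfin : Fintype.card ↥M = n := by rw [← Nat.card_eq_fintype_card, hcard]
  set Gen : Set G := {x | Subgroup.zpowers x = M} with hGen
  have hGenM : Gen ⊆ (M : Set G) := fun x hx => by
    rw [← hx]; exact Subgroup.mem_zpowers x
  have hEq : nonGens M = (M : Set G) \ Gen := by
    ext x
    simp only [nonGens, Set.mem_setOf_eq, Set.mem_diff, SetLike.mem_coe, hGen]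
  have horder : ∀ y : ↥M, orderOf (y : G) = orderOf y :=
    fun y => orderOf_injective M.subtype Subtype.coe_injective y
  have key : Gen = Subtype.val '' {y : ↥M | orderOf y = n} := by
    ext x
    constructor
    · intro hx
      have hx' : Subgroup.zpowers x = M := hx
      refine ⟨⟨x, hGenM hx⟩, ?_, rfl⟩
      have h1 : orderOf x = n := by rw [← Nat.card_zpowers x, hx', hcard]
      have h2 := horder ⟨x, hGenM hx⟩
      simp only [Set.mem_setOf_eq]
      rw [← h2]
      exact h1
    · rintro ⟨y, hy, rfl⟩
      have hor : orderOf (y : G) = n := by rw [horder y]; exact hy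
      have hle : Subgroup.zpowers (y : G) ≤ M := Subgroup.zpowers_le.mpr y.2
      have hs : (Subgroup.zpowers (y : G) : Set G) = (M : Set G) := by
        apply Set.eq_of_subset_of_ncard_le hle ?_ (Set.toFinite _)
        have e1 : (M : Set G).ncard = n := by
          rw [← Nat.card_coe_set_eq, ← hcard]
          rfl
        have e2 : (Subgroup.zpowers (y : G) : Set G).ncard = n := by
          rw [← Nat.card_coe_set_eq, ← hor, ← Nat.card_zpowers (y : G)]
          rfl
        rw [e1, e2]
      exact SetLike.coe_injective hs
  have hGencard : Gen.ncard = n.totient := by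
    rw [key, Set.ncard_image_of_injective _ Subtype.val_injective,
      ← Nat.card_coe_set_eq, Nat.card_eq_fintype_card]
    have h1 : Fintype.card {y : ↥M | orderOf y = n} =
        (Finset.univ.filter fun y : ↥M => orderOf y = n).card :=
      Fintype.card_subtype _
    rw [h1]
    exact IsCyclic.card_orderOf_eq_totient (by rw [hfin])
  rw [hEq, Set.ncard_diff hGenM, hGencard]
  have e1 : (M : Set G).ncard = n := by
    rw [← Nat.card_coe_set_eq, ← hcard]
    rfl
  rw [e1]

/-- Arithmetic: if `n ≤ m` have the same prime factors then `n - φ(n) ≤ m - φ(m)`. -/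
lemma aux_tot_sub_mono {n m : ℕ} (hn : 0 < n) (hnm : n ≤ m)
    (h : n.primeFactors = m.primeFactors) :
    n - n.totient ≤ m - m.totient := by
  set P := ∏ p ∈ n.primeFactors, p with hP
  set Q := ∏ p ∈ n.primeFactors, (p - 1) with hQ
  have hPpos : 0 < P := Finset.prod_pos fun p hp => (Nat.prime_of_mem_primeFactors hp).pos
  have h1 : n.totient * P = n * Q := Nat.totient_mul_prod_primeFactors n
  have h2 : m.totient * P = m * Q := by
    rw [hP, hQ, h]; exact Nat.totient_mul_prod_primeFactors m
  have hQP : Q ≤ P := Finset.prod_le_prod' fun p hp =>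
    Nat.sub_le p 1
  have key : (n - n.totient) * P ≤ (m - m.totient) * P := by
    rw [Nat.sub_mul, Nat.sub_mul, h1, h2, ← Nat.mul_sub_left_distrib,
      ← Nat.mul_sub_left_distrib]
    exact Nat.mul_le_mul_right _ hnm
  exact Nat.le_of_mul_le_mul_right key hPpos

end Aux

/-- Proposition (size-compare): `G` finite non-cyclic nilpotent, `C` a maximal cyclic subgroup
of minimum possible order; then `|M̃| ≥ |C̃|` for every maximal cyclic subgroup `M`. -/
theorem statement_12 {G : Type*} [Group G] [Fintype G]
    (hnil : Group.IsNilpotent G) (hnc : ¬ IsCyclic G)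
    (C : Subgroup G) (hC : IsMaxCyclic C)
    (hCmin : ∀ M : Subgroup G, IsMaxCyclic M → Nat.card ↥C ≤ Nat.card ↥M) :
    ∀ M : Subgroup G, IsMaxCyclic M → (nonGens C).ncard ≤ (nonGens M).ncard := by
  have hGne : Nat.card G ≠ 0 := Nat.card_pos.ne'
  have hpf : ∀ (g : G), IsMaxCyclic (Subgroup.zpowers g) →
      (orderOf g).primeFactors = (Nat.card G).primeFactors := by
    intro g hg
    apply Finset.Subset.antisymm
    · exact Nat.primeFactors_mono (Nat.card_eq_fintype_card (α := G) ▸ orderOf_dvd_card) hGne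
    · intro p hp
      rw [Nat.mem_primeFactors] at hp ⊢
      exact ⟨hp.1, aux_prime_dvd_orderOf hnil g hg hp.1 hp.2.1, (orderOf_pos g).ne'⟩
  obtain ⟨gC, rfl⟩ := hC.1
  intro M hM
  obtain ⟨gM, rfl⟩ := hM.1
  have hle : orderOf gC ≤ orderOf gM := by
    have := hCmin _ hM
    rwa [Nat.card_zpowers, Nat.card_zpowers] at this
  rw [aux_nonGens_ncard gC, aux_nonGens_ncard gM]
  exact aux_tot_sub_mono (orderOf_pos gC) hle ((hpf gC hC).trans (hpf gM hM).symm)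
end

section
/- Let G be a finite non-cyclic nilpotent group whose order is divisible by r ≥ 2 distinct primes p1 < ··· < pr, with Sylow subgroups P1, …, Pr. Let X be a cut-set of the power graph P(G) that contains no Sylow subgroup of G, and let (A, B) be a separation of P(G \ X). If P(M \ X) is connected for every maximal cyclic subgroup M of G, then for all 1 ≤ i ≠ j ≤ r, the sets Pi \ X and Pj \ X are either both contained in A or both contained in B. -/
lemma aux_mem_zpowers_mul {G : Type*} [Group G] {x y : G} (h : Commute x y)
    (hcop : Nat.Coprime (orderOf x) (orderOf y)) : x ∈ Subgroup.zpowers (x * y) := by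
  have hxm : (x * y) ^ (orderOf y) = x ^ (orderOf y) := by
    rw [h.mul_pow, pow_orderOf_eq_one, mul_one]
  obtain ⟨u, v, huv⟩ : ∃ u v : ℤ, (orderOf x) * u + (orderOf y) * v = 1 :=
    ⟨Nat.gcdA _ _, Nat.gcdB _ _, by
      have := Nat.gcd_eq_gcd_ab (orderOf x) (orderOf y)
      rw [hcop] at this; exact_mod_cast this.symm⟩
  refine Subgroup.mem_zpowers_iff.mpr ⟨(orderOf y : ℤ) * v, ?_⟩
  have : ((x * y) ^ (orderOf y : ℤ)) ^ v = (x ^ (orderOf y : ℤ)) ^ v := by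
    rw [zpow_natCast, zpow_natCast, hxm]
  rw [← zpow_mul] at this
  rw [this]
  conv_rhs => rw [← zpow_one x, ← huv]
  rw [zpow_add, zpow_mul, zpow_mul, zpow_natCast x (orderOf x), pow_orderOf_eq_one, one_zpow,
    one_mul]

lemma aux_exists_maxCyclic {G : Type*} [Group G] [Finite G] (z : G) :
    ∃ M : Subgroup G, IsMaxCyclic M ∧ Subgroup.zpowers z ≤ M := by
  set S : Set (Subgroup G) := {N | (∃ w, N = Subgroup.zpowers w) ∧ Subgroup.zpowers z ≤ N}
  obtain ⟨M, hMS, hmax⟩ := Set.Finite.exists_maximalFor id S (Set.toFinite S)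
    ⟨Subgroup.zpowers z, ⟨z, rfl⟩, le_rfl⟩
  exact ⟨M, ⟨hMS.1, fun N hN hMN => le_antisymm hMN (hmax ⟨hN, le_trans hMS.2 hMN⟩ hMN)⟩, hMS.2⟩

lemma aux_side_of_walk {V : Type*} {Γ : SimpleGraph V} {S A B : Set V}
    (hsub : S ⊆ A ∪ B) (hsep : ∀ a ∈ A, ∀ b ∈ B, ¬ Γ.Adj a b) :
    ∀ {x y : S}, (Γ.induce S).Walk x y → ((x : V) ∈ A ↔ (y : V) ∈ A) := by
  intro x y w
  induction w with
  | nil => exact Iff.rfl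
  | @cons u v w' h tail ih =>
    have hadj : Γ.Adj ↑u ↑v := h
    refine Iff.trans ?_ ih
    constructor
    · intro hu; by_contra hv
      exact hsep _ hu _ ((hsub v.2).resolve_left hv) hadj
    · intro hv; by_contra hu
      exact hsep _ hv _ ((hsub u.2).resolve_left hu) hadj.symm


/-- Proposition (contain): `G` finite non-cyclic nilpotent of order `∏ pᵢ^{nᵢ}` (`r ≥ 2`),
`X` a cut-set of `P(G)` containing no Sylow subgroup, `(A, B)` a separation of `P(G \ X)`.
If `P(M \ X)` is connected for every maximal cyclic subgroup `M`, then for `i ≠ j` the sets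
`P i \ X` and `P j \ X` are both contained in `A` or both contained in `B`. -/
theorem statement_13 {G : Type*} [Group G] [Fintype G]
    (hnil : Group.IsNilpotent G) (hnc : ¬ IsCyclic G)
    (r : ℕ) (hr : 2 ≤ r) (p n : Fin r → ℕ) (hp : ∀ i, (p i).Prime)
    (hmono : StrictMono p) (hn : ∀ i, 1 ≤ n i)
    (hcard : Nat.card G = ∏ i, p i ^ n i)
    (P : ∀ i, Sylow (p i) G)
    (X : Set G) (hX : IsCutSet X)
    (hXP : ∀ i, ¬ (((P i : Subgroup G) : Set G) ⊆ X))
    (A B : Set G) (hAB : IsSeparationOn Xᶜ A B)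
    (hcon : ∀ M : Subgroup G, IsMaxCyclic M →
      ((powerGraph G).induce ((M : Set G) \ X)).Connected) :
    ∀ i j : Fin r, i ≠ j →
      ((((P i : Subgroup G) : Set G) \ X ⊆ A ∧ ((P j : Subgroup G) : Set G) \ X ⊆ A) ∨
       (((P i : Subgroup G) : Set G) \ X ⊆ B ∧ ((P j : Subgroup G) : Set G) \ X ⊆ B)) := by
  obtain ⟨hAne, hBne, hd, hABu, hsep⟩ := hAB
  -- 1 ∈ X
  have h1X : (1 : G) ∈ X := by
    by_contra h1
    have h1' : (1 : G) ∈ A ∪ B := by rw [hABu]; exact h1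
    rcases h1' with h | h
    · obtain ⟨b, hb⟩ := hBne
      have hne : b ≠ 1 := by rintro rfl; exact Set.disjoint_left.mp hd h hb
      exact hsep 1 h b hb ⟨hne.symm, Or.inl (Subgroup.one_mem _)⟩
    · obtain ⟨a, ha⟩ := hAne
      have hne : a ≠ 1 := by rintro rfl; exact Set.disjoint_left.mp hd ha h
      exact hsep a ha 1 h ⟨hne, Or.inr (Subgroup.one_mem _)⟩
  -- Sylow subgroups are normal
  have hnorm : ∀ k, ((P k : Subgroup G)).Normal := by
    intro k
    haveI : Fact (p k).Prime := ⟨hp k⟩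
    have h4 : ∀ (q : ℕ) (_ : Fact q.Prime) (Q : Sylow q G), (↑Q : Subgroup G).Normal :=
      ((isNilpotent_of_finite_tfae (G := G)).out 0 3).mp hnil
    exact h4 (p k) ‹_› (P k)
  intro i j hij
  have hpne : p i ≠ p j := hmono.injective.ne hij
  haveI : Fact (p i).Prime := ⟨hp i⟩
  haveI : Fact (p j).Prime := ⟨hp j⟩
  have hdisj : Disjoint (P i : Subgroup G) (P j : Subgroup G) :=
    IsPGroup.disjoint_of_ne (p i) (p j) hpne _ _ (P i).isPGroup' (P j).isPGroup'
  -- key: elements of P i \ X and P j \ X are on the same side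
  have key : ∀ x ∈ ((P i : Subgroup G) : Set G) \ X, ∀ y ∈ ((P j : Subgroup G) : Set G) \ X,
      (x ∈ A ↔ y ∈ A) := by
    rintro x ⟨hxP, hxX⟩ y ⟨hyP, hyX⟩
    have hcomm : Commute x y :=
      Subgroup.commute_of_normal_of_disjoint _ _ (hnorm i) (hnorm j) hdisj x y hxP hyP
    -- coprime orders
    obtain ⟨a, ha⟩ := (P i).isPGroup' ⟨x, hxP⟩
    obtain ⟨b, hb⟩ := (P j).isPGroup' ⟨y, hyP⟩
    have hxo : orderOf x ∣ p i ^ a := by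
      apply orderOf_dvd_of_pow_eq_one
      have := congrArg (Subgroup.subtype _) ha
      simpa using this
    have hyo : orderOf y ∣ p j ^ b := by
      apply orderOf_dvd_of_pow_eq_one
      have := congrArg (Subgroup.subtype _) hb
      simpa using this
    have hcop : Nat.Coprime (orderOf x) (orderOf y) :=
      Nat.Coprime.coprime_dvd_right hyo (Nat.Coprime.coprime_dvd_left hxo
        ((((Nat.coprime_primes (hp i) (hp j)).mpr hpne)).pow _ _))
    have hxz : x ∈ Subgroup.zpowers (x * y) := aux_mem_zpowers_mul hcomm hcop
    have hyz : y ∈ Subgroup.zpowers (x * y) := by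
      have := aux_mem_zpowers_mul hcomm.symm hcop.symm
      rwa [← hcomm.eq] at this
    obtain ⟨M, hM, hle⟩ := aux_exists_maxCyclic (x * y)
    have hxM : x ∈ ((M : Subgroup G) : Set G) \ X := ⟨hle hxz, hxX⟩
    have hyM : y ∈ ((M : Subgroup G) : Set G) \ X := ⟨hle hyz, hyX⟩
    have hsub : ((M : Subgroup G) : Set G) \ X ⊆ A ∪ B := by
      rw [hABu]; intro t ht; exact ht.2
    exact ((hcon M hM).preconnected ⟨x, hxM⟩ ⟨y, hyM⟩).elim
      fun w => aux_side_of_walk hsub hsep w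
  -- conclude
  obtain ⟨x0, hx0P, hx0X⟩ := Set.not_subset.mp (hXP i)
  obtain ⟨y0, hy0P, hy0X⟩ := Set.not_subset.mp (hXP j)
  have hmemAB : ∀ t : G, t ∉ X → t ∈ A ∪ B := by intro t ht; rw [hABu]; exact ht
  by_cases hx0A : x0 ∈ A
  · left
    have hy0A : y0 ∈ A := (key x0 ⟨hx0P, hx0X⟩ y0 ⟨hy0P, hy0X⟩).mp hx0A
    exact ⟨fun x hx => (key x hx y0 ⟨hy0P, hy0X⟩).mpr hy0A,
      fun y hy => (key x0 ⟨hx0P, hx0X⟩ y hy).mp hx0A⟩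
  · right
    have hy0A : y0 ∉ A := fun h => hx0A ((key x0 ⟨hx0P, hx0X⟩ y0 ⟨hy0P, hy0X⟩).mpr h)
    refine ⟨fun x hx => ?_, fun y hy => ?_⟩
    · have : x ∉ A := fun h => hy0A ((key x hx y0 ⟨hy0P, hy0X⟩).mp h)
      exact (hmemAB x hx.2).resolve_left this
    · have : y ∉ A := fun h => hx0A ((key x0 ⟨hx0P, hx0X⟩ y hy).mpr h)
      exact (hmemAB y hy.2).resolve_left this
end

section
/- Let G be a finite nilpotent group having at least two non-cyclic Sylow subgroups. Then for every maximal cyclic subgroup M of G, the induced subgraph P(G \ M) of the power graph is connected; consequently, G \ M and M \ M̃ are exactly the two connected components of P(G \ M̃). -/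
open Subgroup

section AuxLemmas

variable {G : Type*} [Group G] [Fintype G]

omit [Fintype G] in
lemma aux_mem_zpowers_mul_s14 {u v : G} (h : Commute u v)
    (hco : Nat.Coprime (orderOf u) (orderOf v)) : u ∈ zpowers (u * v) := by
  obtain ⟨m, hm⟩ := exists_pow_eq_self_of_coprime (x := u) (n := orderOf v) hco.symm
  refine mem_zpowers_iff.mpr ⟨((orderOf v * m : ℕ) : ℤ), ?_⟩
  rw [zpow_natCast, pow_mul, h.mul_pow, pow_orderOf_eq_one, mul_one, hm]

lemma aux_exists_ppow (M : Subgroup G) :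
    ∀ (n : ℕ) (x : G), orderOf x < n → x ∉ M →
      ∃ (y : G) (p k : ℕ), p.Prime ∧ orderOf y = p ^ k ∧ y ∈ zpowers x ∧ y ∉ M := by
  intro n
  induction n with
  | zero => intro x hx; omega
  | succ n ih =>
    intro x hx hxM
    set m := orderOf x with hm
    have hm0 : m ≠ 0 := (orderOf_pos x).ne'
    have hm1 : m ≠ 1 := fun h => hxM (orderOf_eq_one_iff.mp (hm.symm.trans h) ▸ M.one_mem)
    have hp : m.minFac.Prime := Nat.minFac_prime hm1
    set p := m.minFac with hpdef
    set a := p ^ m.factorization p with hadef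
    set b := m / a with hbdef
    have hab : a * b = m := Nat.ordProj_mul_ordCompl_eq_self m p
    have hco : Nat.Coprime a b := (Nat.coprime_ordCompl hp hm0).pow_left _
    have ha1 : 1 < a := by
      have hfac : m.factorization p ≠ 0 :=
        (Nat.Prime.factorization_pos_of_dvd hp hm0 (Nat.minFac_dvd m)).ne'
      exact Nat.one_lt_pow hfac hp.one_lt
    have hb0 : b ≠ 0 := by
      intro h
      rw [h, mul_zero] at hab
      exact hm0 hab.symm
    obtain ⟨s, t, hst⟩ := Nat.isCoprime_iff_coprime.mpr hco
    set u := x ^ (t * (b : ℤ)) with hu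
    set v := x ^ (s * (a : ℤ)) with hv
    have hxvu : v * u = x := by
      rw [hv, hu, ← zpow_add, hst, zpow_one]
    have hua : u ^ a = 1 := by
      have h1 : t * (b : ℤ) * (a : ℕ) = (m : ℤ) * t := by
        push_cast [← hab]; ring
      rw [hu, ← zpow_natCast _ a, ← zpow_mul, h1, zpow_mul, zpow_natCast, hm,
        pow_orderOf_eq_one, one_zpow]
    have hvb : v ^ b = 1 := by
      have h1 : s * (a : ℤ) * (b : ℕ) = (m : ℤ) * s := by
        push_cast [← hab]; ring
      rw [hv, ← zpow_natCast _ b, ← zpow_mul, h1, zpow_mul, zpow_natCast, hm,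
        pow_orderOf_eq_one, one_zpow]
    by_cases huM : u ∈ M
    · have hvM : v ∉ M := fun h => hxM (hxvu ▸ M.mul_mem h huM)
      have hvlt : orderOf v < n := by
        have h1 : orderOf v ∣ b := orderOf_dvd_of_pow_eq_one hvb
        have h2 : orderOf v ≤ b := Nat.le_of_dvd (Nat.pos_of_ne_zero hb0) h1
        have h3 : b < m := by
          calc b = 1 * b := (one_mul b).symm
          _ < a * b := Nat.mul_lt_mul_of_lt_of_le ha1 le_rfl (Nat.pos_of_ne_zero hb0)
          _ = m := hab
        omega
      obtain ⟨y, p', k, h1, h2, h3, h4⟩ := ih v hvlt hvM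
      exact ⟨y, p', k, h1, h2,
        zpowers_le.mpr (mem_zpowers_iff.mpr ⟨s * a, rfl⟩) h3, h4⟩
    · have h1 : orderOf u ∣ a := orderOf_dvd_of_pow_eq_one hua
      obtain ⟨j, _, hju⟩ := (Nat.dvd_prime_pow hp).mp (hadef ▸ h1)
      exact ⟨u, p, j, hp, hju, mem_zpowers_iff.mpr ⟨t * b, rfl⟩, huM⟩

lemma aux_ppow_commute
    (hnorm : ∀ (p : ℕ) (_ : Fact p.Prime) (P : Sylow p G), (↑P : Subgroup G).Normal)
    {p r : ℕ} (hp : p.Prime) (hr : r.Prime) (hpr : p ≠ r) {u v : G}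
    {a b : ℕ} (hu : orderOf u = p ^ a) (hv : orderOf v = r ^ b) : Commute u v := by
  haveI := Fact.mk hp; haveI := Fact.mk hr
  have hPu : IsPGroup p (zpowers u) := IsPGroup.of_card (by rw [Nat.card_zpowers, hu])
  have hPv : IsPGroup r (zpowers v) := IsPGroup.of_card (by rw [Nat.card_zpowers, hv])
  obtain ⟨P, hP⟩ := hPu.exists_le_sylow
  obtain ⟨Q, hQ⟩ := hPv.exists_le_sylow
  exact Subgroup.commute_of_normal_of_disjoint _ _ (hnorm p (Fact.mk hp) P)
    (hnorm r (Fact.mk hr) Q)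
    (IsPGroup.disjoint_of_ne p r hpr _ _ P.isPGroup' Q.isPGroup')
    u v (hP (mem_zpowers u)) (hQ (mem_zpowers v))

lemma aux_reach_ne
    (hnorm : ∀ (p : ℕ) (_ : Fact p.Prime) (P : Sylow p G), (↑P : Subgroup G).Normal)
    (M : Subgroup G) {p r a b : ℕ} (hp : p.Prime) (hr : r.Prime) (hpr : p ≠ r)
    {u v : G} (hu : orderOf u = p ^ a) (hv : orderOf v = r ^ b)
    (huM : u ∉ M) (hvM : v ∉ M) :
    ((powerGraph G).induce ((M : Set G)ᶜ)).Reachable ⟨u, huM⟩ ⟨v, hvM⟩ := by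
  have hcomm := aux_ppow_commute hnorm hp hr hpr hu hv
  have hco : Nat.Coprime (orderOf u) (orderOf v) := by
    rw [hu, hv]; exact Nat.Coprime.pow a b ((Nat.coprime_primes hp hr).mpr hpr)
  have hu1 : u ≠ 1 := fun h => huM (h ▸ M.one_mem)
  have hv1 : v ≠ 1 := fun h => hvM (h ▸ M.one_mem)
  have hmem_u : u ∈ zpowers (u * v) := aux_mem_zpowers_mul_s14 hcomm hco
  have hmem_v : v ∈ zpowers (u * v) := by
    have h := aux_mem_zpowers_mul_s14 hcomm.symm hco.symm
    rwa [← hcomm.eq] at h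
  have hwM : u * v ∉ M := fun h => huM (zpowers_le.mpr h hmem_u)
  have adj1 : (powerGraph G).Adj u (u * v) :=
    ⟨fun h => hv1 (left_eq_mul.mp h), Or.inl hmem_u⟩
  have adj2 : (powerGraph G).Adj (u * v) v :=
    ⟨fun h => hu1 (mul_eq_right.mp h), Or.inr hmem_v⟩
  have A1 : ((powerGraph G).induce ((M : Set G)ᶜ)).Adj ⟨u, huM⟩ ⟨u * v, hwM⟩ := adj1
  have A2 : ((powerGraph G).induce ((M : Set G)ᶜ)).Adj ⟨u * v, hwM⟩ ⟨v, hvM⟩ := adj2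
  exact A1.reachable.trans A2.reachable

end AuxLemmas

/-- Proposition (all-group1): `G` finite nilpotent with at least two non-cyclic Sylow
subgroups; then for every maximal cyclic subgroup `M`, `P(G \ M)` is connected; consequently
`G \ M` and `M \ M̃` are exactly the two connected components of `P(G \ M̃)`. -/
theorem statement_14 {G : Type*} [Group G] [Fintype G] (hnil : Group.IsNilpotent G)
    (q₁ q₂ : ℕ) (hq₁ : q₁.Prime) (hq₂ : q₂.Prime) (hne : q₁ ≠ q₂)
    (P₁ : Sylow q₁ G) (P₂ : Sylow q₂ G)
    (hP₁ : ¬ IsCyclic ↥((P₁ : Subgroup G))) (hP₂ : ¬ IsCyclic ↥((P₂ : Subgroup G))) :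
    ∀ M : Subgroup G, IsMaxCyclic M →
      ((powerGraph G).induce ((M : Set G)ᶜ)).Connected ∧
      IsSeparationOn ((nonGens M)ᶜ) ((M : Set G)ᶜ) ((M : Set G) \ nonGens M) ∧
      ((powerGraph G).induce ((M : Set G) \ nonGens M)).Connected := by
  haveI := Fact.mk hq₁; haveI := Fact.mk hq₂
  intro M hM
  obtain ⟨⟨g, hMg⟩, hmax⟩ := hM
  have hnorm : ∀ (p : ℕ) (_ : Fact p.Prime) (P : Sylow p G), (↑P : Subgroup G).Normal :=
    (isNilpotent_of_finite_tfae.out 0 3).mp hnil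
  -- M is cyclic as a group
  haveI hMcyc : IsCyclic ↥M := by
    refine ⟨⟨⟨g, hMg ▸ mem_zpowers g⟩, ?_⟩⟩
    rintro ⟨x, hx⟩
    obtain ⟨k, hk⟩ := mem_zpowers_iff.mp (show x ∈ zpowers g from hMg ▸ hx)
    exact mem_zpowers_iff.mpr ⟨k, Subtype.ext (by simpa using hk)⟩
  -- non-cyclic Sylow subgroups have elements outside M
  have hw : ∀ (q : ℕ) (hq : Fact q.Prime) (P : Sylow q G), ¬ IsCyclic ↥(P : Subgroup G) →
      ∃ w, w ∈ (P : Subgroup G) ∧ w ∉ M := by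
    intro q hq P hPc
    by_contra h
    push_neg at h
    have hle : (P : Subgroup G) ≤ M := fun w hw => h w hw
    exact hPc (isCyclic_of_surjective (Subgroup.subgroupOfEquivOfLe hle)
      (Subgroup.subgroupOfEquivOfLe hle).surjective)
  obtain ⟨w₁, hw₁P, hw₁M⟩ := hw q₁ (Fact.mk hq₁) P₁ hP₁
  obtain ⟨w₂, hw₂P, hw₂M⟩ := hw q₂ (Fact.mk hq₂) P₂ hP₂
  -- their orders are prime powers
  have horder : ∀ (q : ℕ) (hq : Fact q.Prime) (P : Sylow q G) (w : G), w ∈ (P : Subgroup G) →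
      ∃ c, orderOf w = q ^ c := by
    intro q hq P w hwP
    obtain ⟨k, hk⟩ := P.isPGroup' ⟨w, hwP⟩
    have hk' : w ^ (q ^ k) = 1 := by
      have := congrArg (Subtype.val : ↥(P : Subgroup G) → G) hk
      simpa using this
    obtain ⟨c, _, hc⟩ := (Nat.dvd_prime_pow hq.out).mp (orderOf_dvd_of_pow_eq_one hk')
    exact ⟨c, hc⟩
  obtain ⟨c₁, hw₁o⟩ := horder q₁ (Fact.mk hq₁) P₁ w₁ hw₁P
  obtain ⟨c₂, hw₂o⟩ := horder q₂ (Fact.mk hq₂) P₂ w₂ hw₂P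
  -- every vertex of P(G \ M) is reachable from w₁
  have hreach : ∀ (x : G) (hx : x ∉ M),
      ((powerGraph G).induce ((M : Set G)ᶜ)).Reachable ⟨x, hx⟩ ⟨w₁, hw₁M⟩ := by
    intro x hx
    obtain ⟨y, p, k, hp, hyo, hyz, hyM⟩ :=
      aux_exists_ppow M (orderOf x + 1) x (Nat.lt_succ_self _) hx
    have step1 : ((powerGraph G).induce ((M : Set G)ᶜ)).Reachable ⟨x, hx⟩ ⟨y, hyM⟩ := by
      by_cases hxy : x = y
      · cases hxy
        exact SimpleGraph.Reachable.refl _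
      · have adj : (powerGraph G).Adj x y := ⟨hxy, Or.inr hyz⟩
        exact SimpleGraph.Adj.reachable
          (show ((powerGraph G).induce ((M : Set G)ᶜ)).Adj ⟨x, hx⟩ ⟨y, hyM⟩ from adj)
    have step2 : ((powerGraph G).induce ((M : Set G)ᶜ)).Reachable ⟨y, hyM⟩ ⟨w₁, hw₁M⟩ := by
      by_cases hpq : p = q₁
      · have r1 := aux_reach_ne hnorm M hp hq₂ (fun h => hne (hpq ▸ h)) hyo hw₂o hyM hw₂M
        have r2 := aux_reach_ne hnorm M hq₂ hq₁ hne.symm hw₂o hw₁o hw₂M hw₁M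
        exact r1.trans r2
      · exact aux_reach_ne hnorm M hp hq₁ hpq hyo hw₁o hyM hw₁M
    exact step1.trans step2
  have conn1 : ((powerGraph G).induce ((M : Set G)ᶜ)).Connected := by
    haveI : Nonempty ↥((M : Set G)ᶜ) := ⟨⟨w₁, hw₁M⟩⟩
    refine ⟨fun a b => ?_⟩
    obtain ⟨x, hx⟩ := a
    obtain ⟨z, hz⟩ := b
    exact (hreach x hx).trans (hreach z hz).symm
  -- g is a generator of M
  have hgM : g ∈ (M : Set G) := hMg ▸ mem_zpowers g
  have hgGen : g ∈ (M : Set G) \ nonGens M := ⟨hgM, fun hg => hg.2 hMg.symm⟩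
  haveI : Nonempty ↥((M : Set G) \ nonGens M) := ⟨⟨g, hgGen⟩⟩
  refine ⟨conn1, ⟨⟨w₁, hw₁M⟩, ⟨g, hgGen⟩, ?_, ?_, ?_⟩, ⟨?_⟩⟩
  · exact Set.disjoint_left.mpr fun a ha hb => ha hb.1
  · ext x
    simp only [Set.mem_union, Set.mem_compl_iff, Set.mem_diff, nonGens,
      Set.mem_setOf_eq, SetLike.mem_coe]
    tauto
  · -- no edges between M-complement and generators of M
    intro a ha b hb hadj
    have hbM : b ∈ M := hb.1
    have hbgen : zpowers b = M := by
      by_contra h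
      exact hb.2 ⟨hbM, h⟩
    obtain ⟨hab, hor⟩ := hadj
    rcases hor with h | h
    · exact ha (hbgen ▸ h)
    · have hle : M ≤ zpowers a := by
        rw [← hbgen]
        exact zpowers_le.mpr h
      have heq : M = zpowers a := hmax (zpowers a) ⟨a, rfl⟩ hle
      exact ha (show a ∈ (M : Set G) by rw [heq]; exact mem_zpowers a)
  · -- the generators of M form a connected (complete) subgraph
    rintro ⟨x, hx⟩ ⟨y, hy⟩
    have hxgen : zpowers x = M := by
      by_contra h; exact hx.2 ⟨hx.1, h⟩
    have hygen : zpowers y = M := by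
      by_contra h; exact hy.2 ⟨hy.1, h⟩
    by_cases hxy : x = y
    · cases hxy
      exact SimpleGraph.Reachable.refl _
    · have adj : (powerGraph G).Adj x y :=
        ⟨hxy, Or.inl (by rw [hygen]; exact hx.1)⟩
      exact SimpleGraph.Adj.reachable
        (show ((powerGraph G).induce ((M : Set G) \ nonGens M)).Adj ⟨x, hx⟩ ⟨y, hy⟩ from adj)
end

section
/- Let G be a finite nilpotent group having at least two non-cyclic Sylow subgroups. Then for every maximal cyclic subgroup M of G, the set M̄ (the union of the sets M ∩ ⟨y⟩ over all y ∈ G \ M) is a minimal cut-set of the power graph P(G). -/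
section Aux

variable {G : Type*} [Group G]

lemma isCyclic_zpowers (m : G) : IsCyclic ↥(Subgroup.zpowers m) := by
  refine ⟨⟨⟨m, Subgroup.mem_zpowers m⟩, fun x => ?_⟩⟩
  obtain ⟨k, hk⟩ := Subgroup.mem_zpowers_iff.mp x.2
  exact Subgroup.mem_zpowers_iff.mpr ⟨k, by ext; simp [hk]⟩

lemma mem_zpowers_mul_left [Fintype G] {a b : G} (h : Commute a b)
    (hco : (orderOf a).Coprime (orderOf b)) : a ∈ Subgroup.zpowers (a * b) := by
  obtain ⟨k, hk1, hk2⟩ := Nat.chineseRemainder hco 1 0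
  have hb : b ^ k = 1 := orderOf_dvd_iff_pow_eq_one.mp (Nat.modEq_zero_iff_dvd.mp hk2)
  have ha : a ^ k = a := by
    have h' : a ^ k = a ^ 1 := pow_eq_pow_iff_modEq.mpr hk1
    simpa using h'
  have hkey : (a * b) ^ k = a := by rw [h.mul_pow, ha, hb, mul_one]
  exact Subgroup.mem_zpowers_iff.mpr ⟨(k : ℤ), by rw [zpow_natCast, hkey]⟩

lemma mem_zpowers_mul_right [Fintype G] {a b : G} (h : Commute a b)
    (hco : (orderOf a).Coprime (orderOf b)) : b ∈ Subgroup.zpowers (a * b) := by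
  have := mem_zpowers_mul_left h.symm hco.symm
  rwa [← h.eq] at this

/-- coprime splitting of an element whose order is not a prime power -/
lemma exists_split [Fintype G] {n : G} (h1 : n ≠ 1) (h2 : ¬ IsPrimePow (orderOf n)) :
    ∃ x y : G, x ∈ Subgroup.zpowers n ∧ y ∈ Subgroup.zpowers n ∧ x * y = n ∧
      orderOf x < orderOf n ∧ orderOf y < orderOf n := by
  set N := orderOf n with hN
  have hN0 : N ≠ 0 := (orderOf_pos n).ne'
  have hN1 : 1 < N := by
    rcases Nat.lt_or_ge N 2 with h | h
    · interval_cases N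
      · exact absurd rfl hN0
      · exact absurd (orderOf_eq_one_iff.mp hN.symm) h1
    · omega
  set p := N.minFac with hp
  have hpp : p.Prime := Nat.minFac_prime (by omega)
  set a := p ^ N.factorization p with hadef
  set b := N / a with hbdef
  have hab : a * b = N := Nat.ordProj_mul_ordCompl_eq_self N p
  have hco : a.Coprime b := Nat.Coprime.pow_left _ (Nat.coprime_ordCompl hpp hN0)
  have ha1 : 1 < a := by
    have : 0 < N.factorization p :=
      Nat.Prime.factorization_pos_of_dvd hpp hN0 (Nat.minFac_dvd N)
    exact Nat.one_lt_pow this.ne' hpp.one_lt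
  have hb1 : 1 < b := by
    rcases Nat.lt_or_ge b 2 with h | h
    · interval_cases b
      · omega
      · exfalso
        apply h2
        have : N = a := by omega
        rw [← hN] at *
        exact ⟨p, N.factorization p, hpp.prime, by
          have : 0 < N.factorization p :=
            Nat.Prime.factorization_pos_of_dvd hpp hN0 (Nat.minFac_dvd N)
          exact this, by omega⟩
    · omega
  obtain ⟨c₁, hc₁a, hc₁b⟩ := Nat.chineseRemainder hco 1 0
  obtain ⟨c₂, hc₂a, hc₂b⟩ := Nat.chineseRemainder hco 0 1
  refine ⟨n ^ c₁, n ^ c₂, Subgroup.npow_mem_zpowers n c₁, Subgroup.npow_mem_zpowers n c₂, ?_, ?_, ?_⟩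
  · have hmod : c₁ + c₂ ≡ 1 [MOD N] := by
      rw [← hab]
      exact (Nat.modEq_and_modEq_iff_modEq_mul hco).mp
        ⟨by simpa using hc₁a.add hc₂a, by simpa using hc₁b.add hc₂b⟩
    have h' : n ^ (c₁ + c₂) = n ^ 1 := pow_eq_pow_iff_modEq.mpr hmod
    rw [pow_add] at h'
    simpa using h'
  · have hx : (n ^ c₁) ^ a = 1 := by
      rw [← pow_mul]
      apply orderOf_dvd_iff_pow_eq_one.mp
      obtain ⟨t, ht⟩ := Nat.modEq_zero_iff_dvd.mp hc₁b
      show N ∣ c₁ * a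
      rw [ht, ← hab]
      exact ⟨t, by ring⟩
    have : orderOf (n ^ c₁) ∣ a := orderOf_dvd_of_pow_eq_one hx
    calc orderOf (n ^ c₁) ≤ a := Nat.le_of_dvd (by omega) this
      _ < a * b := by nlinarith
      _ = N := hab
  · have hy : (n ^ c₂) ^ b = 1 := by
      rw [← pow_mul]
      apply orderOf_dvd_iff_pow_eq_one.mp
      obtain ⟨t, ht⟩ := Nat.modEq_zero_iff_dvd.mp hc₂a
      show N ∣ c₂ * b
      rw [ht, ← hab]
      exact ⟨t, by ring⟩
    have : orderOf (n ^ c₂) ∣ b := orderOf_dvd_of_pow_eq_one hy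
    calc orderOf (n ^ c₂) ≤ b := Nat.le_of_dvd (by omega) this
      _ < a * b := by nlinarith
      _ = N := hab

end Aux

section Aux2

variable {G : Type*} [Group G]

/-- From any element outside a subgroup, extract a prime-power-order element
outside the subgroup lying in its cyclic span. -/
lemma exists_primePow_escape [Fintype G] (M : Subgroup G) :
    ∀ n : G, n ∉ M → ∃ γ : G, γ ∈ Subgroup.zpowers n ∧ γ ∉ M ∧ IsPrimePow (orderOf γ) := by
  suffices H : ∀ N : ℕ, ∀ n : G, orderOf n = N → n ∉ M →
      ∃ γ : G, γ ∈ Subgroup.zpowers n ∧ γ ∉ M ∧ IsPrimePow (orderOf γ) by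
    exact fun n hn => H (orderOf n) n rfl hn
  intro N
  induction N using Nat.strong_induction_on with
  | _ N ih =>
    intro n hN hnM
    have h1 : n ≠ 1 := fun h => hnM (h ▸ M.one_mem)
    by_cases hpp : IsPrimePow (orderOf n)
    · exact ⟨n, Subgroup.mem_zpowers n, hnM, hpp⟩
    · obtain ⟨x, y, hx, hy, hxy, hxlt, hylt⟩ := exists_split h1 hpp
      have hxyM : x ∉ M ∨ y ∉ M := by
        by_contra h
        push_neg at h
        exact hnM (hxy ▸ M.mul_mem h.1 h.2)
      rcases hxyM with h | h
      · obtain ⟨γ, hγ1, hγ2, hγ3⟩ := ih (orderOf x) (hN ▸ hxlt) x rfl h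
        exact ⟨γ, Subgroup.zpowers_le.mpr hx hγ1, hγ2, hγ3⟩
      · obtain ⟨γ, hγ1, hγ2, hγ3⟩ := ih (orderOf y) (hN ▸ hylt) y rfl h
        exact ⟨γ, Subgroup.zpowers_le.mpr hy hγ1, hγ2, hγ3⟩

/-- In a finite nilpotent group, elements of coprime prime-power orders commute. -/
lemma commute_of_primePow_orders [Fintype G] (hnil : Group.IsNilpotent G)
    {p q : ℕ} (hp : p.Prime) (hq : q.Prime) (hpq : p ≠ q) {a b : G}
    (ha : ∃ k, orderOf a = p ^ k) (hb : ∃ k, orderOf b = q ^ k) : Commute a b := by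
  haveI := Fact.mk hp
  haveI := Fact.mk hq
  obtain ⟨ka, hka⟩ := ha
  obtain ⟨kb, hkb⟩ := hb
  have hpga : IsPGroup p (Subgroup.zpowers a) :=
    IsPGroup.of_card (n := ka) (by rw [Nat.card_zpowers, hka])
  have hpgb : IsPGroup q (Subgroup.zpowers b) :=
    IsPGroup.of_card (n := kb) (by rw [Nat.card_zpowers, hkb])
  obtain ⟨Q, hQ⟩ := hpga.exists_le_sylow
  obtain ⟨R, hR⟩ := hpgb.exists_le_sylow
  have hnorm : ∀ (r : ℕ) (_ : Fact r.Prime) (P : Sylow r G), (↑P : Subgroup G).Normal :=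
    ((isNilpotent_of_finite_tfae (G := G)).out 0 3).mp hnil
  exact Subgroup.commute_of_normal_of_disjoint Q R (hnorm p ‹_› Q) (hnorm q ‹_› R)
    (IsPGroup.disjoint_of_ne p q hpq _ _ Q.isPGroup' R.isPGroup')
    a b (hQ (Subgroup.mem_zpowers a)) (hR (Subgroup.mem_zpowers b))

/-- Elements of a Sylow `p`-subgroup have `p`-power order. -/
lemma orderOf_eq_pow_of_mem_sylow {p : ℕ} (hp : p.Prime) {P : Sylow p G} {a : G}
    (ha : a ∈ (P : Subgroup G)) : ∃ k, orderOf a = p ^ k := by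
  haveI := Fact.mk hp
  obtain ⟨k, hk⟩ := IsPGroup.iff_orderOf.mp P.isPGroup' ⟨a, ha⟩
  exact ⟨k, by rw [← hk]; exact orderOf_injective (P : Subgroup G).subtype Subtype.coe_injective ⟨a, ha⟩⟩

end Aux2

section Graph

variable {G : Type*} [Group G]

lemma reach_of_mem_zpowers {S : Set G} {a b : G} (ha : a ∈ S) (hb : b ∈ S)
    (h : a ∈ Subgroup.zpowers b) :
    ((powerGraph G).induce S).Reachable ⟨a, ha⟩ ⟨b, hb⟩ := by
  by_cases hab : a = b
  · subst hab
    rfl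
  · exact SimpleGraph.Adj.reachable (by
      show (powerGraph G).Adj a b
      exact ⟨hab, Or.inl h⟩)

lemma not_preconnected_of_separation {A B : Set G} (hA : A.Nonempty) (hB : B.Nonempty)
    (hd : Disjoint A B) (hne : ∀ a ∈ A, ∀ b ∈ B, ¬ (powerGraph G).Adj a b) :
    ¬ ((powerGraph G).induce (A ∪ B)).Preconnected := by
  intro h
  obtain ⟨a, ha⟩ := hA
  obtain ⟨b, hb⟩ := hB
  obtain ⟨w⟩ := h ⟨a, Or.inl ha⟩ ⟨b, Or.inr hb⟩
  have key : ∀ (u v : ↥(A ∪ B)), ((powerGraph G).induce (A ∪ B)).Walk u v →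
      (u : G) ∈ A → (v : G) ∈ A := by
    intro u v w
    induction w with
    | nil => exact fun h => h
    | cons hadj p ih =>
      intro hu
      rename_i c d e
      have hadj' : (powerGraph G).Adj (c : G) (d : G) := hadj
      have hd2 : (d : G) ∈ A ∪ B := d.2
      rcases hd2 with h' | h'
      · exact ih h'
      · exact absurd hadj' (hne _ hu _ h')
  exact Set.disjoint_left.mp hd (key _ _ w ha) hb

end Graph

/-- Proposition (M-bar-min): `G` finite nilpotent with at least two non-cyclic Sylow
subgroups; then `M̄` is a minimal cut-set of the power graph `P(G)` for every maximal cyclic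
subgroup `M` of `G`. -/
theorem statement_15 {G : Type*} [Group G] [Fintype G] (hnil : Group.IsNilpotent G)
    (q₁ q₂ : ℕ) (hq₁ : q₁.Prime) (hq₂ : q₂.Prime) (hne : q₁ ≠ q₂)
    (P₁ : Sylow q₁ G) (P₂ : Sylow q₂ G)
    (hP₁ : ¬ IsCyclic ↥((P₁ : Subgroup G))) (hP₂ : ¬ IsCyclic ↥((P₂ : Subgroup G))) :
    ∀ M : Subgroup G, IsMaxCyclic M → IsMinimalCutSet (Mbar M) := by
  intro M hM
  obtain ⟨⟨m, hMm⟩, hmax⟩ := hM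
  haveI := Fact.mk hq₁
  haveI := Fact.mk hq₂
  have hm_mem : m ∈ M := by rw [hMm]; exact Subgroup.mem_zpowers m
  have memMbar : ∀ x : G, x ∈ Mbar M ↔ ∃ y, y ∉ M ∧ x ∈ M ∧ x ∈ Subgroup.zpowers y := by
    intro x
    simp only [Mbar, Set.mem_iUnion, Set.mem_inter_iff, Set.mem_compl_iff, SetLike.mem_coe,
      exists_prop]
    try tauto
  have hMbar_sub : Mbar M ⊆ (M : Set G) := by
    intro x hx
    obtain ⟨y, _, hxM, _⟩ := (memMbar x).mp hx
    exact hxM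
  have hmgen : m ∉ Mbar M := by
    intro h
    obtain ⟨y, hyM, -, hmy⟩ := (memMbar m).mp h
    have hle : M ≤ Subgroup.zpowers y := by rw [hMm]; exact Subgroup.zpowers_le.mpr hmy
    have heq := hmax (Subgroup.zpowers y) ⟨y, rfl⟩ hle
    exact hyM (by rw [heq]; exact Subgroup.mem_zpowers y)
  haveI hMcyc : IsCyclic ↥M := by rw [hMm]; exact isCyclic_zpowers m
  have hexP : ∀ (q : ℕ) (_ : q.Prime) (P : Sylow q G), ¬ IsCyclic ↥(P : Subgroup G) →
      ∃ α, α ∈ (P : Subgroup G) ∧ α ∉ M := by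
    intro q hq P hP
    by_contra h
    push_neg at h
    exact hP (Subgroup.isCyclic_of_le (fun u hu => h u hu))
  obtain ⟨α, hαP, hαM⟩ := hexP q₁ hq₁ P₁ hP₁
  obtain ⟨β, hβP, hβM⟩ := hexP q₂ hq₂ P₂ hP₂
  obtain ⟨kα, hkα⟩ := orderOf_eq_pow_of_mem_sylow hq₁ hαP
  obtain ⟨kβ, hkβ⟩ := orderOf_eq_pow_of_mem_sylow hq₂ hβP
  have hcomm : Commute α β := commute_of_primePow_orders hnil hq₁ hq₂ hne ⟨kα, hkα⟩ ⟨kβ, hkβ⟩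
  have hcop : (orderOf α).Coprime (orderOf β) := by
    rw [hkα, hkβ]
    exact ((Nat.coprime_primes hq₁ hq₂).mpr hne).pow _ _
  set z₀ := α * β with hz₀def
  have hαz : α ∈ Subgroup.zpowers z₀ := mem_zpowers_mul_left hcomm hcop
  have hβz : β ∈ Subgroup.zpowers z₀ := mem_zpowers_mul_right hcomm hcop
  have hz₀M : z₀ ∉ M := fun h => hαM (Subgroup.zpowers_le.mpr h hαz)
  have reach_z₀ : ∀ (S : Set G) (hS : (M : Set G)ᶜ ⊆ S) (u : G) (hu : u ∉ M),
      ((powerGraph G).induce S).Reachable ⟨u, hS hu⟩ ⟨z₀, hS hz₀M⟩ := by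
    intro S hS u hu
    obtain ⟨γ, hγu, hγM, hγpp⟩ := exists_primePow_escape M u hu
    obtain ⟨p, k, hp, hk, hpk⟩ := (isPrimePow_nat_iff _).mp hγpp
    have hγord : ∃ j, orderOf γ = p ^ j := ⟨k, hpk.symm⟩
    obtain ⟨δ, q, hq, hpq, hδM, hδz, hδord⟩ :
        ∃ (δ : G) (q : ℕ), q.Prime ∧ p ≠ q ∧ δ ∉ M ∧ δ ∈ Subgroup.zpowers z₀ ∧
          ∃ j, orderOf δ = q ^ j := by
      by_cases hpq1 : p = q₁
      · exact ⟨β, q₂, hq₂, hpq1 ▸ hne, hβM, hβz, ⟨kβ, hkβ⟩⟩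
      · exact ⟨α, q₁, hq₁, hpq1, hαM, hαz, ⟨kα, hkα⟩⟩
    have hcomm2 : Commute γ δ := commute_of_primePow_orders hnil hp hq hpq hγord hδord
    have hcop2 : (orderOf γ).Coprime (orderOf δ) := by
      obtain ⟨j1, e1⟩ := hγord
      obtain ⟨j2, e2⟩ := hδord
      rw [e1, e2]
      exact ((Nat.coprime_primes hp hq).mpr hpq).pow _ _
    have hγz : γ ∈ Subgroup.zpowers (γ * δ) := mem_zpowers_mul_left hcomm2 hcop2
    have hδz2 : δ ∈ Subgroup.zpowers (γ * δ) := mem_zpowers_mul_right hcomm2 hcop2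
    have hγδM : γ * δ ∉ M := fun h => hδM (Subgroup.zpowers_le.mpr h hδz2)
    have r1 := (reach_of_mem_zpowers (hS hγM) (hS hu) hγu).symm
    have r2 := reach_of_mem_zpowers (hS hγM) (hS hγδM) hγz
    have r3 := (reach_of_mem_zpowers (hS hδM) (hS hγδM) hδz2).symm
    have r4 := reach_of_mem_zpowers (hS hδM) (hS hz₀M) hδz
    exact ((r1.trans r2).trans r3).trans r4
  constructor
  · -- `Mbar M` is a cut-set
    have hunion : ((M : Set G) \ Mbar M) ∪ (M : Set G)ᶜ = (Mbar M)ᶜ := by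
      ext v
      constructor
      · rintro (⟨hvM, hvb⟩ | hv)
        · exact hvb
        · exact fun h => hv (hMbar_sub h)
      · intro hv
        by_cases hvM : v ∈ (M : Set G)
        · exact Or.inl ⟨hvM, hv⟩
        · exact Or.inr hvM
    show ¬ ((powerGraph G).induce (Mbar M)ᶜ).Preconnected
    rw [← hunion]
    apply not_preconnected_of_separation
    · exact ⟨m, hm_mem, hmgen⟩
    · exact ⟨α, hαM⟩
    · rw [Set.disjoint_left]
      rintro a ⟨haM, -⟩ ha
      exact ha haM
    · rintro a ⟨haM, haB⟩ b hbM ⟨hab, h | h⟩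
      · exact haB ((memMbar a).mpr ⟨b, hbM, haM, h⟩)
      · exact hbM (Subgroup.zpowers_le.mpr haM h)
  · -- minimality
    intro x hx hcut
    apply hcut
    obtain ⟨y, hyM, hxM, hxy⟩ := (memMbar x).mp hx
    set S : Set G := (Mbar M \ {x})ᶜ with hSdef
    have hS : (M : Set G)ᶜ ⊆ S := fun u hu hmem => hu (hMbar_sub hmem.1)
    have hxS : x ∈ S := fun hmem => hmem.2 rfl
    have hmS : m ∈ S := fun hmem => hmgen hmem.1
    have reach_x : ∀ v : ↥S, ((powerGraph G).induce S).Reachable v ⟨x, hxS⟩ := by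
      rintro ⟨v, hv⟩
      by_cases hvM : v ∈ M
      · have hvm : v ∈ Subgroup.zpowers m := by rw [← hMm]; exact hvM
        have hxm : x ∈ Subgroup.zpowers m := by rw [← hMm]; exact hxM
        exact (reach_of_mem_zpowers hv hmS hvm).trans (reach_of_mem_zpowers hxS hmS hxm).symm
      · have r1 := reach_z₀ S hS v hvM
        have r2 := reach_z₀ S hS y hyM
        have r3 := reach_of_mem_zpowers hxS (hS hyM) hxy
        exact (r1.trans r2.symm).trans r3.symm
    intro u v
    exact (reach_x u).trans (reach_x v).symm
end
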